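/- arXiv:2312.08691 — 2 statements merged into one kernel-verified Lean document; each statement's English description precedes it below -/
import Mathlib

section
/- Let A = (a_{ij}) be an n×n real matrix such that D(A) belongs to the class 𝒟, D(A) is strongly connected, and Δ_A ≠ 0. Then the group inverse A^# = (α_{ij}) exists and α_{ij} = μ_{ij}/Δ_A for all i, j. -/
open Matrix

/-- Adjacency in a digraph given by relation `G`: a 2-cycle between distinct `i` and `j`. -/
def Adjd {n : ℕ} (G : Fin n → Fin n → Prop) (i j : Fin n) : Prop :=
  i ≠ j ∧ G i j ∧ G j i

/-- `G` is a simple symmetric digraph: no loops and edges come in both directions. -/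
def IsSSD {n : ℕ} (G : Fin n → Fin n → Prop) : Prop :=
  (∀ i, ¬ G i i) ∧ ∀ i j, G i j → G j i

/-- A vertex is pendant if it is incident to exactly one 2-cycle. -/
def Pendant {n : ℕ} (G : Fin n → Fin n → Prop) (i : Fin n) : Prop :=
  ∃! j, Adjd G i j

/-- The class 𝒟: simple symmetric digraphs in which every non-pendant vertex is
adjacent to at least one pendant vertex. -/
def InClassD {n : ℕ} (G : Fin n → Fin n → Prop) : Prop :=
  IsSSD G ∧ ∀ i, ¬ Pendant G i → ∃ j, Adjd G i j ∧ Pendant G j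

/-- Strong connectivity: a directed path from every vertex to every other vertex. -/
def StronglyConnected {n : ℕ} (G : Fin n → Fin n → Prop) : Prop :=
  ∀ i j : Fin n, Relation.ReflTransGen G i j

/-- An unordered pair `e` is a 2-cycle of `G`. -/
def IsEdge {n : ℕ} (G : Fin n → Fin n → Prop) (e : Sym2 (Fin n)) : Prop :=
  ∃ i j, e = s(i, j) ∧ Adjd G i j

/-- A matching: a set of pairwise vertex-disjoint 2-cycles. -/
def IsMatching {n : ℕ} (G : Fin n → Fin n → Prop) (M : Finset (Sym2 (Fin n))) : Prop :=
  (∀ e ∈ M, IsEdge G e) ∧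
  ∀ e ∈ M, ∀ f ∈ M, e ≠ f → ∀ v : Fin n, v ∈ e → v ∉ f

/-- A maximum matching: a matching of maximum cardinality. -/
def IsMaxMatching {n : ℕ} (G : Fin n → Fin n → Prop) (M : Finset (Sym2 (Fin n))) : Prop :=
  IsMatching G M ∧ ∀ M', IsMatching G M' → M'.card ≤ M.card

/-- A cycle chain, recorded by its list of (distinct) vertices `i₁, …, i_{m+1}`. -/
def IsCycleChain {n : ℕ} (G : Fin n → Fin n → Prop) (c : List (Fin n)) : Prop :=
  c.Nodup ∧ 2 ≤ c.length ∧ c.Chain' (Adjd G)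

/-- A cycle chain from `i` to `j`. -/
def IsCycleChainBtw {n : ℕ} (G : Fin n → Fin n → Prop) (i j : Fin n) (c : List (Fin n)) : Prop :=
  IsCycleChain G c ∧ c.head? = some i ∧ c.getLast? = some j

/-- The list of 2-cycles of a cycle chain. -/
def chainEdges {n : ℕ} (c : List (Fin n)) : List (Sym2 (Fin n)) :=
  List.zipWith (fun a b => s(a, b)) c c.tail

/-- The cycle chain `c` is alternating with respect to `M`: its 2-cycles are alternately
in `M` and outside `M`, with the first and last 2-cycle in `M` (so its length is odd). -/
def IsAltChain {n : ℕ} (M : Finset (Sym2 (Fin n))) (c : List (Fin n)) : Prop :=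
  Odd (chainEdges c).length ∧
  ∀ k (h : k < (chainEdges c).length), ((chainEdges c).get ⟨k, h⟩ ∈ M ↔ Even k)

/-- The digraph of a square matrix: edge `(i,j)` iff `A i j ≠ 0`. -/
def DA {n : ℕ} (A : Matrix (Fin n) (Fin n) ℝ) : Fin n → Fin n → Prop :=
  fun i j => A i j ≠ 0

/-- The cycle product `a_{ij} a_{ji}` of a 2-cycle. -/
def cycProd {n : ℕ} (A : Matrix (Fin n) (Fin n) ℝ) (e : Sym2 (Fin n)) : ℝ :=
  Sym2.lift ⟨fun i j => A i j * A j i, fun i j => mul_comm _ _⟩ e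

/-- The matching product η(M) of a matching `M`. -/
noncomputable def matchProd {n : ℕ} (A : Matrix (Fin n) (Fin n) ℝ)
    (M : Finset (Sym2 (Fin n))) : ℝ :=
  ∏ e ∈ M, cycProd A e

/-- The (finite) collection of all maximum matchings of `D(A)`. -/
noncomputable def maxMatchings {n : ℕ} (A : Matrix (Fin n) (Fin n) ℝ) :
    Finset (Finset (Sym2 (Fin n))) :=
  {M | IsMaxMatching (DA A) M}.toFinite.toFinset

/-- Δ_A: the sum of the matching products over all maximum matchings of `D(A)`. -/
noncomputable def Delta {n : ℕ} (A : Matrix (Fin n) (Fin n) ℝ) : ℝ :=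
  ∑ M ∈ maxMatchings A, matchProd A M

/-- 𝕄(i,j): maximum matchings with respect to which some cycle chain from `i` to `j`
is an alternating cycle chain. -/
def MMset {n : ℕ} (A : Matrix (Fin n) (Fin n) ℝ) (i j : Fin n) :
    Set (Finset (Sym2 (Fin n))) :=
  {M | IsMaxMatching (DA A) M ∧ ∃ c, IsCycleChainBtw (DA A) i j c ∧ IsAltChain M c}

/-- `i` and `j` are maximally matchable: 𝕄(i,j) ≠ ∅. -/
def MaxMatchable {n : ℕ} (A : Matrix (Fin n) (Fin n) ℝ) (i j : Fin n) : Prop :=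
  (MMset A i j).Nonempty

open scoped Classical in
/-- The (unique) alternating cycle chain from `i` to `j`, when it exists. -/
noncomputable def theChain {n : ℕ} (A : Matrix (Fin n) (Fin n) ℝ) (i j : Fin n) :
    List (Fin n) :=
  if h : ∃ c, IsCycleChainBtw (DA A) i j c ∧ ∃ M ∈ MMset A i j, IsAltChain M c
  then h.choose else []

/-- The path product along a cycle chain: `a_{i₁ i₂} a_{i₂ i₃} ⋯ a_{i_m i_{m+1}}`. -/
def pathProd {n : ℕ} (A : Matrix (Fin n) (Fin n) ℝ) (c : List (Fin n)) : ℝ :=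
  (List.zipWith (fun a b => A a b) c c.tail).prod

open scoped Classical in
/-- β_{ij} = (−1)^{(m−1)/2} P_m(i,j) for maximally matchable `i, j`, and `0` otherwise. -/
noncomputable def beta {n : ℕ} (A : Matrix (Fin n) (Fin n) ℝ) (i j : Fin n) : ℝ :=
  if MaxMatchable A i j then
    (-1 : ℝ) ^ (((theChain A i j).length - 2) / 2) * pathProd A (theChain A i j)
  else 0

/-- β̄_{i,j}(M): product of the cycle products of the 2-cycles of `M` not contained in
the alternating cycle chain from `i` to `j`. -/
noncomputable def betaBar {n : ℕ} (A : Matrix (Fin n) (Fin n) ℝ) (i j : Fin n)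
    (M : Finset (Sym2 (Fin n))) : ℝ :=
  ∏ e ∈ M.filter (fun e => e ∉ chainEdges (theChain A i j)), cycProd A e

/-- μ_{ij} = β_{ij} · Σ_{M ∈ 𝕄(i,j)} β̄_{i,j}(M). -/
noncomputable def mu {n : ℕ} (A : Matrix (Fin n) (Fin n) ℝ) (i j : Fin n) : ℝ :=
  beta A i j * ∑ M ∈ (MMset A i j).toFinite.toFinset, betaBar A i j M

/-- `X` is a group inverse of `A`. -/
def IsGroupInverse {n : ℕ} (A X : Matrix (Fin n) (Fin n) ℝ) : Prop :=
  A * X * A = A ∧ X * A * X = X ∧ A * X = X * A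

/-- A tree digraph: strongly connected and all of its cycles have length 2. -/
def IsTreeDigraph {n : ℕ} (G : Fin n → Fin n → Prop) : Prop :=
  StronglyConnected G ∧
  ∀ (a : Fin n) (l : List (Fin n)), (a :: l).Nodup → List.Chain G a l →
    G ((a :: l).getLast (List.cons_ne_nil a l)) a → (a :: l).length = 2

/-- A star tree digraph: a tree digraph with a center adjacent to every other vertex,
every other vertex being adjacent only to the center. -/
def IsStarTree {n : ℕ} (G : Fin n → Fin n → Prop) : Prop :=
  IsTreeDigraph G ∧
  ∃ c : Fin n, (∀ j, j ≠ c → Adjd G c j) ∧ ∀ i j, Adjd G i j → i = c ∨ j = c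

/-- A corona digraph: a simple symmetric digraph in which each non-pendant vertex is
adjacent to exactly one pendant vertex. -/
def IsCorona {n : ℕ} (G : Fin n → Fin n → Prop) : Prop :=
  IsSSD G ∧ ∀ i, ¬ Pendant G i → ∃! j, Adjd G i j ∧ Pendant G j

/-- 𝕄(i): the maximum matchings in which vertex `i` is matched. -/
noncomputable def MMi {n : ℕ} (A : Matrix (Fin n) (Fin n) ℝ) (i : Fin n) :
    Finset (Finset (Sym2 (Fin n))) :=
  {M | IsMaxMatching (DA A) M ∧ ∃ e ∈ M, i ∈ e}.toFinite.toFinset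

/-! ### Development -/

open scoped Classical

namespace ClassDProof

variable {n : ℕ}

/-- Uniqueness of the group inverse. -/
theorem gi_unique (A X Y : Matrix (Fin n) (Fin n) ℝ)
    (hX : IsGroupInverse A X) (hY : IsGroupInverse A Y) : X = Y := by
  obtain ⟨hX1, hX2, hX3⟩ := hX
  obtain ⟨hY1, hY2, hY3⟩ := hY
  have h1 : A * X * (A * Y) = A * Y := by
    rw [← Matrix.mul_assoc, hX1]
  have h2 : A * X * (A * Y) = A * X := by
    rw [hX3, hY3, Matrix.mul_assoc, ← Matrix.mul_assoc A Y A, hY1, ← hX3]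
  have h3 : A * Y = A * X := h1.symm.trans h2
  calc X = X * A * X := hX2.symm
    _ = X * (A * X) := by rw [Matrix.mul_assoc]
    _ = X * (A * Y) := by rw [h3]
    _ = X * A * Y := by rw [Matrix.mul_assoc]
    _ = A * X * Y := by rw [hX3]
    _ = A * Y * Y := by rw [h3]
    _ = Y * A * Y := by rw [hY3]
    _ = Y := hY2

section Basics

variable (A : Matrix (Fin n) (Fin n) ℝ)

lemma adjd_symm {G : Fin n → Fin n → Prop} {i j : Fin n} (h : Adjd G i j) : Adjd G j i :=
  ⟨h.1.symm, h.2.2, h.2.1⟩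

/-- the unique neighbour of a pendant vertex (junk value otherwise) -/
noncomputable def sp (p : Fin n) : Fin n :=
  if h : Pendant (DA A) p then h.choose else p

variable {A}

lemma sp_adj {p : Fin n} (hp : Pendant (DA A) p) : Adjd (DA A) p (sp A p) := by
  rw [sp, dif_pos hp]; exact hp.choose_spec.1

lemma sp_eq {p k : Fin n} (hp : Pendant (DA A) p) (h : Adjd (DA A) p k) : k = sp A p := by
  rw [sp, dif_pos hp]; exact hp.choose_spec.2 k h

variable (hD : InClassD (DA A))
include hD

lemma hsym {i j : Fin n} (h : A i j ≠ 0) : A j i ≠ 0 := hD.1.2 i j h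

lemma hdiag (i : Fin n) : A i i = 0 := not_not.mp (hD.1.1 i)

lemma adj_of_ne {i j : Fin n} (hij : i ≠ j) (h : A i j ≠ 0) : Adjd (DA A) i j :=
  ⟨hij, h, hsym hD h⟩

lemma adj_of_mem {i j : Fin n} (h : A i j ≠ 0) : Adjd (DA A) i j := by
  refine adj_of_ne hD (fun e => ?_) h
  subst e; exact h (hdiag hD i)

lemma pend_zero {p k : Fin n} (hp : Pendant (DA A) p) (hk : k ≠ sp A p) : A p k = 0 := by
  by_contra h
  exact hk (sp_eq hp (adj_of_mem hD h))

lemma pend_zero' {p k : Fin n} (hp : Pendant (DA A) p) (hk : k ≠ sp A p) : A k p = 0 := by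
  by_contra h
  exact hk (sp_eq hp (adjd_symm (adj_of_mem hD h)))

lemma sp_sp {p : Fin n} (hp : Pendant (DA A) p) (hsp : Pendant (DA A) (sp A p)) :
    sp A (sp A p) = p :=
  (sp_eq hsp (adjd_symm (sp_adj hp))).symm

variable (hSC : StronglyConnected (DA A)) (hn : 3 ≤ n)
include hSC hn

/-- for `n ≥ 3`, the support of a pendant vertex is not pendant -/
lemma sp_not_pendant {p : Fin n} (hp : Pendant (DA A) p) : ¬ Pendant (DA A) (sp A p) := by
  intro hsp
  -- every vertex reachable from p lies in {p, sp p}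
  have reach : ∀ k, Relation.ReflTransGen (DA A) p k → k = p ∨ k = sp A p := by
    intro k hk
    induction hk with
    | refl => exact Or.inl rfl
    | tail hbc hcd ih =>
      rename_i b c
      rcases ih with h | h
      · subst h
        exact Or.inr (sp_eq hp (adj_of_mem hD hcd))
      · subst h
        left
        rw [← sp_sp hD hp hsp]
        exact (sp_eq hsp (adj_of_mem hD hcd)) ▸ rfl
  -- but there is a third vertex
  have : ∃ k : Fin n, k ≠ p ∧ k ≠ sp A p := by
    by_contra hcon
    push_neg at hcon
    have : (Finset.univ : Finset (Fin n)).card ≤ ({p, sp A p} : Finset (Fin n)).card := by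
      apply Finset.card_le_card
      intro x _
      rcases Classical.em (x = p) with h | h
      · simp [h]
      · simp [hcon x h]
    have h2 : ({p, sp A p} : Finset (Fin n)).card ≤ 2 := Finset.card_insert_le _ _ |>.trans (by simp)
    simp [Finset.card_univ] at this
    omega
  obtain ⟨k, hk1, hk2⟩ := this
  rcases reach k (hSC p k) with h | h
  · exact hk1 h
  · exact hk2 h

end Basics

end ClassDProof
namespace ClassDProof

section Matchings

variable {n : ℕ} (A : Matrix (Fin n) (Fin n) ℝ)

noncomputable def Fset : Finset (Fin n) := Finset.univ.filter (fun p => Pendant (DA A) p)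

noncomputable def Wset : Finset (Fin n) := Finset.univ.filter (fun w => ¬ Pendant (DA A) w)

noncomputable def dd (w : Fin n) : ℝ := ∑ p ∈ Fset A, A w p * A p w

/-- a vertex of an edge that is not pendant -/
noncomputable def pick (e : Sym2 (Fin n)) : Fin n :=
  if h : ∃ v, v ∈ e ∧ ¬ Pendant (DA A) v then h.choose else e.out.1

def ValidG (γ : Fin n → Fin n) : Prop :=
  ∀ w, ¬ Pendant (DA A) w → Pendant (DA A) (γ w) ∧ sp A (γ w) = w

noncomputable def matchOf (γ : Fin n → Fin n) : Finset (Sym2 (Fin n)) :=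
  (Wset A).image (fun w => s(w, γ w))

noncomputable def gammaOf (M : Finset (Sym2 (Fin n))) : Fin n → Fin n :=
  fun w => if h : ∃ p, Pendant (DA A) p ∧ s(w, p) ∈ M then h.choose else w

variable {A}

lemma mem_Fset {p : Fin n} : p ∈ Fset A ↔ Pendant (DA A) p := by simp [Fset]

lemma mem_Wset {w : Fin n} : w ∈ Wset A ↔ ¬ Pendant (DA A) w := by simp [Wset]

lemma mem_maxMatchings {M : Finset (Sym2 (Fin n))} :
    M ∈ maxMatchings A ↔ IsMaxMatching (DA A) M := by
  simp [maxMatchings, Set.Finite.mem_toFinset]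

variable (hD : InClassD (DA A)) (hSC : StronglyConnected (DA A)) (hn : 3 ≤ n)
include hD hSC hn

lemma edge_nonpendant {e : Sym2 (Fin n)} (he : IsEdge (DA A) e) :
    ∃ v, v ∈ e ∧ ¬ Pendant (DA A) v := by
  obtain ⟨i, j, rfl, hadj⟩ := he
  by_cases hi : Pendant (DA A) i
  · refine ⟨j, Sym2.mem_mk_right i j, ?_⟩
    rw [sp_eq hi hadj]
    exact sp_not_pendant hD hSC hn hi
  · exact ⟨i, Sym2.mem_mk_left i j, hi⟩

lemma pick_spec {e : Sym2 (Fin n)} (he : IsEdge (DA A) e) :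
    pick A e ∈ e ∧ ¬ Pendant (DA A) (pick A e) := by
  have h := edge_nonpendant hD hSC hn he
  rw [pick, dif_pos h]
  exact h.choose_spec

lemma matching_card_le {M : Finset (Sym2 (Fin n))} (hM : IsMatching (DA A) M) :
    M.card ≤ (Wset A).card := by
  apply Finset.card_le_card_of_injOn (pick A)
  · intro e heM
    rw [Finset.mem_coe, mem_Wset]
    exact (pick_spec hD hSC hn (hM.1 e heM)).2
  · intro e he f hf hef
    by_contra hne
    exact hM.2 e he f hf hne (pick A e) (pick_spec hD hSC hn (hM.1 e he)).1
      (hef ▸ (pick_spec hD hSC hn (hM.1 f hf)).1)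

omit hSC hn in
lemma validG_exists' : ∃ γ, ValidG A γ := by
  have hex : ∀ w, ∃ p, ¬ Pendant (DA A) w → Adjd (DA A) w p ∧ Pendant (DA A) p := by
    intro w
    by_cases h : ¬ Pendant (DA A) w
    · obtain ⟨j, hj⟩ := hD.2 w h
      exact ⟨j, fun _ => hj⟩
    · exact ⟨w, fun h' => absurd h' h⟩
  choose γ hγ using hex
  refine ⟨γ, fun w hw => ?_⟩
  obtain ⟨hadj, hpend⟩ := hγ w hw
  exact ⟨hpend, (sp_eq hpend (adjd_symm hadj)).symm⟩

omit hSC hn in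
lemma validG_adj {γ : Fin n → Fin n} (hγ : ValidG A γ) {w : Fin n}
    (hw : ¬ Pendant (DA A) w) : Adjd (DA A) w (γ w) := by
  have h := (hγ w hw)
  have := sp_adj h.1
  rw [h.2] at this
  exact adjd_symm this

omit hSC hn in
lemma matchOf_injOn {γ : Fin n → Fin n} (hγ : ValidG A γ) :
    ∀ x ∈ Wset A, ∀ y ∈ Wset A, s(x, γ x) = s(y, γ y) → x = y := by
  intro x hx y hy hxy
  rw [mem_Wset] at hx hy
  rcases Sym2.eq_iff.mp hxy with ⟨h, _⟩ | ⟨h1, h2⟩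
  · exact h
  · exact absurd ((h1 ▸ (hγ y hy).1)) hx

omit hSC hn in
lemma matchOf_isMatching {γ : Fin n → Fin n} (hγ : ValidG A γ) :
    IsMatching (DA A) (matchOf A γ) := by
  constructor
  · intro e he
    obtain ⟨w, hw, rfl⟩ := Finset.mem_image.mp he
    rw [mem_Wset] at hw
    exact ⟨w, γ w, rfl, validG_adj hD hγ hw⟩
  · intro e he f hf hef v hve hvf
    obtain ⟨w, hw, rfl⟩ := Finset.mem_image.mp he
    obtain ⟨w', hw', rfl⟩ := Finset.mem_image.mp hf
    rw [mem_Wset] at hw hw'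
    rcases Sym2.mem_iff.mp hve with rfl | rfl <;> rcases Sym2.mem_iff.mp hvf with h | h
    · exact hef (h ▸ rfl)
    · exact hw ((h ▸ (hγ w' hw').1))
    · exact hw' ((h ▸ (hγ w hw).1))
    · have : w = w' := by
        have h1 := (hγ w hw).2
        have h2 := (hγ w' hw').2
        rw [← h1, ← h2, h]
      exact hef (this ▸ rfl)

omit hSC hn in
lemma matchOf_card {γ : Fin n → Fin n} (hγ : ValidG A γ) :
    (matchOf A γ).card = (Wset A).card :=
  Finset.card_image_of_injOn (matchOf_injOn hD hγ)

lemma matchOf_isMax {γ : Fin n → Fin n} (hγ : ValidG A γ) :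
    IsMaxMatching (DA A) (matchOf A γ) := by
  refine ⟨matchOf_isMatching hD hγ, fun M' hM' => ?_⟩
  rw [matchOf_card hD hγ]
  exact matching_card_le hD hSC hn hM'

lemma maxMatching_card {M : Finset (Sym2 (Fin n))} (hM : IsMaxMatching (DA A) M) :
    M.card = (Wset A).card := by
  obtain ⟨γ, hγ⟩ := validG_exists' hD
  exact le_antisymm (matching_card_le hD hSC hn hM.1)
    ((matchOf_card hD hγ) ▸ hM.2 _ (matchOf_isMatching hD hγ))

lemma pick_image {M : Finset (Sym2 (Fin n))} (hM : IsMaxMatching (DA A) M) :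
    M.image (pick A) = Wset A := by
  have hinj : ∀ x ∈ M, ∀ y ∈ M, pick A x = pick A y → x = y := by
    intro e he f hf hef
    by_contra hne
    exact hM.1.2 e he f hf hne (pick A e) (pick_spec hD hSC hn (hM.1.1 e he)).1
      (hef ▸ (pick_spec hD hSC hn (hM.1.1 f hf)).1)
  apply Finset.eq_of_subset_of_card_le
  · intro v hv
    obtain ⟨e, he, rfl⟩ := Finset.mem_image.mp hv
    rw [mem_Wset]
    exact (pick_spec hD hSC hn (hM.1.1 e he)).2
  · rw [Finset.card_image_of_injOn hinj, maxMatching_card hD hSC hn hM]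

/-- every edge of a maximum matching joins a non-pendant vertex to one of its pendants -/
lemma matching_edge_structure {M : Finset (Sym2 (Fin n))} (hM : IsMaxMatching (DA A) M)
    {e : Sym2 (Fin n)} (he : e ∈ M) :
    ∃ w p, ¬ Pendant (DA A) w ∧ Pendant (DA A) p ∧ sp A p = w ∧ e = s(w, p) := by
  obtain ⟨i, j, rfl, hadj⟩ := hM.1.1 e he
  have hmem := (pick_spec hD hSC hn (hM.1.1 _ he)).1
  have hnp := (pick_spec hD hSC hn (hM.1.1 _ he)).2
  -- the other endpoint is pendant
  have key : ∀ u v : Fin n, s(u,v) = s(i,j) → pick A s(i,j) = u → Adjd (DA A) u v →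
      Pendant (DA A) v := by
    intro u v huv hpick hadj'
    by_contra hv
    have hvW : v ∈ Wset A := mem_Wset.mpr hv
    rw [← pick_image hD hSC hn hM] at hvW
    obtain ⟨f, hf, hfv⟩ := Finset.mem_image.mp hvW
    by_cases hef : s(i,j) = f
    · subst hef
      rw [hpick] at hfv
      exact hadj'.1 hfv
    · exact hM.1.2 _ he f hf hef v (huv ▸ Sym2.mem_mk_right u v) (hfv ▸ (pick_spec hD hSC hn (hM.1.1 f hf)).1)
  rcases Sym2.mem_iff.mp hmem with hp | hp
  · have hpend := key i j rfl hp hadj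
    exact ⟨i, j, hp ▸ hnp, hpend, (sp_eq hpend (adjd_symm hadj)).symm, rfl⟩
  · have hpend := key j i Sym2.eq_swap hp (adjd_symm hadj)
    exact ⟨j, i, hp ▸ hnp, hpend, (sp_eq hpend hadj).symm, Sym2.eq_swap⟩

end Matchings

end ClassDProof
namespace ClassDProof

section CoreSum

variable {n : ℕ} {A : Matrix (Fin n) (Fin n) ℝ}

lemma cycProd_mk (a b : Fin n) : cycProd A s(a, b) = A a b * A b a := rfl

lemma matched_unique {M : Finset (Sym2 (Fin n))} (hM : IsMatching (DA A) M)
    {w p p' : Fin n} (h : s(w, p) ∈ M) (h' : s(w, p') ∈ M) : p = p' := by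
  by_contra hne
  have hedges : s(w, p) ≠ s(w, p') := fun heq => by
    rcases Sym2.eq_iff.mp heq with ⟨-, h⟩ | ⟨h1, h2⟩
    · exact hne h
    · exact hne (h2.trans h1)
  exact hM.2 _ h _ h' hedges w (Sym2.mem_mk_left _ _) (Sym2.mem_mk_left _ _)

variable (hD : InClassD (DA A)) (hSC : StronglyConnected (DA A)) (hn : 3 ≤ n)
include hD hSC hn

lemma gammaOf_mem {M : Finset (Sym2 (Fin n))} (hM : IsMaxMatching (DA A) M)
    {w : Fin n} (hw : ¬ Pendant (DA A) w) :
    Pendant (DA A) (gammaOf A M w) ∧ sp A (gammaOf A M w) = w ∧ s(w, gammaOf A M w) ∈ M := by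
  have hex : ∃ p, Pendant (DA A) p ∧ s(w, p) ∈ M := by
    have hwW : w ∈ Wset A := mem_Wset.mpr hw
    rw [← pick_image hD hSC hn hM] at hwW
    obtain ⟨e, he, hpe⟩ := Finset.mem_image.mp hwW
    obtain ⟨w', p, hw', hp, hsp, rfl⟩ := matching_edge_structure hD hSC hn hM he
    have : pick A s(w', p) = w' := by
      rcases Sym2.mem_iff.mp (pick_spec hD hSC hn (hM.1.1 _ he)).1 with h | h
      · exact h
      · exact absurd (h ▸ hp) (h ▸ (pick_spec hD hSC hn (hM.1.1 _ he)).2)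
    rw [this] at hpe
    exact ⟨p, hp, hpe ▸ he⟩
  have hspec := hex.choose_spec
  have hval : gammaOf A M w = hex.choose := by rw [gammaOf, dif_pos hex]
  rw [hval]
  refine ⟨hspec.1, ?_, hspec.2⟩
  obtain ⟨w', p', hw', hp', hsp', heq⟩ := matching_edge_structure hD hSC hn hM hspec.2
  rcases Sym2.eq_iff.mp heq with ⟨h1, h2⟩ | ⟨h1, h2⟩
  · rw [h2, hsp', ← h1]
  · exact absurd (h1 ▸ hw) (by simpa using hp')

lemma gammaOf_eq {M : Finset (Sym2 (Fin n))} (hM : IsMaxMatching (DA A) M)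
    {w p : Fin n} (hw : ¬ Pendant (DA A) w) (h : s(w, p) ∈ M) : gammaOf A M w = p :=
  matched_unique hM.1 (gammaOf_mem hD hSC hn hM hw).2.2 h

lemma matchOf_gammaOf {M : Finset (Sym2 (Fin n))} (hM : IsMaxMatching (DA A) M) :
    matchOf A (gammaOf A M) = M := by
  apply Finset.Subset.antisymm
  · intro e he
    obtain ⟨w, hw, rfl⟩ := Finset.mem_image.mp he
    exact (gammaOf_mem hD hSC hn hM (mem_Wset.mp hw)).2.2
  · intro e he
    obtain ⟨w, p, hw, hp, hsp, rfl⟩ := matching_edge_structure hD hSC hn hM he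
    exact Finset.mem_image.mpr ⟨w, mem_Wset.mpr hw, by rw [gammaOf_eq hD hSC hn hM hw he]⟩

lemma notMem_matching_nonpendant {M : Finset (Sym2 (Fin n))} (hM : IsMaxMatching (DA A) M)
    {u v : Fin n} (hu : ¬ Pendant (DA A) u) (hv : ¬ Pendant (DA A) v) : s(u, v) ∉ M := by
  intro h
  obtain ⟨w, p, hw, hp, hsp, heq⟩ := matching_edge_structure hD hSC hn hM h
  rcases Sym2.eq_iff.mp heq with ⟨h1, h2⟩ | ⟨h1, h2⟩
  · exact hv (h2 ▸ hp)
  · exact hu (h1 ▸ hp)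

end CoreSum

section CoreSum2

variable {n : ℕ} (A : Matrix (Fin n) (Fin n) ℝ)

/-- choice sets: free pendant choice on `S`, frozen elsewhere -/
noncomputable def tfun (S : Finset (Fin n)) : Fin n → Finset (Fin n) :=
  fun w => if w ∈ S then Fset A else {w}

variable {A}

/-- extend a choice function by prescribed values on `T` -/
noncomputable def extf (T : Finset (Fin n)) (c₀ γ : Fin n → Fin n) : Fin n → Fin n :=
  fun w => if w ∈ T then c₀ w else γ w

/-- freeze a function outside `S` -/
noncomputable def restr (S : Finset (Fin n)) (g : Fin n → Fin n) : Fin n → Fin n :=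
  fun w => if w ∈ S then g w else w

lemma tfun_pos {S : Finset (Fin n)} {w : Fin n} (h : w ∈ S) : tfun A S w = Fset A := if_pos h

lemma tfun_neg {S : Finset (Fin n)} {w : Fin n} (h : w ∉ S) : tfun A S w = {w} := if_neg h

lemma extf_pos {T : Finset (Fin n)} {c₀ γ : Fin n → Fin n} {w : Fin n} (h : w ∈ T) :
    extf T c₀ γ w = c₀ w := if_pos h

lemma extf_neg {T : Finset (Fin n)} {c₀ γ : Fin n → Fin n} {w : Fin n} (h : w ∉ T) :
    extf T c₀ γ w = γ w := if_neg h

lemma restr_pos {S : Finset (Fin n)} {g : Fin n → Fin n} {w : Fin n} (h : w ∈ S) :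
    restr S g w = g w := if_pos h

lemma restr_neg {S : Finset (Fin n)} {g : Fin n → Fin n} {w : Fin n} (h : w ∉ S) :
    restr S g w = w := if_neg h

variable (hD : InClassD (DA A)) (hSC : StronglyConnected (DA A)) (hn : 3 ≤ n)
include hD hSC hn

/-- The core counting identity. -/
lemma core_sum (T : Finset (Fin n)) (hT : T ⊆ Wset A) (c₀ : Fin n → Fin n)
    (hc₀ : ∀ w ∈ T, Pendant (DA A) (c₀ w) ∧ sp A (c₀ w) = w) :
    ∑ M ∈ (maxMatchings A).filter (fun M => ∀ w ∈ T, s(w, c₀ w) ∈ M),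
        ∏ e ∈ M.filter (fun e => ∀ w ∈ T, e ≠ s(w, c₀ w)), cycProd A e
      = ∏ w ∈ Wset A \ T, dd A w := by
  classical
  set S : Finset (Fin n) := Wset A \ T with hS
  have hSW : S ⊆ Wset A := Finset.sdiff_subset
  -- Step 1: product of sums over the pi-set
  have step1 : ∏ w ∈ S, dd A w
      = ∑ γ ∈ Fintype.piFinset (tfun A S), ∏ w ∈ S, (A w (γ w) * A (γ w) w) := by
    have e1 : ∀ w : Fin n, (∑ j ∈ tfun A S w, if w ∈ S then A w j * A j w else 1)
        = (if w ∈ S then dd A w else 1) := by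
      intro w
      by_cases hw : w ∈ S
      · rw [tfun_pos hw, if_pos hw]
        refine (Finset.sum_congr rfl fun j _ => if_pos hw).trans rfl
      · rw [tfun_neg hw, if_neg hw, Finset.sum_singleton, if_neg hw]
    have e2 := Finset.prod_univ_sum (tfun A S) (fun w j => if w ∈ S then A w j * A j w else 1)
    rw [Finset.prod_congr rfl (fun w _ => e1 w), Finset.prod_ite_mem, Finset.univ_inter] at e2
    rw [e2]
    apply Finset.sum_congr rfl
    intro γ _
    rw [Finset.prod_ite_mem, Finset.univ_inter]
  -- Step 2: non-valid choices contribute zero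
  have step2 : ∑ γ ∈ Fintype.piFinset (tfun A S), ∏ w ∈ S, (A w (γ w) * A (γ w) w)
      = ∑ γ ∈ (Fintype.piFinset (tfun A S)).filter (fun γ => ∀ w ∈ S, sp A (γ w) = w),
          ∏ w ∈ S, (A w (γ w) * A (γ w) w) := by
    symm
    apply Finset.sum_filter_of_ne
    intro γ hγ hne w hw
    by_contra hspw
    apply hne
    have hγw : γ w ∈ Fset A := by
      have := Fintype.mem_piFinset.mp hγ w
      rwa [tfun_pos hw] at this
    have : A w (γ w) = 0 :=
      pend_zero' hD (mem_Fset.mp hγw) (fun h => hspw h.symm)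
    exact Finset.prod_eq_zero hw (by rw [this, zero_mul])
  rw [step1, step2]
  -- a reusable fact: extended choice functions are valid
  have hvalid : ∀ γ ∈ (Fintype.piFinset (tfun A S)).filter (fun γ => ∀ w ∈ S, sp A (γ w) = w),
      ValidG A (extf T c₀ γ) := by
    intro γ hγ
    rw [Finset.mem_filter] at hγ
    intro w hw
    by_cases hwT : w ∈ T
    · rw [extf_pos hwT]
      exact hc₀ w hwT
    · have hwS : w ∈ S := Finset.mem_sdiff.mpr ⟨mem_Wset.mpr hw, hwT⟩
      rw [extf_neg hwT]
      have hγw : γ w ∈ Fset A := by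
        have := Fintype.mem_piFinset.mp hγ.1 w
        rwa [tfun_pos hwS] at this
      exact ⟨mem_Fset.mp hγw, hγ.2 w hwS⟩
  -- Step 3: bijection with constrained maximum matchings
  symm
  apply Finset.sum_nbij' (fun γ => matchOf A (extf T c₀ γ)) (fun M => restr S (gammaOf A M))
  · -- maps to
    intro γ hγ
    have hval := hvalid γ hγ
    rw [Finset.mem_filter]
    refine ⟨mem_maxMatchings.mpr (matchOf_isMax hD hSC hn hval), fun w hw => ?_⟩
    refine Finset.mem_image.mpr ⟨w, hT hw, ?_⟩
    rw [extf_pos hw]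
  · -- reverse maps to
    intro M hM
    rw [Finset.mem_filter] at hM
    have hMmax := mem_maxMatchings.mp hM.1
    rw [Finset.mem_filter]
    constructor
    · rw [Fintype.mem_piFinset]
      intro w
      by_cases hwS : w ∈ S
      · rw [tfun_pos hwS, restr_pos hwS]
        exact mem_Fset.mpr (gammaOf_mem hD hSC hn hMmax (mem_Wset.mp (hSW hwS))).1
      · rw [tfun_neg hwS, restr_neg hwS]
        exact Finset.mem_singleton_self w
    · intro w hw
      rw [restr_pos hw]
      exact (gammaOf_mem hD hSC hn hMmax (mem_Wset.mp (hSW hw))).2.1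
  · -- left inverse
    intro γ hγ
    have hval := hvalid γ hγ
    rw [Finset.mem_filter] at hγ
    funext w
    by_cases hwS : w ∈ S
    · rw [restr_pos hwS]
      have hwW : ¬ Pendant (DA A) w := mem_Wset.mp (hSW hwS)
      have hmem : s(w, extf T c₀ γ w) ∈ matchOf A (extf T c₀ γ) :=
        Finset.mem_image.mpr ⟨w, mem_Wset.mpr hwW, rfl⟩
      rw [gammaOf_eq hD hSC hn (matchOf_isMax hD hSC hn hval) hwW hmem,
        extf_neg (Finset.mem_sdiff.mp hwS).2]
    · rw [restr_neg hwS]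
      have := Fintype.mem_piFinset.mp hγ.1 w
      rw [tfun_neg hwS, Finset.mem_singleton] at this
      exact this.symm
  · -- right inverse
    intro M hM
    rw [Finset.mem_filter] at hM
    have hMmax := mem_maxMatchings.mp hM.1
    have himg : matchOf A (extf T c₀ (restr S (gammaOf A M))) = matchOf A (gammaOf A M) := by
      apply Finset.image_congr
      intro w hw
      have hwW : w ∈ Wset A := Finset.mem_coe.mp hw
      show s(w, extf T c₀ (restr S (gammaOf A M)) w) = s(w, gammaOf A M w)
      by_cases hwT : w ∈ T
      · have h1 : s(w, c₀ w) ∈ M := hM.2 w hwT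
        have h2 := gammaOf_eq hD hSC hn hMmax (mem_Wset.mp hwW) h1
        rw [extf_pos hwT, h2]
      · have hwS : w ∈ S := Finset.mem_sdiff.mpr ⟨hwW, hwT⟩
        rw [extf_neg hwT, restr_pos hwS]
    rw [himg, matchOf_gammaOf hD hSC hn hMmax]
  · -- summand equality
    intro γ hγ
    have hval := hvalid γ hγ
    rw [Finset.mem_filter] at hγ
    have hflt : (matchOf A (extf T c₀ γ)).filter (fun e => ∀ w ∈ T, e ≠ s(w, c₀ w))
        = S.image (fun w => s(w, extf T c₀ γ w)) := by
      ext e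
      rw [Finset.mem_filter, Finset.mem_image]
      constructor
      · rintro ⟨he, hcond⟩
        obtain ⟨w, hw, rfl⟩ := Finset.mem_image.mp he
        by_cases hwT : w ∈ T
        · exact absurd (by rw [extf_pos hwT]) (hcond w hwT)
        · exact ⟨w, Finset.mem_sdiff.mpr ⟨hw, hwT⟩, rfl⟩
      · rintro ⟨w, hw, rfl⟩
        refine ⟨Finset.mem_image.mpr ⟨w, hSW hw, rfl⟩, fun w' hw' heq => ?_⟩
        rcases Sym2.eq_iff.mp heq with ⟨h1, -⟩ | ⟨h1, -⟩
        · exact (Finset.mem_sdiff.mp hw).2 (h1 ▸ hw')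
        · exact (mem_Wset.mp (hSW hw)) (h1 ▸ (hc₀ w' hw').1)
    rw [hflt, Finset.prod_image]
    · apply Finset.prod_congr rfl
      intro w hw
      rw [cycProd_mk, extf_neg (Finset.mem_sdiff.mp hw).2]
    · intro x hx y hy
      exact matchOf_injOn hD hval x (hSW hx) y (hSW hy)

end CoreSum2

end ClassDProof
namespace ClassDProof

section Chains

variable {n : ℕ} {A : Matrix (Fin n) (Fin n) ℝ}

lemma chainEdges_length (c : List (Fin n)) : (chainEdges c).length = c.length - 1 := by
  rw [chainEdges, List.length_zipWith, List.length_tail]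
  omega

variable (hD : InClassD (DA A)) (hSC : StronglyConnected (DA A)) (hn : 3 ≤ n)
include hD hSC hn

lemma mem_matching_pair {M : Finset (Sym2 (Fin n))} (hM : IsMaxMatching (DA A) M)
    {u v : Fin n} (h : s(u, v) ∈ M) :
    (Pendant (DA A) u ∧ ¬ Pendant (DA A) v ∧ sp A u = v) ∨
      (¬ Pendant (DA A) u ∧ Pendant (DA A) v ∧ sp A v = u) := by
  obtain ⟨w, p, hw, hp, hsp, heq⟩ := matching_edge_structure hD hSC hn hM h
  rcases Sym2.eq_iff.mp heq with ⟨h1, h2⟩ | ⟨h1, h2⟩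
  · exact Or.inr ⟨h1 ▸ hw, h2 ▸ hp, by rw [h2, hsp, h1]⟩
  · exact Or.inl ⟨h1 ▸ hp, h2 ▸ hw, by rw [h1, hsp, h2]⟩

/-- Structure of alternating cycle chains w.r.t. a maximum matching. -/
lemma alt_chain_cases {M : Finset (Sym2 (Fin n))} (hM : IsMaxMatching (DA A) M)
    {c : List (Fin n)} (hc : IsCycleChain (DA A) c) (ha : IsAltChain M c) :
    (∃ x y, c = [x, y] ∧ s(x, y) ∈ M) ∨
      (∃ p w w' q, c = [p, w, w', q] ∧ Pendant (DA A) p ∧ Pendant (DA A) q ∧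
        sp A p = w ∧ sp A q = w' ∧ s(p, w) ∈ M ∧ s(w', q) ∈ M ∧ s(w, w') ∉ M) := by
  obtain ⟨hnd, hlen, hch⟩ := hc
  match c, hnd, hlen, hch with
  | [a, b], hnd, hlen, hch =>
    left
    refine ⟨a, b, rfl, ?_⟩
    have h0 := (ha.2 0 (by simp [chainEdges_length])).mpr Even.zero
    exact h0
  | [a, b, x], hnd, hlen, hch =>
    exfalso
    have hodd := ha.1
    have hl2 : (chainEdges [a, b, x]).length = 2 := by
      rw [chainEdges_length]
      rfl
    rw [hl2] at hodd
    exact absurd hodd (by decide)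
  | a :: b :: x :: y :: rest, hnd, hlen, hch =>
    right
    have hlen3 : 3 ≤ (chainEdges (a :: b :: x :: y :: rest)).length := by
      rw [chainEdges_length]; simp only [List.length_cons]; omega
    have h0 : s(a, b) ∈ M := (ha.2 0 (by omega)).mpr Even.zero
    have h1 : s(b, x) ∉ M := fun h => by simpa using (ha.2 1 (by omega)).mp h
    have h2 : s(x, y) ∈ M := (ha.2 2 (by omega)).mpr (by decide)
    -- adjacency facts
    rw [show List.Chain' = List.IsChain from rfl, List.isChain_cons_cons] at hch
    obtain ⟨hab, hch⟩ := hch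
    rw [List.isChain_cons_cons] at hch
    obtain ⟨hbx, hch⟩ := hch
    rw [List.isChain_cons_cons] at hch
    obtain ⟨hxy, hch⟩ := hch
    -- nodup facts
    simp only [List.nodup_cons, List.mem_cons] at hnd
    push_neg at hnd
    -- first edge
    have hfirst : Pendant (DA A) a ∧ ¬ Pendant (DA A) b ∧ sp A a = b := by
      rcases mem_matching_pair hD hSC hn hM h0 with h | h
      · exact h
      · exfalso
        have : x = sp A b := sp_eq h.2.1 hbx
        rw [h.2.2] at this
        exact hnd.1.2.1 this.symm
    -- third edge
    have hthird : ¬ Pendant (DA A) x ∧ Pendant (DA A) y ∧ sp A y = x := by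
      rcases mem_matching_pair hD hSC hn hM h2 with h | h
      · exfalso
        have : b = sp A x := sp_eq h.1 (adjd_symm hbx)
        rw [h.2.2] at this
        exact hnd.2.1.2.1 this
      · exact h
    -- the chain stops here
    have hrest : rest = [] := by
      cases rest with
      | nil => rfl
      | cons z rest' =>
        exfalso
        rw [List.isChain_cons_cons] at hch
        have : z = sp A y := sp_eq hthird.2.1 hch.1
        rw [hthird.2.2] at this
        exact hnd.2.2.1.2 (by rw [← this]; exact List.mem_cons_self)
    subst hrest
    exact ⟨a, b, x, y, rfl, hfirst.1, hthird.2.1, hfirst.2.2, hthird.2.2, h0, h2, h1⟩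

end Chains

end ClassDProof
namespace ClassDProof

section TheChains

variable {n : ℕ} {A : Matrix (Fin n) (Fin n) ℝ}

lemma mem_MMset {M : Finset (Sym2 (Fin n))} {i j : Fin n} :
    M ∈ MMset A i j ↔
      IsMaxMatching (DA A) M ∧ ∃ c, IsCycleChainBtw (DA A) i j c ∧ IsAltChain M c :=
  Iff.rfl

lemma isChainBtw_pair {x y : Fin n} (hadj : Adjd (DA A) x y) :
    IsCycleChainBtw (DA A) x y [x, y] :=
  ⟨⟨by simp [hadj.1], by simp, List.isChain_pair.mpr hadj⟩, rfl, rfl⟩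

lemma isAlt_pair {M : Finset (Sym2 (Fin n))} {x y : Fin n} (h : s(x, y) ∈ M) :
    IsAltChain M [x, y] := by
  refine ⟨by simp [chainEdges_length], fun k hk => ?_⟩
  have hk0 : k = 0 := by
    have := hk
    rw [chainEdges_length] at this
    simpa using this
  subst hk0
  exact iff_of_true h (by decide)

variable (hD : InClassD (DA A)) (hSC : StronglyConnected (DA A)) (hn : 3 ≤ n)
include hD hSC hn

omit hSC hn in
lemma validG_update {γ : Fin n → Fin n} (hγ : ValidG A γ) {p : Fin n}
    (hp : Pendant (DA A) p) : ValidG A (Function.update γ (sp A p) p) := by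
  intro w hw
  by_cases hwsp : w = sp A p
  · subst hwsp
    rw [Function.update_self]
    exact ⟨hp, rfl⟩
  · rw [Function.update_of_ne hwsp]
    exact hγ w hw

lemma exists_max_with1 {p : Fin n} (hp : Pendant (DA A) p) :
    ∃ M, IsMaxMatching (DA A) M ∧ s(sp A p, p) ∈ M := by
  obtain ⟨γ₀, hγ₀⟩ := validG_exists' hD
  have hγ := validG_update hD hγ₀ hp
  refine ⟨matchOf A (Function.update γ₀ (sp A p) p), matchOf_isMax hD hSC hn hγ, ?_⟩
  refine Finset.mem_image.mpr ⟨sp A p, mem_Wset.mpr (sp_not_pendant hD hSC hn hp), ?_⟩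
  rw [Function.update_self]

lemma exists_max_with2 {p q : Fin n} (hp : Pendant (DA A) p) (hq : Pendant (DA A) q)
    (hss : sp A p ≠ sp A q) :
    ∃ M, IsMaxMatching (DA A) M ∧ s(sp A p, p) ∈ M ∧ s(sp A q, q) ∈ M := by
  obtain ⟨γ₀, hγ₀⟩ := validG_exists' hD
  have hγ := validG_update hD (validG_update hD hγ₀ hp) hq
  refine ⟨matchOf A _, matchOf_isMax hD hSC hn hγ, ?_, ?_⟩
  · refine Finset.mem_image.mpr ⟨sp A p, mem_Wset.mpr (sp_not_pendant hD hSC hn hp), ?_⟩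
    rw [Function.update_of_ne hss, Function.update_self]
  · refine Finset.mem_image.mpr ⟨sp A q, mem_Wset.mpr (sp_not_pendant hD hSC hn hq), ?_⟩
    rw [Function.update_self]

/-- uniqueness of the alternating chain between a pendant vertex and its support -/
lemma chain_unique_pend_supp {i : Fin n} (hi : Pendant (DA A) i) {c : List (Fin n)}
    {M : Finset (Sym2 (Fin n))} (hM : IsMaxMatching (DA A) M)
    (hbtw : IsCycleChainBtw (DA A) i (sp A i) c) (ha : IsAltChain M c) :
    c = [i, sp A i] ∧ s(sp A i, i) ∈ M := by
  rcases alt_chain_cases hD hSC hn hM hbtw.1 ha with ⟨x, y, rfl, hxy⟩ |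
    ⟨p, w, w', q, rfl, hp, hq, hsp, hsq, h1, h2, h3⟩
  · have hx : x = i := by simpa using hbtw.2.1
    have hy : y = sp A i := by simpa using hbtw.2.2
    subst hx; subst hy
    exact ⟨rfl, Sym2.eq_swap ▸ hxy⟩
  · exfalso
    have hq' : q = sp A i := by simpa using hbtw.2.2
    exact (sp_not_pendant hD hSC hn hi) (hq' ▸ hq)

lemma chain_unique_supp_pend {j : Fin n} (hj : Pendant (DA A) j) {c : List (Fin n)}
    {M : Finset (Sym2 (Fin n))} (hM : IsMaxMatching (DA A) M)
    (hbtw : IsCycleChainBtw (DA A) (sp A j) j c) (ha : IsAltChain M c) :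
    c = [sp A j, j] ∧ s(sp A j, j) ∈ M := by
  rcases alt_chain_cases hD hSC hn hM hbtw.1 ha with ⟨x, y, rfl, hxy⟩ |
    ⟨p, w, w', q, rfl, hp, hq, hsp, hsq, h1, h2, h3⟩
  · have hx : x = sp A j := by simpa using hbtw.2.1
    have hy : y = j := by simpa using hbtw.2.2
    subst hx; subst hy
    exact ⟨rfl, hxy⟩
  · exfalso
    have hp' : p = sp A j := by simpa using hbtw.2.1
    exact (sp_not_pendant hD hSC hn hj) (hp' ▸ hp)

lemma chain_unique_pends {i j : Fin n} (hi : Pendant (DA A) i) (hj : Pendant (DA A) j)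
    {c : List (Fin n)} {M : Finset (Sym2 (Fin n))} (hM : IsMaxMatching (DA A) M)
    (hbtw : IsCycleChainBtw (DA A) i j c) (ha : IsAltChain M c) :
    c = [i, sp A i, sp A j, j] ∧ sp A i ≠ sp A j ∧ Adjd (DA A) (sp A i) (sp A j) ∧
      s(sp A i, i) ∈ M ∧ s(sp A j, j) ∈ M := by
  rcases alt_chain_cases hD hSC hn hM hbtw.1 ha with ⟨x, y, rfl, hxy⟩ |
    ⟨p, w, w', q, rfl, hp, hq, hsp, hsq, h1, h2, h3⟩
  · exfalso
    have hx : x = i := by simpa using hbtw.2.1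
    have hy : y = j := by simpa using hbtw.2.2
    subst hx; subst hy
    rcases mem_matching_pair hD hSC hn hM hxy with h | h
    · exact h.2.1 hj
    · exact h.1 hi
  · have hp' : p = i := by simpa using hbtw.2.1
    have hq' : q = j := by simpa using hbtw.2.2
    subst hp'; subst hq'
    obtain ⟨hnd, -, hch⟩ := hbtw.1
    rw [show List.Chain' = List.IsChain from rfl, List.isChain_cons_cons] at hch
    rw [List.isChain_cons_cons] at hch
    have hadj : Adjd (DA A) w w' := hch.2.1
    have hwne : w ≠ w' := hadj.1
    subst hsp; subst hsq
    exact ⟨rfl, hwne, hadj, Sym2.eq_swap ▸ h1, Sym2.eq_swap ▸ h2⟩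

end TheChains

end ClassDProof
namespace ClassDProof

section MuValues

variable {n : ℕ} {A : Matrix (Fin n) (Fin n) ℝ}

lemma mu_eq_zero_of_not_matchable {i j : Fin n} (h : ¬ MaxMatchable A i j) :
    mu A i j = 0 := by
  rw [mu, beta, if_neg h, zero_mul]

variable (hD : InClassD (DA A)) (hSC : StronglyConnected (DA A)) (hn : 3 ≤ n)
include hD hSC hn

lemma isChainBtw_four {i j : Fin n} (hi : Pendant (DA A) i) (hj : Pendant (DA A) j)
    (hij : i ≠ j) (hss : sp A i ≠ sp A j) (hadjA : A (sp A i) (sp A j) ≠ 0) :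
    IsCycleChainBtw (DA A) i j [i, sp A i, sp A j, j] := by
  have hspi := sp_not_pendant hD hSC hn hi
  have hspj := sp_not_pendant hD hSC hn hj
  refine ⟨⟨?_, by simp, ?_⟩, rfl, rfl⟩
  · have n1 : i ≠ sp A i := (sp_adj hi).1
    have n2 : i ≠ sp A j := fun h => hspj (h ▸ hi)
    have n3 : sp A i ≠ j := fun h => hspi (by rw [h]; exact hj)
    have n4 : sp A j ≠ j := fun h => hspj (by rw [h]; exact hj)
    simp [n1, n2, n3, n4, hij, hss]
  · rw [show List.Chain' = List.IsChain from rfl, List.isChain_cons_cons, List.isChain_cons_cons]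
    exact ⟨sp_adj hi, adj_of_ne hD hss hadjA, List.isChain_pair.mpr (adjd_symm (sp_adj hj))⟩

lemma isAlt_four {i j : Fin n} (hi : Pendant (DA A) i) (hj : Pendant (DA A) j)
    {M : Finset (Sym2 (Fin n))} (hM : IsMaxMatching (DA A) M)
    (h1 : s(sp A i, i) ∈ M) (h2 : s(sp A j, j) ∈ M) :
    IsAltChain M [i, sp A i, sp A j, j] := by
  constructor
  · have hl : (chainEdges [i, sp A i, sp A j, j]).length = 3 := by
      rw [chainEdges_length]
      rfl
    rw [hl]
    decide
  · intro k hk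
    have hk3 : k < 3 := by
      rw [chainEdges_length] at hk; simpa using hk
    interval_cases k
    · show s(i, sp A i) ∈ M ↔ Even 0
      exact iff_of_true (by rw [Sym2.eq_swap]; exact h1) (by decide)
    · show s(sp A i, sp A j) ∈ M ↔ Even 1
      exact iff_of_false
        (notMem_matching_nonpendant hD hSC hn hM (sp_not_pendant hD hSC hn hi)
          (sp_not_pendant hD hSC hn hj)) (by decide)
    · show s(sp A j, j) ∈ M ↔ Even 2
      exact iff_of_true h2 (by decide)

/- ### the zero cases -/

lemma not_matchable_self {i : Fin n} : ¬ MaxMatchable A i i := by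
  rintro ⟨M, hM, c, hbtw, halt⟩
  rcases alt_chain_cases hD hSC hn hM hbtw.1 halt with ⟨x, y, rfl, -⟩ |
    ⟨p, w, w', q, rfl, -, -, -, -, -, -, -⟩
  · have hx : x = i := by simpa using hbtw.2.1
    have hy : y = i := by simpa using hbtw.2.2
    have := hbtw.1.1
    simp [hx, hy] at this
  · have hp : p = i := by simpa using hbtw.2.1
    have hq : q = i := by simpa using hbtw.2.2
    have := hbtw.1.1
    simp [hp, hq] at this

lemma not_matchable_nonpends {i j : Fin n} (hi : ¬ Pendant (DA A) i)
    (hj : ¬ Pendant (DA A) j) : ¬ MaxMatchable A i j := by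
  rintro ⟨M, hM, c, hbtw, halt⟩
  rcases alt_chain_cases hD hSC hn hM hbtw.1 halt with ⟨x, y, rfl, hxy⟩ |
    ⟨p, w, w', q, rfl, hp, -, -, -, -, -, -⟩
  · have hx : x = i := by simpa using hbtw.2.1
    have hy : y = j := by simpa using hbtw.2.2
    subst hx; subst hy
    rcases mem_matching_pair hD hSC hn hM hxy with h | h
    · exact hi h.1
    · exact hj h.2.1
  · have hp' : p = i := by simpa using hbtw.2.1
    exact hi (hp' ▸ hp)

lemma not_matchable_pend_nonsupp {i j : Fin n} (hi : Pendant (DA A) i)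
    (hj : ¬ Pendant (DA A) j) (hjs : j ≠ sp A i) : ¬ MaxMatchable A i j := by
  rintro ⟨M, hM, c, hbtw, halt⟩
  rcases alt_chain_cases hD hSC hn hM hbtw.1 halt with ⟨x, y, rfl, hxy⟩ |
    ⟨p, w, w', q, rfl, -, hq, -, -, -, -, -⟩
  · have hx : x = i := by simpa using hbtw.2.1
    have hy : y = j := by simpa using hbtw.2.2
    subst hx; subst hy
    rcases mem_matching_pair hD hSC hn hM hxy with h | h
    · exact hjs h.2.2.symm
    · exact h.1 hi
  · have hq' : q = j := by simpa using hbtw.2.2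
    exact hj (hq' ▸ hq)

lemma not_matchable_nonsupp_pend {i j : Fin n} (hi : ¬ Pendant (DA A) i)
    (hj : Pendant (DA A) j) (his : i ≠ sp A j) : ¬ MaxMatchable A i j := by
  rintro ⟨M, hM, c, hbtw, halt⟩
  rcases alt_chain_cases hD hSC hn hM hbtw.1 halt with ⟨x, y, rfl, hxy⟩ |
    ⟨p, w, w', q, rfl, hp, -, -, -, -, -, -⟩
  · have hx : x = i := by simpa using hbtw.2.1
    have hy : y = j := by simpa using hbtw.2.2
    subst hx; subst hy
    rcases mem_matching_pair hD hSC hn hM hxy with h | h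
    · exact hi h.1
    · exact his h.2.2.symm
  · have hp' : p = i := by simpa using hbtw.2.1
    exact hi (hp' ▸ hp)

lemma not_matchable_pends {i j : Fin n} (hi : Pendant (DA A) i) (hj : Pendant (DA A) j)
    (h : sp A i = sp A j ∨ A (sp A i) (sp A j) = 0) : ¬ MaxMatchable A i j := by
  rintro ⟨M, hM, c, hbtw, halt⟩
  obtain ⟨-, hss, hadj, -, -⟩ := chain_unique_pends hD hSC hn hi hj hM hbtw halt
  rcases h with h | h
  · exact hss h
  · exact hadj.2.1 h

/- ### theChain computations -/

lemma theChain_pend_supp {i : Fin n} (hi : Pendant (DA A) i) :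
    theChain A i (sp A i) = [i, sp A i] := by
  obtain ⟨M, hM, hmem⟩ := exists_max_with1 hD hSC hn hi
  have hbtw := isChainBtw_pair (sp_adj hi)
  have halt : IsAltChain M [i, sp A i] := isAlt_pair (Sym2.eq_swap ▸ hmem)
  have hex : ∃ c, IsCycleChainBtw (DA A) i (sp A i) c ∧
      ∃ M' ∈ MMset A i (sp A i), IsAltChain M' c :=
    ⟨[i, sp A i], hbtw, M, ⟨hM, [i, sp A i], hbtw, halt⟩, halt⟩
  rw [theChain, dif_pos hex]
  obtain ⟨hbtw', M', hM', halt'⟩ := hex.choose_spec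
  exact (chain_unique_pend_supp hD hSC hn hi hM'.1 hbtw' halt').1

lemma theChain_supp_pend {j : Fin n} (hj : Pendant (DA A) j) :
    theChain A (sp A j) j = [sp A j, j] := by
  obtain ⟨M, hM, hmem⟩ := exists_max_with1 hD hSC hn hj
  have hbtw := isChainBtw_pair (adjd_symm (sp_adj hj))
  have halt : IsAltChain M [sp A j, j] := isAlt_pair hmem
  have hex : ∃ c, IsCycleChainBtw (DA A) (sp A j) j c ∧
      ∃ M' ∈ MMset A (sp A j) j, IsAltChain M' c :=
    ⟨[sp A j, j], hbtw, M, ⟨hM, [sp A j, j], hbtw, halt⟩, halt⟩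
  rw [theChain, dif_pos hex]
  obtain ⟨hbtw', M', hM', halt'⟩ := hex.choose_spec
  exact (chain_unique_supp_pend hD hSC hn hj hM'.1 hbtw' halt').1

lemma theChain_pends {i j : Fin n} (hi : Pendant (DA A) i) (hj : Pendant (DA A) j)
    (hij : i ≠ j) (hss : sp A i ≠ sp A j) (hadjA : A (sp A i) (sp A j) ≠ 0) :
    theChain A i j = [i, sp A i, sp A j, j] := by
  obtain ⟨M, hM, hm1, hm2⟩ := exists_max_with2 hD hSC hn hi hj hss
  have hbtw := isChainBtw_four hD hSC hn hi hj hij hss hadjA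
  have halt := isAlt_four hD hSC hn hi hj hM hm1 hm2
  have hex : ∃ c, IsCycleChainBtw (DA A) i j c ∧ ∃ M' ∈ MMset A i j, IsAltChain M' c :=
    ⟨_, hbtw, M, ⟨hM, _, hbtw, halt⟩, halt⟩
  rw [theChain, dif_pos hex]
  obtain ⟨hbtw', M', hM', halt'⟩ := hex.choose_spec
  exact (chain_unique_pends hD hSC hn hi hj hM'.1 hbtw' halt').1

/- ### MMset characterizations -/

lemma MMset_pend_supp {i : Fin n} (hi : Pendant (DA A) i) :
    (MMset A i (sp A i)).toFinite.toFinset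
      = (maxMatchings A).filter
          (fun M => ∀ w ∈ ({sp A i} : Finset (Fin n)), s(w, i) ∈ M) := by
  ext M
  rw [Set.Finite.mem_toFinset, Finset.mem_filter, mem_maxMatchings]
  simp only [Finset.mem_singleton, forall_eq]
  constructor
  · rintro ⟨hM, c, hbtw, halt⟩
    exact ⟨hM, (chain_unique_pend_supp hD hSC hn hi hM hbtw halt).2⟩
  · rintro ⟨hM, hmem⟩
    exact ⟨hM, [i, sp A i], isChainBtw_pair (sp_adj hi), isAlt_pair (Sym2.eq_swap ▸ hmem)⟩

lemma MMset_supp_pend {j : Fin n} (hj : Pendant (DA A) j) :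
    (MMset A (sp A j) j).toFinite.toFinset
      = (maxMatchings A).filter
          (fun M => ∀ w ∈ ({sp A j} : Finset (Fin n)), s(w, j) ∈ M) := by
  ext M
  rw [Set.Finite.mem_toFinset, Finset.mem_filter, mem_maxMatchings]
  simp only [Finset.mem_singleton, forall_eq]
  constructor
  · rintro ⟨hM, c, hbtw, halt⟩
    exact ⟨hM, (chain_unique_supp_pend hD hSC hn hj hM hbtw halt).2⟩
  · rintro ⟨hM, hmem⟩
    exact ⟨hM, [sp A j, j], isChainBtw_pair (adjd_symm (sp_adj hj)), isAlt_pair hmem⟩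

lemma MMset_pends {i j : Fin n} (hi : Pendant (DA A) i) (hj : Pendant (DA A) j)
    (hij : i ≠ j) (hss : sp A i ≠ sp A j) (hadjA : A (sp A i) (sp A j) ≠ 0) :
    (MMset A i j).toFinite.toFinset
      = (maxMatchings A).filter
          (fun M => ∀ w ∈ ({sp A i, sp A j} : Finset (Fin n)),
            s(w, if w = sp A i then i else j) ∈ M) := by
  ext M
  rw [Set.Finite.mem_toFinset, Finset.mem_filter, mem_maxMatchings]
  simp only [Finset.mem_insert, Finset.mem_singleton, forall_eq_or_imp, forall_eq,
    if_pos rfl, if_neg (Ne.symm hss)]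
  constructor
  · rintro ⟨hM, c, hbtw, halt⟩
    obtain ⟨-, -, -, h1, h2⟩ := chain_unique_pends hD hSC hn hi hj hM hbtw halt
    exact ⟨hM, h1, h2⟩
  · rintro ⟨hM, h1, h2⟩
    exact ⟨hM, [i, sp A i, sp A j, j], isChainBtw_four hD hSC hn hi hj hij hss hadjA,
      isAlt_four hD hSC hn hi hj hM h1 h2⟩

end MuValues

end ClassDProof
namespace ClassDProof

section MuFinal

variable {n : ℕ} {A : Matrix (Fin n) (Fin n) ℝ}

variable (hD : InClassD (DA A)) (hSC : StronglyConnected (DA A)) (hn : 3 ≤ n)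
include hD hSC hn

lemma delta_eq : Delta A = ∏ w ∈ Wset A, dd A w := by
  have h := core_sum hD hSC hn ∅ (Finset.empty_subset _) (fun w => w) (by simp)
  rw [Finset.sdiff_empty] at h
  rw [← h, Delta]
  rw [Finset.filter_true_of_mem (by simp)]
  apply Finset.sum_congr rfl
  intro M _
  rw [matchProd, Finset.filter_true_of_mem (by simp)]

lemma dd_ne (hΔ : Delta A ≠ 0) {w : Fin n} (hw : w ∈ Wset A) : dd A w ≠ 0 := by
  rw [delta_eq hD hSC hn] at hΔ
  exact Finset.prod_ne_zero_iff.mp hΔ w hw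

lemma mu_pend_supp {i : Fin n} (hi : Pendant (DA A) i) :
    mu A i (sp A i) = A i (sp A i) * ∏ w ∈ Wset A \ {sp A i}, dd A w := by
  obtain ⟨M₀, hM₀, hmem₀⟩ := exists_max_with1 hD hSC hn hi
  have hbtw := isChainBtw_pair (sp_adj hi)
  have halt : IsAltChain M₀ [i, sp A i] := isAlt_pair (Sym2.eq_swap ▸ hmem₀)
  have hMM : MaxMatchable A i (sp A i) := ⟨M₀, hM₀, [i, sp A i], hbtw, halt⟩
  have hch := theChain_pend_supp hD hSC hn hi
  have hsub : ({sp A i} : Finset (Fin n)) ⊆ Wset A := by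
    simp [mem_Wset, sp_not_pendant hD hSC hn hi]
  have hc₀ : ∀ w ∈ ({sp A i} : Finset (Fin n)),
      Pendant (DA A) ((fun _ => i) w) ∧ sp A ((fun _ => i) w) = w := by
    intro w hw
    rw [Finset.mem_singleton] at hw
    subst hw
    exact ⟨hi, rfl⟩
  have hsum : ∑ M ∈ (MMset A i (sp A i)).toFinite.toFinset, betaBar A i (sp A i) M
      = ∏ w ∈ Wset A \ {sp A i}, dd A w := by
    rw [MMset_pend_supp hD hSC hn hi, ← core_sum hD hSC hn _ hsub (fun _ => i) hc₀]
    apply Finset.sum_congr rfl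
    intro M _
    rw [betaBar, hch]
    refine Finset.prod_congr (Finset.filter_congr ?_) (fun _ _ => rfl)
    intro e _
    simp only [Finset.mem_singleton, forall_eq]
    show e ∉ [s(i, sp A i)] ↔ _
    rw [List.mem_singleton, show s(i, sp A i) = s(sp A i, i) from Sym2.eq_swap]
  rw [mu, hsum, beta, if_pos hMM, hch]
  simp [pathProd]

lemma mu_supp_pend {j : Fin n} (hj : Pendant (DA A) j) :
    mu A (sp A j) j = A (sp A j) j * ∏ w ∈ Wset A \ {sp A j}, dd A w := by
  obtain ⟨M₀, hM₀, hmem₀⟩ := exists_max_with1 hD hSC hn hj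
  have hbtw := isChainBtw_pair (adjd_symm (sp_adj hj))
  have halt : IsAltChain M₀ [sp A j, j] := isAlt_pair hmem₀
  have hMM : MaxMatchable A (sp A j) j := ⟨M₀, hM₀, [sp A j, j], hbtw, halt⟩
  have hch := theChain_supp_pend hD hSC hn hj
  have hsub : ({sp A j} : Finset (Fin n)) ⊆ Wset A := by
    simp [mem_Wset, sp_not_pendant hD hSC hn hj]
  have hc₀ : ∀ w ∈ ({sp A j} : Finset (Fin n)),
      Pendant (DA A) ((fun _ => j) w) ∧ sp A ((fun _ => j) w) = w := by
    intro w hw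
    rw [Finset.mem_singleton] at hw
    subst hw
    exact ⟨hj, rfl⟩
  have hsum : ∑ M ∈ (MMset A (sp A j) j).toFinite.toFinset, betaBar A (sp A j) j M
      = ∏ w ∈ Wset A \ {sp A j}, dd A w := by
    rw [MMset_supp_pend hD hSC hn hj, ← core_sum hD hSC hn _ hsub (fun _ => j) hc₀]
    apply Finset.sum_congr rfl
    intro M _
    rw [betaBar, hch]
    refine Finset.prod_congr (Finset.filter_congr ?_) (fun _ _ => rfl)
    intro e _
    simp only [Finset.mem_singleton, forall_eq]
    show e ∉ [s(sp A j, j)] ↔ _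
    rw [List.mem_singleton]
  rw [mu, hsum, beta, if_pos hMM, hch]
  simp [pathProd]

lemma mu_pends {i j : Fin n} (hi : Pendant (DA A) i) (hj : Pendant (DA A) j)
    (hij : i ≠ j) (hss : sp A i ≠ sp A j) (hadjA : A (sp A i) (sp A j) ≠ 0) :
    mu A i j = -(A i (sp A i) * A (sp A i) (sp A j) * A (sp A j) j)
      * ∏ w ∈ Wset A \ {sp A i, sp A j}, dd A w := by
  obtain ⟨M₀, hM₀, hm1, hm2⟩ := exists_max_with2 hD hSC hn hi hj hss
  have hbtw := isChainBtw_four hD hSC hn hi hj hij hss hadjA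
  have halt := isAlt_four hD hSC hn hi hj hM₀ hm1 hm2
  have hMM : MaxMatchable A i j := ⟨M₀, hM₀, _, hbtw, halt⟩
  have hch := theChain_pends hD hSC hn hi hj hij hss hadjA
  have hsub : ({sp A i, sp A j} : Finset (Fin n)) ⊆ Wset A := by
    intro w hw
    rcases Finset.mem_insert.mp hw with rfl | hw
    · exact mem_Wset.mpr (sp_not_pendant hD hSC hn hi)
    · rw [Finset.mem_singleton] at hw
      subst hw
      exact mem_Wset.mpr (sp_not_pendant hD hSC hn hj)
  have hc₀ : ∀ w ∈ ({sp A i, sp A j} : Finset (Fin n)),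
      Pendant (DA A) (if w = sp A i then i else j) ∧ sp A (if w = sp A i then i else j) = w := by
    intro w hw
    rcases Finset.mem_insert.mp hw with rfl | hw
    · rw [if_pos rfl]
      exact ⟨hi, rfl⟩
    · rw [Finset.mem_singleton] at hw
      subst hw
      rw [if_neg (Ne.symm hss)]
      exact ⟨hj, rfl⟩
  have hsum : ∑ M ∈ (MMset A i j).toFinite.toFinset, betaBar A i j M
      = ∏ w ∈ Wset A \ {sp A i, sp A j}, dd A w := by
    rw [MMset_pends hD hSC hn hi hj hij hss hadjA,
      ← core_sum hD hSC hn _ hsub (fun w => if w = sp A i then i else j) hc₀]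
    apply Finset.sum_congr rfl
    intro M hM
    rw [Finset.mem_filter] at hM
    have hMmax := mem_maxMatchings.mp hM.1
    rw [betaBar, hch]
    refine Finset.prod_congr (Finset.filter_congr ?_) (fun _ _ => rfl)
    intro e he
    have hite1 : (if sp A i = sp A i then i else j) = i := if_pos rfl
    have hite2 : (if sp A j = sp A i then i else j) = j := if_neg (Ne.symm hss)
    have hmid : e ≠ s(sp A i, sp A j) := fun heq =>
      notMem_matching_nonpendant hD hSC hn hMmax (sp_not_pendant hD hSC hn hi)
        (sp_not_pendant hD hSC hn hj) (heq ▸ he)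
    show e ∉ [s(i, sp A i), s(sp A i, sp A j), s(sp A j, j)] ↔ _
    rw [List.mem_cons, List.mem_cons, List.mem_singleton]
    constructor
    · intro h w hw
      rcases Finset.mem_insert.mp hw with rfl | hw
      · rw [hite1]
        intro heq
        exact h (Or.inl (heq.trans Sym2.eq_swap))
      · rw [Finset.mem_singleton] at hw
        subst hw
        rw [hite2]
        intro heq
        exact h (Or.inr (Or.inr heq))
    · intro h
      rintro (heq | heq | heq)
      · have hne := h (sp A i) (Finset.mem_insert_self _ _)
        rw [hite1] at hne
        exact hne (heq.trans Sym2.eq_swap)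
      · exact hmid heq
      · have hne := h (sp A j) (Finset.mem_insert_of_mem (Finset.mem_singleton_self _))
        rw [hite2] at hne
        exact hne heq
  rw [mu, hsum, beta, if_pos hMM, hch]
  have hplen : (([i, sp A i, sp A j, j] : List (Fin n)).length - 2) / 2 = 1 := by simp
  have hpp : pathProd A [i, sp A i, sp A j, j]
      = A i (sp A i) * (A (sp A i) (sp A j) * (A (sp A j) j * 1)) := rfl
  rw [hplen, hpp]
  ring

end MuFinal

end ClassDProof
namespace ClassDProof

section Inverse

variable {n : ℕ} (A : Matrix (Fin n) (Fin n) ℝ)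

/-- the candidate group inverse -/
noncomputable def XX : Matrix (Fin n) (Fin n) ℝ := fun i j =>
  if Pendant (DA A) i then
    (if Pendant (DA A) j then
      -(A i (sp A i) * A (sp A i) (sp A j) * A (sp A j) j) / (dd A (sp A i) * dd A (sp A j))
    else A i j / dd A j)
  else
    (if Pendant (DA A) j then A i j / dd A i else 0)

/-- the projection `A * XX = XX * A` -/
noncomputable def EE : Matrix (Fin n) (Fin n) ℝ := fun i k =>
  if Pendant (DA A) k then
    (if Pendant (DA A) i then A i (sp A i) * A (sp A i) k / dd A (sp A i) else 0)
  else (if i = k then 1 else 0)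

variable {A}

variable (hD : InClassD (DA A)) (hSC : StronglyConnected (DA A)) (hn : 3 ≤ n)
    (hΔ : Delta A ≠ 0)
include hD

lemma eq_sp_of_ne {j k : Fin n} (hj : Pendant (DA A) j) (h : A j k ≠ 0) : k = sp A j :=
  sp_eq hj (adj_of_mem hD h)

lemma eq_sp_of_ne' {j k : Fin n} (hj : Pendant (DA A) j) (h : A k j ≠ 0) : k = sp A j :=
  sp_eq hj (adjd_symm (adj_of_mem hD h))

include hSC hn in
lemma pend_pend_zero {p q : Fin n} (hp : Pendant (DA A) p) (hq : Pendant (DA A) q) :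
    A p q = 0 := by
  by_cases hpq : p = q
  · subst hpq; exact hdiag hD p
  · by_contra h
    exact (sp_not_pendant hD hSC hn hp) ((eq_sp_of_ne hD hp h) ▸ hq)

include hSC hn in
lemma K2' (w w' : Fin n) : ∑ p ∈ Fset A, A w p * A p w' = if w = w' then dd A w else 0 := by
  by_cases hww : w = w'
  · subst hww
    rw [if_pos rfl, dd]
  · rw [if_neg hww]
    apply Finset.sum_eq_zero
    intro p hp
    have hpend := mem_Fset.mp hp
    by_cases h1 : A p w' = 0
    · rw [h1, mul_zero]
    · by_cases h2 : A w p = 0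
      · rw [h2, zero_mul]
      · exact absurd ((eq_sp_of_ne' hD hpend h2).trans (eq_sp_of_ne hD hpend h1).symm) hww

omit hD in
lemma sum_split (f : Fin n → ℝ) : ∑ j, f j = ∑ j ∈ Fset A, f j + ∑ j ∈ Wset A, f j :=
  (Finset.sum_filter_add_sum_filter_not Finset.univ _ f).symm

include hSC hn hΔ in
lemma AX_eq : A * XX A = EE A := by
  ext i k
  rw [Matrix.mul_apply, sum_split]
  by_cases hk : Pendant (DA A) k
  · have hspk : ¬ Pendant (DA A) (sp A k) := sp_not_pendant hD hSC hn hk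
    have hWsum : ∑ j ∈ Wset A, A i j * XX A j k
        = A i (sp A k) * (A (sp A k) k / dd A (sp A k)) := by
      rw [Finset.sum_eq_single_of_mem (sp A k) (mem_Wset.mpr hspk)]
      · simp only [XX, if_neg hspk, if_pos hk]
      · intro j hj hne
        simp only [XX, if_neg (mem_Wset.mp hj), if_pos hk,
          pend_zero' hD hk hne, zero_div, mul_zero]
    by_cases hi : Pendant (DA A) i
    · have hF : ∑ j ∈ Fset A, A i j * XX A j k = 0 :=
        Finset.sum_eq_zero fun j hj => by
          rw [pend_pend_zero hD hSC hn hi (mem_Fset.mp hj), zero_mul]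
      rw [hF, hWsum, zero_add]
      simp only [EE, if_pos hk, if_pos hi]
      by_cases hsps : sp A k = sp A i
      · rw [hsps, mul_div_assoc]
      · rw [pend_zero hD hi hsps, pend_zero' hD hk (fun h => hsps h.symm)]
        simp
    · have hiW : i ∈ Wset A := mem_Wset.mpr hi
      have hdi : dd A i ≠ 0 := dd_ne hD hSC hn hΔ hiW
      have hdsk : dd A (sp A k) ≠ 0 := dd_ne hD hSC hn hΔ (mem_Wset.mpr hspk)
      have hF : ∑ j ∈ Fset A, A i j * XX A j k
          = dd A i * (-(A i (sp A k) * A (sp A k) k) / (dd A i * dd A (sp A k))) := by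
        have : ∀ j ∈ Fset A, A i j * XX A j k
            = (A i j * A j i) * (-(A i (sp A k) * A (sp A k) k) / (dd A i * dd A (sp A k))) := by
          intro j hj
          have hjp := mem_Fset.mp hj
          simp only [XX, if_pos hjp, if_pos hk]
          by_cases hij : A i j = 0
          · rw [hij, zero_mul, zero_mul, zero_mul]
          · have hsj : i = sp A j := eq_sp_of_ne' hD hjp hij
            rw [← hsj]
            ring
        rw [Finset.sum_congr rfl this, ← Finset.sum_mul, dd]
      rw [hF, hWsum]
      simp only [EE, if_pos hk, if_neg hi]
      field_simp
      ring
  · have hW : ∑ j ∈ Wset A, A i j * XX A j k = 0 :=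
      Finset.sum_eq_zero fun j hj => by
        simp only [XX, if_neg (mem_Wset.mp hj), if_neg hk, mul_zero]
    have hF : ∑ j ∈ Fset A, A i j * XX A j k = (if i = k then dd A i else 0) / dd A k := by
      have : ∀ j ∈ Fset A, A i j * XX A j k = A i j * A j k / dd A k := by
        intro j hj
        simp only [XX, if_pos (mem_Fset.mp hj), if_neg hk]
        ring
      rw [Finset.sum_congr rfl this, ← Finset.sum_div, K2' hD hSC hn]
    rw [hF, hW, add_zero]
    simp only [EE, if_neg hk]
    by_cases hik : i = k
    · subst hik
      rw [if_pos rfl, if_pos rfl, div_self (dd_ne hD hSC hn hΔ (mem_Wset.mpr hk))]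
    · rw [if_neg hik, if_neg hik, zero_div]

end Inverse

end ClassDProof
namespace ClassDProof

section Inverse2

variable {n : ℕ} {A : Matrix (Fin n) (Fin n) ℝ}

variable (hD : InClassD (DA A)) (hSC : StronglyConnected (DA A)) (hn : 3 ≤ n)
    (hΔ : Delta A ≠ 0)
include hD hSC hn

include hΔ in
lemma XA_eq : XX A * A = EE A := by
  ext i k
  rw [Matrix.mul_apply, sum_split]
  by_cases hi : Pendant (DA A) i
  · have hspi : ¬ Pendant (DA A) (sp A i) := sp_not_pendant hD hSC hn hi
    have hdsi : dd A (sp A i) ≠ 0 := dd_ne hD hSC hn hΔ (mem_Wset.mpr hspi)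
    have hWsum : ∑ j ∈ Wset A, XX A i j * A j k
        = (A i (sp A i) / dd A (sp A i)) * A (sp A i) k := by
      rw [Finset.sum_eq_single_of_mem (sp A i) (mem_Wset.mpr hspi)]
      · simp only [XX, if_pos hi, if_neg hspi]
      · intro j hj hne
        simp only [XX, if_pos hi, if_neg (mem_Wset.mp hj)]
        rw [pend_zero hD hi hne, zero_div, zero_mul]
    by_cases hk : Pendant (DA A) k
    · have hF : ∑ j ∈ Fset A, XX A i j * A j k = 0 :=
        Finset.sum_eq_zero fun j hj => by
          rw [pend_pend_zero hD hSC hn (mem_Fset.mp hj) hk, mul_zero]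
      rw [hF, hWsum, zero_add]
      simp only [EE, if_pos hk, if_pos hi]
      ring
    · have hdk : dd A k ≠ 0 := dd_ne hD hSC hn hΔ (mem_Wset.mpr hk)
      have hF : ∑ j ∈ Fset A, XX A i j * A j k
          = dd A k * (-(A i (sp A i) * A (sp A i) k) / (dd A (sp A i) * dd A k)) := by
        have hterm : ∀ j ∈ Fset A, XX A i j * A j k
            = (A k j * A j k) * (-(A i (sp A i) * A (sp A i) k) / (dd A (sp A i) * dd A k)) := by
          intro j hj
          have hjp := mem_Fset.mp hj
          simp only [XX, if_pos hi, if_pos hjp]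
          by_cases hjk : A j k = 0
          · have hkj : A k j = 0 := by
              by_contra h
              exact (hsym hD h) hjk
            rw [hjk, hkj, mul_zero, zero_mul, zero_mul]
          · have hsj : k = sp A j := eq_sp_of_ne hD hjp hjk
            rw [← hsj]
            ring
        rw [Finset.sum_congr rfl hterm, ← Finset.sum_mul]
        rw [show ∑ j ∈ Fset A, A k j * A j k = dd A k from rfl, mul_comm]
      rw [hF, hWsum]
      simp only [EE, if_neg hk, if_neg (show i ≠ k from fun h => hk (h ▸ hi))]
      field_simp
      ring
  · have hiW : i ∈ Wset A := mem_Wset.mpr hi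
    have hW0 : ∑ j ∈ Wset A, XX A i j * A j k = 0 :=
      Finset.sum_eq_zero fun j hj => by
        simp only [XX, if_neg hi, if_neg (mem_Wset.mp hj), zero_mul]
    have hF : ∑ j ∈ Fset A, XX A i j * A j k = (if i = k then dd A i else 0) / dd A i := by
      have hterm : ∀ j ∈ Fset A, XX A i j * A j k = A i j * A j k / dd A i := by
        intro j hj
        simp only [XX, if_neg hi, if_pos (mem_Fset.mp hj)]
        ring
      rw [Finset.sum_congr rfl hterm, ← Finset.sum_div, K2' hD hSC hn]
    rw [hF, hW0, add_zero]
    by_cases hik : i = k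
    · subst hik
      rw [if_pos rfl, div_self (dd_ne hD hSC hn hΔ hiW)]
      simp only [EE]
      rw [if_neg hi, if_pos trivial]
    · rw [if_neg hik, zero_div]
      by_cases hk : Pendant (DA A) k
      · simp only [EE, if_pos hk, if_neg hi]
      · simp only [EE, if_neg hk, if_neg hik]

include hΔ in
lemma EA_eq : EE A * A = A := by
  ext i k
  rw [Matrix.mul_apply, sum_split]
  by_cases hi : Pendant (DA A) i
  · have hspi : ¬ Pendant (DA A) (sp A i) := sp_not_pendant hD hSC hn hi
    have hdsi : dd A (sp A i) ≠ 0 := dd_ne hD hSC hn hΔ (mem_Wset.mpr hspi)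
    have hW : ∑ j ∈ Wset A, EE A i j * A j k = 0 :=
      Finset.sum_eq_zero fun j hj => by
        simp only [EE, if_neg (mem_Wset.mp hj),
          if_neg (show i ≠ j from fun h => (mem_Wset.mp hj) (h ▸ hi)), zero_mul]
    have hF : ∑ j ∈ Fset A, EE A i j * A j k
        = (∑ j ∈ Fset A, A (sp A i) j * A j k) * (A i (sp A i) / dd A (sp A i)) := by
      rw [Finset.sum_mul]
      apply Finset.sum_congr rfl
      intro j hj
      simp only [EE, if_pos (mem_Fset.mp hj), if_pos hi]
      ring
    rw [hF, hW, add_zero, K2' hD hSC hn]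
    by_cases hsik : sp A i = k
    · rw [if_pos hsik, ← hsik]
      field_simp
    · rw [if_neg hsik, zero_mul, pend_zero hD hi (fun h => hsik h.symm)]
  · have hF0 : ∑ j ∈ Fset A, EE A i j * A j k = 0 :=
      Finset.sum_eq_zero fun j hj => by
        simp only [EE, if_pos (mem_Fset.mp hj), if_neg hi, zero_mul]
    have hW : ∑ j ∈ Wset A, EE A i j * A j k = A i k := by
      rw [Finset.sum_eq_single_of_mem i (mem_Wset.mpr hi)]
      · simp only [EE]
        rw [if_neg hi, if_pos trivial, one_mul]
      · intro j hj hne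
        simp only [EE]
        rw [if_neg (mem_Wset.mp hj), if_neg (show ¬ i = j from fun h => hne h.symm), zero_mul]
    rw [hF0, hW, zero_add]

include hΔ in
lemma EX_eq : EE A * XX A = XX A := by
  ext i k
  rw [Matrix.mul_apply, sum_split]
  by_cases hi : Pendant (DA A) i
  · have hspi : ¬ Pendant (DA A) (sp A i) := sp_not_pendant hD hSC hn hi
    have hdsi : dd A (sp A i) ≠ 0 := dd_ne hD hSC hn hΔ (mem_Wset.mpr hspi)
    have hW0 : ∑ j ∈ Wset A, EE A i j * XX A j k = 0 :=
      Finset.sum_eq_zero fun j hj => by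
        simp only [EE, if_neg (mem_Wset.mp hj),
          if_neg (show i ≠ j from fun h => (mem_Wset.mp hj) (h ▸ hi)), zero_mul]
    by_cases hk : Pendant (DA A) k
    · have hspk : ¬ Pendant (DA A) (sp A k) := sp_not_pendant hD hSC hn hk
      have hdsk : dd A (sp A k) ≠ 0 := dd_ne hD hSC hn hΔ (mem_Wset.mpr hspk)
      have hF : ∑ j ∈ Fset A, EE A i j * XX A j k
          = dd A (sp A i) * (-(A i (sp A i) * A (sp A i) (sp A k) * A (sp A k) k)
              / (dd A (sp A i) * (dd A (sp A i) * dd A (sp A k)))) := by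
        have hterm : ∀ j ∈ Fset A, EE A i j * XX A j k
            = (A (sp A i) j * A j (sp A i)) * (-(A i (sp A i) * A (sp A i) (sp A k) * A (sp A k) k)
                / (dd A (sp A i) * (dd A (sp A i) * dd A (sp A k)))) := by
          intro j hj
          have hjp := mem_Fset.mp hj
          simp only [EE, XX, if_pos hjp, if_pos hi, if_pos hk]
          by_cases hsij : A (sp A i) j = 0
          · rw [hsij, zero_mul, mul_zero, zero_div, zero_mul, zero_mul]
          · have hsj : sp A i = sp A j := eq_sp_of_ne' hD hjp hsij
            rw [← hsj]
            ring
        rw [Finset.sum_congr rfl hterm, ← Finset.sum_mul,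
          show ∑ j ∈ Fset A, A (sp A i) j * A j (sp A i) = dd A (sp A i) from rfl]
      rw [hF, hW0, add_zero]
      simp only [XX, if_pos hi, if_pos hk]
      field_simp
    · have hdk : dd A k ≠ 0 := dd_ne hD hSC hn hΔ (mem_Wset.mpr hk)
      have hF : ∑ j ∈ Fset A, EE A i j * XX A j k
          = (if sp A i = k then dd A (sp A i) else 0)
              * (A i (sp A i) / (dd A (sp A i) * dd A k)) := by
        have hterm : ∀ j ∈ Fset A, EE A i j * XX A j k
            = (A (sp A i) j * A j k) * (A i (sp A i) / (dd A (sp A i) * dd A k)) := by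
          intro j hj
          have hjp := mem_Fset.mp hj
          simp only [EE, XX, if_pos hjp, if_pos hi, if_neg hk]
          ring
        rw [Finset.sum_congr rfl hterm, ← Finset.sum_mul, K2' hD hSC hn]
      rw [hF, hW0, add_zero]
      simp only [XX, if_pos hi, if_neg hk]
      by_cases hsik : sp A i = k
      · rw [if_pos hsik, ← hsik]
        field_simp
      · rw [if_neg hsik, pend_zero hD hi (fun h => hsik h.symm), zero_mul, zero_div]
  · have hF0 : ∑ j ∈ Fset A, EE A i j * XX A j k = 0 :=
      Finset.sum_eq_zero fun j hj => by
        simp only [EE, if_pos (mem_Fset.mp hj), if_neg hi, zero_mul]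
    have hW : ∑ j ∈ Wset A, EE A i j * XX A j k = XX A i k := by
      rw [Finset.sum_eq_single_of_mem i (mem_Wset.mpr hi)]
      · simp only [EE]
        rw [if_neg hi, if_pos trivial, one_mul]
      · intro j hj hne
        simp only [EE]
        rw [if_neg (mem_Wset.mp hj), if_neg (show ¬ i = j from fun h => hne h.symm), zero_mul]
    rw [hF0, hW, zero_add]

end Inverse2

end ClassDProof
namespace ClassDProof

section MainGe3

variable {n : ℕ} {A : Matrix (Fin n) (Fin n) ℝ}

variable (hD : InClassD (DA A)) (hSC : StronglyConnected (DA A)) (hn : 3 ≤ n)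
    (hΔ : Delta A ≠ 0)
include hD hSC hn hΔ

lemma delta_split1 {w : Fin n} (hw : w ∈ Wset A) :
    Delta A = (∏ x ∈ Wset A \ {w}, dd A x) * dd A w := by
  rw [delta_eq hD hSC hn, ← Finset.prod_sdiff (Finset.singleton_subset_iff.mpr hw),
    Finset.prod_singleton]

lemma prod_sdiff_ne_zero {T : Finset (Fin n)} :
    ∏ x ∈ Wset A \ T, dd A x ≠ 0 := by
  rw [Finset.prod_ne_zero_iff]
  intro x hx
  exact dd_ne hD hSC hn hΔ (Finset.mem_sdiff.mp hx).1

lemma XX_eq_mu (i j : Fin n) : XX A i j = mu A i j / Delta A := by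
  by_cases hi : Pendant (DA A) i
  · by_cases hj : Pendant (DA A) j
    · -- both pendant
      simp only [XX, if_pos hi, if_pos hj]
      by_cases hij : i = j
      · subst hij
        rw [mu_eq_zero_of_not_matchable (not_matchable_self hD hSC hn), zero_div,
          hdiag hD (sp A i)]
        ring
      · by_cases hss : sp A i = sp A j
        · rw [mu_eq_zero_of_not_matchable (not_matchable_pends hD hSC hn hi hj (Or.inl hss)),
            zero_div, hss, hdiag hD (sp A j)]
          ring
        · by_cases hadjA : A (sp A i) (sp A j) = 0
          · rw [mu_eq_zero_of_not_matchable
              (not_matchable_pends hD hSC hn hi hj (Or.inr hadjA)), zero_div, hadjA]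
            ring
          · rw [mu_pends hD hSC hn hi hj hij hss hadjA]
            have hsub : ({sp A i, sp A j} : Finset (Fin n)) ⊆ Wset A := by
              intro w hw
              rcases Finset.mem_insert.mp hw with rfl | hw
              · exact mem_Wset.mpr (sp_not_pendant hD hSC hn hi)
              · rw [Finset.mem_singleton] at hw
                subst hw
                exact mem_Wset.mpr (sp_not_pendant hD hSC hn hj)
            have hΔ2 : Delta A = (∏ x ∈ Wset A \ {sp A i, sp A j}, dd A x)
                * (dd A (sp A i) * dd A (sp A j)) := by
              rw [delta_eq hD hSC hn, ← Finset.prod_sdiff hsub, Finset.prod_pair hss]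
            rw [hΔ2, mul_comm (-(A i (sp A i) * A (sp A i) (sp A j) * A (sp A j) j))]
            rw [mul_div_mul_left _ _ (prod_sdiff_ne_zero hD hSC hn hΔ)]
    · -- i pendant, j not
      simp only [XX, if_pos hi, if_neg hj]
      by_cases hjs : j = sp A i
      · subst hjs
        rw [mu_pend_supp hD hSC hn hi,
          delta_split1 hD hSC hn hΔ (mem_Wset.mpr (sp_not_pendant hD hSC hn hi)),
          mul_comm (A i (sp A i)), mul_div_mul_left _ _ (prod_sdiff_ne_zero hD hSC hn hΔ)]
      · rw [mu_eq_zero_of_not_matchable (not_matchable_pend_nonsupp hD hSC hn hi hj hjs),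
          zero_div, pend_zero hD hi hjs, zero_div]
  · by_cases hj : Pendant (DA A) j
    · -- j pendant, i not
      simp only [XX, if_neg hi, if_pos hj]
      by_cases his : i = sp A j
      · subst his
        rw [mu_supp_pend hD hSC hn hj,
          delta_split1 hD hSC hn hΔ (mem_Wset.mpr (sp_not_pendant hD hSC hn hj)),
          mul_comm (A (sp A j) j), mul_div_mul_left _ _ (prod_sdiff_ne_zero hD hSC hn hΔ)]
      · rw [mu_eq_zero_of_not_matchable (not_matchable_nonsupp_pend hD hSC hn hi hj his),
          zero_div, pend_zero' hD hj his, zero_div]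
    · simp only [XX, if_neg hi, if_neg hj]
      rw [mu_eq_zero_of_not_matchable (not_matchable_nonpends hD hSC hn hi hj), zero_div]

theorem result_ge3 :
    (∃ X, IsGroupInverse A X) ∧
      ∀ X, IsGroupInverse A X → ∀ i j, X i j = mu A i j / Delta A := by
  have hGI : IsGroupInverse A (XX A) := by
    refine ⟨?_, ?_, ?_⟩
    · rw [AX_eq hD hSC hn hΔ, EA_eq hD hSC hn hΔ]
    · rw [XA_eq hD hSC hn hΔ, EX_eq hD hSC hn hΔ]
    · rw [AX_eq hD hSC hn hΔ, XA_eq hD hSC hn hΔ]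
  exact ⟨⟨XX A, hGI⟩, fun Y hY i j => by
    rw [gi_unique A Y (XX A) hY hGI, XX_eq_mu hD hSC hn hΔ]⟩

end MainGe3

end ClassDProof
namespace ClassDProof

lemma not_matchable_diag {n : ℕ} {A : Matrix (Fin n) (Fin n) ℝ} {i : Fin n} :
    ¬ MaxMatchable A i i := by
  rintro ⟨M, -, c, ⟨⟨hnd, hlen, -⟩, hh, hl⟩, -⟩
  match c, hnd, hlen, hh, hl with
  | a :: b :: l, hnd, hlen, hh, hl =>
    have ha : a = i := by simpa using hh
    rw [List.getLast?_cons_cons] at hl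
    have hmem : i ∈ b :: l := List.mem_of_getLast? hl
    rw [List.nodup_cons] at hnd
    exact hnd.1 (ha ▸ hmem)

section TwoCase

variable {A : Matrix (Fin 2) (Fin 2) ℝ}
variable (hD : InClassD (DA A)) (hSC : StronglyConnected (DA A)) (hΔ : Delta A ≠ 0)
include hD hSC

lemma a01_ne : A 0 1 ≠ 0 := by
  rcases (hSC 0 1).cases_head with h | ⟨c, hc, -⟩
  · exact absurd h (by decide)
  · have hc0 : c ≠ 0 := by
      intro h
      subst h
      exact hD.1.1 0 hc
    have hc1 : c = 1 := by omega
    subst hc1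
    exact hc

lemma a10_ne : A 1 0 ≠ 0 := hsym hD (a01_ne hD hSC)

lemma adj_n2 {i j : Fin 2} (hij : i ≠ j) : Adjd (DA A) i j := by
  fin_cases i <;> fin_cases j
  · exact absurd rfl hij
  · exact ⟨hij, a01_ne hD hSC, a10_ne hD hSC⟩
  · exact ⟨hij, a10_ne hD hSC, a01_ne hD hSC⟩
  · exact absurd rfl hij

omit hD hSC in
lemma sym2_n2 {i j : Fin 2} (hij : i ≠ j) : s(i, j) = s(0, 1) := by
  fin_cases i <;> fin_cases j
  · exact absurd rfl hij
  · rfl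
  · exact Sym2.eq_swap
  · exact absurd rfl hij

lemma mem_M0_n2 {i j : Fin 2} (hij : i ≠ j) :
    s(i, j) ∈ ({s((0 : Fin 2), (1 : Fin 2))} : Finset (Sym2 (Fin 2))) := by
  rw [Finset.mem_singleton, sym2_n2 hij]

lemma matching_M0_n2 : IsMatching (DA A) {s(0, 1)} := by
  constructor
  · intro e he
    rw [Finset.mem_singleton] at he
    exact ⟨0, 1, he, adj_n2 hD hSC (by decide)⟩
  · intro e he f hf hef
    rw [Finset.mem_singleton] at he hf
    exact absurd (he.trans hf.symm) hef

lemma matching_subset_n2 {M : Finset (Sym2 (Fin 2))} (hM : IsMatching (DA A) M) :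
    M ⊆ {s(0, 1)} := by
  intro e he
  obtain ⟨i, j, rfl, hadj⟩ := hM.1 e he
  exact mem_M0_n2 hD hSC hadj.1

lemma max_eq_n2 {M : Finset (Sym2 (Fin 2))} (hM : IsMaxMatching (DA A) M) :
    M = {s(0, 1)} := by
  apply Finset.eq_of_subset_of_card_le (matching_subset_n2 hD hSC hM.1)
  have := hM.2 _ (matching_M0_n2 hD hSC)
  simpa using this

lemma maxMatchings_n2 : maxMatchings A = {{s(0, 1)}} := by
  ext M
  rw [mem_maxMatchings, Finset.mem_singleton]
  constructor
  · exact max_eq_n2 hD hSC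
  · rintro rfl
    refine ⟨matching_M0_n2 hD hSC, fun M' hM' => ?_⟩
    have := Finset.card_le_card (matching_subset_n2 hD hSC hM')
    simpa using this

lemma max_M0_n2 : IsMaxMatching (DA A) {s(0, 1)} :=
  mem_maxMatchings.mp (by rw [maxMatchings_n2 hD hSC]; exact Finset.mem_singleton_self _)

lemma delta_n2 : Delta A = A 0 1 * A 1 0 := by
  rw [Delta, maxMatchings_n2 hD hSC, Finset.sum_singleton, matchProd, Finset.prod_singleton,
    cycProd_mk]

omit hD hSC in
lemma chainBtw_n2 {i j : Fin 2} {c : List (Fin 2)} (h : IsCycleChainBtw (DA A) i j c) :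
    c = [i, j] := by
  obtain ⟨⟨hnd, hlen, -⟩, hh, hl⟩ := h
  have hle : c.length ≤ 2 := by simpa using hnd.length_le_card
  obtain ⟨x, y, rfl⟩ := List.length_eq_two.mp (le_antisymm hle hlen)
  have hx : x = i := by simpa using hh
  have hy : y = j := by simpa using hl
  rw [hx, hy]

lemma matchable_n2 {i j : Fin 2} (hij : i ≠ j) : MaxMatchable A i j :=
  ⟨{s(0, 1)}, max_M0_n2 hD hSC, [i, j], isChainBtw_pair (adj_n2 hD hSC hij),
    isAlt_pair (mem_M0_n2 hD hSC hij)⟩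

lemma theChain_n2 {i j : Fin 2} (hij : i ≠ j) : theChain A i j = [i, j] := by
  have hbtw := isChainBtw_pair (adj_n2 hD hSC hij)
  have halt : IsAltChain {s(0, 1)} [i, j] := isAlt_pair (mem_M0_n2 hD hSC hij)
  have hex : ∃ c, IsCycleChainBtw (DA A) i j c ∧ ∃ M' ∈ MMset A i j, IsAltChain M' c :=
    ⟨[i, j], hbtw, {s(0, 1)}, ⟨max_M0_n2 hD hSC, [i, j], hbtw, halt⟩, halt⟩
  rw [theChain, dif_pos hex]
  exact chainBtw_n2 hex.choose_spec.1

lemma MMset_n2 {i j : Fin 2} (hij : i ≠ j) :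
    (MMset A i j).toFinite.toFinset = {{s(0, 1)}} := by
  ext M
  rw [Set.Finite.mem_toFinset, Finset.mem_singleton]
  constructor
  · rintro ⟨hM, -⟩
    exact max_eq_n2 hD hSC hM
  · rintro rfl
    exact ⟨max_M0_n2 hD hSC, [i, j], isChainBtw_pair (adj_n2 hD hSC hij),
      isAlt_pair (mem_M0_n2 hD hSC hij)⟩

lemma mu_n2 {i j : Fin 2} (hij : i ≠ j) : mu A i j = A i j := by
  rw [mu, MMset_n2 hD hSC hij, Finset.sum_singleton, beta, if_pos (matchable_n2 hD hSC hij),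
    theChain_n2 hD hSC hij, betaBar, theChain_n2 hD hSC hij]
  have hfilt : ({s((0 : Fin 2), (1 : Fin 2))} : Finset (Sym2 (Fin 2))).filter
      (fun e => e ∉ chainEdges [i, j]) = ∅ := by
    apply Finset.filter_false_of_mem
    intro e he
    rw [Finset.mem_singleton] at he
    subst he
    show ¬ s(0, 1) ∉ [s(i, j)]
    rw [sym2_n2 hij]
    simp
  rw [hfilt, Finset.prod_empty]
  simp [pathProd]

/-- explicit inverse in the 2×2 case -/
noncomputable def X2 (A : Matrix (Fin 2) (Fin 2) ℝ) : Matrix (Fin 2) (Fin 2) ℝ :=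
  fun i j => if i = j then 0 else (A j i)⁻¹

lemma X2_mul : A * X2 A = 1 := by
  have h00 := not_not.mp (hD.1.1 0)
  have h11 := not_not.mp (hD.1.1 1)
  ext i j
  rw [Matrix.mul_apply, Fin.sum_univ_two]
  fin_cases i <;> fin_cases j <;>
    simp [X2, h00, h11, Matrix.one_apply, a01_ne hD hSC, a10_ne hD hSC]

lemma mul_X2 : X2 A * A = 1 := by
  have h00 := not_not.mp (hD.1.1 0)
  have h11 := not_not.mp (hD.1.1 1)
  ext i j
  rw [Matrix.mul_apply, Fin.sum_univ_two]
  fin_cases i <;> fin_cases j <;>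
    simp [X2, h00, h11, Matrix.one_apply, a01_ne hD hSC, a10_ne hD hSC]

lemma gi_X2 : IsGroupInverse A (X2 A) := by
  refine ⟨?_, ?_, ?_⟩
  · rw [X2_mul hD hSC, Matrix.one_mul]
  · rw [mul_X2 hD hSC, Matrix.one_mul]
  · rw [X2_mul hD hSC, mul_X2 hD hSC]

omit hD hSC in
lemma fin2_pair_cases : ∀ {i j : Fin 2}, i ≠ j → (i = 0 ∧ j = 1) ∨ (i = 1 ∧ j = 0) := by
  decide

omit hD hSC in
lemma X2_diag (i : Fin 2) : X2 A i i = 0 := if_pos rfl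

omit hD hSC in
lemma X2_off {i j : Fin 2} (hij : i ≠ j) : X2 A i j = (A j i)⁻¹ := if_neg hij

lemma X2_eq_mu (i j : Fin 2) : X2 A i j = mu A i j / Delta A := by
  have ha01 := a01_ne hD hSC
  have ha10 := a10_ne hD hSC
  by_cases hij : i = j
  · subst hij
    rw [X2_diag, mu_eq_zero_of_not_matchable not_matchable_diag, zero_div]
  · rw [X2_off hij, mu_n2 hD hSC hij, delta_n2 hD hSC]
    rcases fin2_pair_cases hij with ⟨rfl, rfl⟩ | ⟨rfl, rfl⟩
    · field_simp
    · field_simp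

theorem result_n2 :
    (∃ X, IsGroupInverse A X) ∧
      ∀ X, IsGroupInverse A X → ∀ i j, X i j = mu A i j / Delta A :=
  ⟨⟨X2 A, gi_X2 hD hSC⟩, fun Y hY i j => by
    rw [gi_unique A Y (X2 A) hY (gi_X2 hD hSC), X2_eq_mu hD hSC]⟩

end TwoCase

end ClassDProof
/-- Theorem (Nandi, Thm 1.3): if `D(A) ∈ 𝒟` is strongly connected and `Δ_A ≠ 0`, then the
group inverse `A^#` exists and its entries are `α_{ij} = μ_{ij}/Δ_A`. -/
theorem group_inverse_entries_of_classD {n : ℕ} (A : Matrix (Fin n) (Fin n) ℝ)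
    (hD : InClassD (DA A)) (hSC : StronglyConnected (DA A)) (hΔ : Delta A ≠ 0) :
    (∃ X, IsGroupInverse A X) ∧
      ∀ X, IsGroupInverse A X → ∀ i j, X i j = mu A i j / Delta A := by
  revert hD hSC hΔ
  revert A
  rcases n with _ | _ | _ | m
  · intro A hD hSC hΔ
    refine ⟨⟨A, ?_, ?_, ?_⟩, fun X hX i j => i.elim0⟩ <;> (ext i j; exact i.elim0)
  · intro A hD hSC hΔ
    exfalso
    have h0 : ¬ Pendant (DA A) 0 := by
      rintro ⟨j, hj, -⟩
      exact hj.1 (by omega)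
    obtain ⟨j, hadj, -⟩ := hD.2 0 h0
    exact hadj.1 (by omega)
  · intro A hD hSC hΔ
    exact ClassDProof.result_n2 hD hSC
  · intro A hD hSC hΔ
    exact ClassDProof.result_ge3 hD hSC (by omega) hΔ
end

section
/- Let A = (a_{ij}) be an n×n real matrix such that D(A) is a tree digraph belonging to the class 𝒟 and Δ_A ≠ 0. Then the group inverse A^# = (α_{ij}) exists and α_{ij} = μ_{ij}/Δ_A for all i, j. -/
open Matrix

/-! ### Auxiliary development -/

namespace GI

open Finset
open scoped Classical

section Basic

variable {n : ℕ} (A : Matrix (Fin n) (Fin n) ℝ)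

theorem adjd_symm {G : Fin n → Fin n → Prop} {i j : Fin n} (h : Adjd G i j) : Adjd G j i :=
  ⟨h.1.symm, h.2.2, h.2.1⟩

theorem cycProd_mk (a b : Fin n) : cycProd A s(a, b) = A a b * A b a := rfl

theorem cycProd_comm (a b : Fin n) : cycProd A s(a, b) = cycProd A s(b, a) := by
  rw [Sym2.eq_swap]

theorem diag_zero (hssd : IsSSD (DA A)) (i : Fin n) : A i i = 0 := by
  have := hssd.1 i
  simp only [DA, not_not] at this
  exact this

theorem adjd_of_ne_zero (hssd : IsSSD (DA A)) {i j : Fin n} (h : A i j ≠ 0) :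
    Adjd (DA A) i j := by
  refine ⟨?_, h, hssd.2 i j h⟩
  rintro rfl
  exact h (diag_zero A hssd i)

theorem ne_zero_of_adjd {i j : Fin n} (h : Adjd (DA A) i j) : A i j ≠ 0 := h.2.1

/-- The unique neighbour of a pendant vertex. -/
noncomputable def pw (i : Fin n) : Fin n :=
  if h : Pendant (DA A) i then h.choose else i

theorem pw_adjd {i : Fin n} (h : Pendant (DA A) i) : Adjd (DA A) i (pw A i) := by
  rw [pw, dif_pos h]
  exact h.choose_spec.1

theorem pw_eq {i x : Fin n} (h : Pendant (DA A) i) (hx : Adjd (DA A) i x) : x = pw A i := by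
  rw [pw, dif_pos h]
  exact h.choose_spec.2 x hx

theorem pw_ne {i : Fin n} (h : Pendant (DA A) i) : pw A i ≠ i := (pw_adjd A h).1.symm

/-- The nonpendant vertices, as a finset. -/
noncomputable def Nf : Finset (Fin n) := univ.filter (fun v => ¬ Pendant (DA A) v)

/-- The pendant neighbours of a vertex, as a finset. -/
noncomputable def PNf (v : Fin n) : Finset (Fin n) :=
  univ.filter (fun u => Adjd (DA A) v u ∧ Pendant (DA A) u)

theorem mem_Nf {v : Fin n} : v ∈ Nf A ↔ ¬ Pendant (DA A) v := by simp [Nf]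

theorem mem_PNf {v u : Fin n} : u ∈ PNf A v ↔ Adjd (DA A) v u ∧ Pendant (DA A) u := by
  simp [PNf]

/-- `S v`: sum of cycle products over the pendant neighbours of `v`. -/
noncomputable def S (v : Fin n) : ℝ := ∑ u ∈ PNf A v, A v u * A u v

end Basic

end GI

namespace GI

open Finset
open scoped Classical

section Matching

variable {n : ℕ} (A : Matrix (Fin n) (Fin n) ℝ)

theorem matching_eq_of_mem {G : Fin n → Fin n → Prop} {M : Finset (Sym2 (Fin n))}
    (hM : IsMatching G M) {e f : Sym2 (Fin n)} (he : e ∈ M) (hf : f ∈ M) {v : Fin n}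
    (hv : v ∈ e) (hv' : v ∈ f) : e = f := by
  by_contra hne
  exact hM.2 e he f hf hne v hv hv'

theorem pendant_nbr_unique {u v v' : Fin n} (hu : Pendant (DA A) u)
    (h1 : Adjd (DA A) u v) (h2 : Adjd (DA A) u v') : v = v' := by
  rw [pw_eq A hu h1, pw_eq A hu h2]

/-- A choice of nonpendant vertex of an unordered pair, when one exists. -/
noncomputable def npv (e : Sym2 (Fin n)) : Fin n :=
  if h : ∃ v ∈ e, ¬ Pendant (DA A) v then h.choose else e.out.1

theorem npv_spec {e : Sym2 (Fin n)} (h : ∃ v ∈ e, ¬ Pendant (DA A) v) :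
    npv A e ∈ e ∧ ¬ Pendant (DA A) (npv A e) := by
  rw [npv, dif_pos h]
  exact ⟨h.choose_spec.1, h.choose_spec.2⟩

variable (hLL : ∀ i j : Fin n, Pendant (DA A) i → Pendant (DA A) j → ¬ Adjd (DA A) i j)
include hLL

theorem edge_has_np {e : Sym2 (Fin n)} (he : IsEdge (DA A) e) :
    ∃ v ∈ e, ¬ Pendant (DA A) v := by
  obtain ⟨i, j, rfl, hij⟩ := he
  by_cases hi : Pendant (DA A) i
  · refine ⟨j, by simp [Sym2.mem_iff], fun hj => hLL i j hi hj hij⟩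
  · exact ⟨i, by simp [Sym2.mem_iff], hi⟩

/-- Any matching has at most `|Nf|` edges. -/
theorem matching_card_le {M : Finset (Sym2 (Fin n))} (hM : IsMatching (DA A) M) :
    M.card ≤ (Nf A).card := by
  refine card_le_card_of_injOn (npv A) (fun e he => ?_) (fun e he f hf hef => ?_)
  · rw [mem_coe, mem_Nf]
    exact (npv_spec A (edge_has_np A hLL (hM.1 e he))).2
  · simp only [mem_coe] at he hf
    exact matching_eq_of_mem hM he hf
      (npv_spec A (edge_has_np A hLL (hM.1 e he))).1
      (by rw [hef]; exact (npv_spec A (edge_has_np A hLL (hM.1 f hf))).1)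

omit hLL in
/-- The standard maximum matchings: choose a pendant neighbour for each nonpendant vertex. -/
theorem std_matching {k : Fin n → Fin n} (hk : ∀ v ∈ Nf A, k v ∈ PNf A v) :
    IsMatching (DA A) ((Nf A).image (fun v => s(v, k v))) ∧
      ((Nf A).image (fun v => s(v, k v))).card = (Nf A).card := by
  have hmem : ∀ v ∈ Nf A, ∀ x, x ∈ s(v, k v) → x = v ∨ (Pendant (DA A) (k v) ∧
      Adjd (DA A) v (k v) ∧ x = k v) := by
    intro v hv x hx
    rcases Sym2.mem_iff.1 hx with rfl | rfl
    · exact Or.inl rfl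
    · exact Or.inr ⟨((mem_PNf A).1 (hk v hv)).2, ((mem_PNf A).1 (hk v hv)).1, rfl⟩
  constructor
  · constructor
    · intro e he
      obtain ⟨v, hv, rfl⟩ := mem_image.1 he
      exact ⟨v, k v, rfl, ((mem_PNf A).1 (hk v hv)).1⟩
    · intro e he f hf hef x hxe hxf
      obtain ⟨v, hv, rfl⟩ := mem_image.1 he
      obtain ⟨v', hv', rfl⟩ := mem_image.1 hf
      have hvv' : v ≠ v' := by rintro rfl; exact hef rfl
      have hvp := (mem_Nf A).1 hv
      have hv'p := (mem_Nf A).1 hv'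
      rcases hmem v hv x hxe with h1 | ⟨hpkv, hadj, h1⟩ <;>
        rcases hmem v' hv' x hxf with h2 | ⟨hpkv', hadj', h2⟩
      · exact hvv' (h1.symm.trans h2)
      · exact hvp ((h1.symm.trans h2) ▸ hpkv')
      · exact hv'p ((h2.symm.trans h1) ▸ hpkv)
      · refine hvv' (pendant_nbr_unique A hpkv (adjd_symm hadj) ?_)
        rw [h1.symm.trans h2]
        exact adjd_symm hadj'
  · rw [card_image_of_injOn]
    intro v hv v' hv' h
    simp only [mem_coe] at hv hv'
    rcases Sym2.eq_iff.1 h with ⟨h1, _⟩ | ⟨h1, h2⟩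
    · exact h1
    · exact absurd (h1 ▸ ((mem_PNf A).1 (hk v' hv')).2) ((mem_Nf A).1 hv)

variable (hpn : ∀ v : Fin n, ¬ Pendant (DA A) v → (PNf A v).Nonempty)
include hpn

/-- A default choice of pendant neighbour. -/
noncomputable def k0 : Fin n → Fin n :=
  fun v => if h : (PNf A v).Nonempty then h.choose else v

omit hLL in
theorem k0_spec : ∀ v ∈ Nf A, k0 A v ∈ PNf A v := by
  intro v hv
  have h := hpn v ((mem_Nf A).1 hv)
  rw [k0, dif_pos h]
  exact h.choose_spec

theorem maxmatching_iff {M : Finset (Sym2 (Fin n))} :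
    IsMaxMatching (DA A) M ↔ IsMatching (DA A) M ∧ M.card = (Nf A).card := by
  obtain ⟨hm0, hc0⟩ := std_matching A (k0_spec A hpn)
  constructor
  · rintro ⟨hM, hmax⟩
    exact ⟨hM, le_antisymm (matching_card_le A hLL hM) (hc0 ▸ hmax _ hm0)⟩
  · rintro ⟨hM, hc⟩
    exact ⟨hM, fun M' hM' => hc ▸ matching_card_le A hLL hM'⟩

/-- In a maximum matching, every edge joins a nonpendant vertex to a pendant vertex. -/
theorem maxmatching_edge {M : Finset (Sym2 (Fin n))} (hM : IsMaxMatching (DA A) M)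
    {e : Sym2 (Fin n)} (he : e ∈ M) :
    ∃ v u, e = s(v, u) ∧ ¬ Pendant (DA A) v ∧ Pendant (DA A) u ∧ Adjd (DA A) v u := by
  have hsurj : ∀ w ∈ Nf A, ∃ f ∈ M, npv A f = w := by
    have himg : M.image (npv A) = Nf A := by
      refine eq_of_subset_of_card_le (fun w hw => ?_) ?_
      · obtain ⟨f, hf, rfl⟩ := mem_image.1 hw
        rw [mem_Nf]
        exact (npv_spec A (edge_has_np A hLL (hM.1.1 f hf))).2
      · rw [card_image_of_injOn (fun e he f hf hef => by
          refine matching_eq_of_mem hM.1 he hf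
            (npv_spec A (edge_has_np A hLL (hM.1.1 e he))).1 ?_
          rw [hef]
          exact (npv_spec A (edge_has_np A hLL (hM.1.1 f hf))).1),
          ((maxmatching_iff A hLL hpn).1 hM).2]
    intro w hw
    rw [← himg] at hw
    obtain ⟨f, hf, hfw⟩ := mem_image.1 hw
    exact ⟨f, hf, hfw⟩
  obtain ⟨i, j, rfl, hij⟩ := hM.1.1 e he
  by_cases hi : Pendant (DA A) i <;> by_cases hj : Pendant (DA A) j
  · exact absurd hij (hLL i j hi hj)
  · exact ⟨j, i, Sym2.eq_swap, hj, hi, adjd_symm hij⟩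
  · exact ⟨i, j, rfl, hi, hj, hij⟩
  · exfalso
    have hmm : ∀ w, w ∈ s(i,j) → ¬ Pendant (DA A) w → npv A s(i,j) = w := by
      intro w hw hwp
      obtain ⟨f, hf, hfw⟩ := hsurj w ((mem_Nf A).2 hwp)
      have : s(i,j) = f := matching_eq_of_mem hM.1 he hf hw
        (hfw ▸ (npv_spec A (edge_has_np A hLL (hM.1.1 f hf))).1)
      rw [← this] at hfw
      exact hfw
    have h1 := hmm i (by simp [Sym2.mem_iff]) hi
    have h2 := hmm j (by simp [Sym2.mem_iff]) hj
    exact hij.1 (h1.symm.trans h2)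

/-- In a maximum matching, every nonpendant vertex is matched (to a pendant neighbour). -/
theorem maxmatching_covers {M : Finset (Sym2 (Fin n))} (hM : IsMaxMatching (DA A) M)
    {v : Fin n} (hv : ¬ Pendant (DA A) v) :
    ∃ u, Pendant (DA A) u ∧ Adjd (DA A) v u ∧ s(v, u) ∈ M := by
  classical
  have himg : M.image (npv A) = Nf A := by
    refine eq_of_subset_of_card_le (fun w hw => ?_) ?_
    · obtain ⟨f, hf, rfl⟩ := mem_image.1 hw
      rw [mem_Nf]
      exact (npv_spec A (edge_has_np A hLL (hM.1.1 f hf))).2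
    · rw [card_image_of_injOn (fun e he f hf hef => by
        refine matching_eq_of_mem hM.1 he hf
          (npv_spec A (edge_has_np A hLL (hM.1.1 e he))).1 ?_
        rw [hef]
        exact (npv_spec A (edge_has_np A hLL (hM.1.1 f hf))).1),
        ((maxmatching_iff A hLL hpn).1 hM).2]
  have hv' : v ∈ Nf A := (mem_Nf A).2 hv
  rw [← himg] at hv'
  obtain ⟨f, hf, hfv⟩ := mem_image.1 hv'
  obtain ⟨v', u, rfl, hv'p, hup, hadj⟩ := maxmatching_edge A hLL hpn hM hf
  have hmem : v ∈ s(v', u) := hfv ▸ (npv_spec A (edge_has_np A hLL (hM.1.1 _ hf))).1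
  rcases Sym2.mem_iff.1 hmem with rfl | rfl
  · exact ⟨u, hup, hadj, hf⟩
  · exact absurd hup hv

end Matching

end GI

namespace GI

open Finset
open scoped Classical

section Sum

variable {n : ℕ} (A : Matrix (Fin n) (Fin n) ℝ)

theorem mem_maxMatchings {M : Finset (Sym2 (Fin n))} :
    M ∈ maxMatchings A ↔ IsMaxMatching (DA A) M := by
  rw [maxMatchings, Set.Finite.mem_toFinset, Set.mem_setOf_eq]

variable (hLL : ∀ i j : Fin n, Pendant (DA A) i → Pendant (DA A) j → ¬ Adjd (DA A) i j)
variable (hpn : ∀ v : Fin n, ¬ Pendant (DA A) v → (PNf A v).Nonempty)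
include hLL hpn

/-- Key summation lemma: the sum over maximum matchings containing prescribed edges
`s(v, k v)`, `v ∈ K`, of the product of cycle products over the remaining edges. -/
theorem sum_forced : ∀ (m : ℕ) (K : Finset (Fin n)) (k : Fin n → Fin n),
    (Nf A \ K).card = m → K ⊆ Nf A → (∀ v ∈ K, k v ∈ PNf A v) →
    ∑ M ∈ (maxMatchings A).filter (fun M => ∀ v ∈ K, s(v, k v) ∈ M),
      ∏ e ∈ M.filter (fun e => e ∉ K.image (fun v => s(v, k v))), cycProd A e
    = ∏ v ∈ Nf A \ K, S A v := by
  intro m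
  induction m with
  | zero =>
    intro K k hcard hKN hk
    have hKeq : K = Nf A := by
      apply Finset.Subset.antisymm hKN
      intro v hv
      by_contra hvK
      exact absurd (card_eq_zero.1 hcard ▸ mem_sdiff.2 ⟨hv, hvK⟩) (notMem_empty v)
    subst hKeq
    have hF := std_matching A hk
    have hFmax : IsMaxMatching (DA A) (Nf A |>.image (fun v => s(v, k v))) :=
      (maxmatching_iff A hLL hpn).2 ⟨hF.1, hF.2⟩
    have hset : (maxMatchings A).filter (fun M => ∀ v ∈ Nf A, s(v, k v) ∈ M)
        = {(Nf A).image (fun v => s(v, k v))} := by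
      apply Finset.Subset.antisymm
      · intro M hM
        rw [mem_filter, mem_maxMatchings] at hM
        rw [mem_singleton]
        refine (eq_of_subset_of_card_le (fun e he => ?_) ?_).symm
        · obtain ⟨v, hv, rfl⟩ := mem_image.1 he
          exact hM.2 v hv
        · rw [((maxmatching_iff A hLL hpn).1 hM.1).2, hF.2]
      · intro M hM
        rw [mem_singleton] at hM
        subst hM
        rw [mem_filter, mem_maxMatchings]
        exact ⟨hFmax, fun v hv => mem_image_of_mem _ hv⟩
    rw [hset, sum_singleton, Finset.sdiff_self, prod_empty]
    rw [filter_false_of_mem, prod_empty]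
    intro e he
    simp only [not_not]
    exact he
  | succ m ih =>
    intro K k hcard hKN hk
    have hne : (Nf A \ K).Nonempty := card_pos.1 (hcard ▸ m.succ_pos)
    obtain ⟨v₀, hv₀⟩ := hne
    have hv₀N : v₀ ∈ Nf A := (mem_sdiff.1 hv₀).1
    have hv₀K : v₀ ∉ K := (mem_sdiff.1 hv₀).2
    have hv₀np : ¬ Pendant (DA A) v₀ := (mem_Nf A).1 hv₀N
    set T := (maxMatchings A).filter (fun M => ∀ v ∈ K, s(v, k v) ∈ M) with hT
    -- the partner of v₀ in a maximum matching
    set g : Finset (Sym2 (Fin n)) → Fin n := fun M =>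
      if h : ∃ u, Pendant (DA A) u ∧ Adjd (DA A) v₀ u ∧ s(v₀, u) ∈ M then h.choose else v₀
      with hg
    have hgspec : ∀ M, IsMaxMatching (DA A) M →
        Pendant (DA A) (g M) ∧ Adjd (DA A) v₀ (g M) ∧ s(v₀, g M) ∈ M := by
      intro M hM
      have h : ∃ u, Pendant (DA A) u ∧ Adjd (DA A) v₀ u ∧ s(v₀, u) ∈ M :=
        maxmatching_covers A hLL hpn hM hv₀np
      rw [hg]
      simp only [dif_pos h]
      exact h.choose_spec
    have hgu : ∀ M, IsMaxMatching (DA A) M → ∀ u, Pendant (DA A) u → s(v₀, u) ∈ M →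
        g M = u := by
      intro M hM u hu huM
      obtain ⟨hp1, hp2, hp3⟩ := hgspec M hM
      have := matching_eq_of_mem hM.1 hp3 huM (Sym2.mem_mk_left _ _) (Sym2.mem_mk_left _ _)
      rcases Sym2.eq_iff.1 this with ⟨_, h⟩ | ⟨h1', h2'⟩
      · exact h
      · exact absurd h2'.symm hp2.1
    have hmaps : ∀ M ∈ T, g M ∈ PNf A v₀ := by
      intro M hM
      rw [hT, mem_filter, mem_maxMatchings] at hM
      obtain ⟨h1, h2, _⟩ := hgspec M hM.1
      exact (mem_PNf A).2 ⟨h2, h1⟩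
    rw [← Finset.sum_fiberwise_of_maps_to hmaps]
    have hstep : ∀ u ∈ PNf A v₀,
        ∑ M ∈ T.filter (fun M => g M = u),
          ∏ e ∈ M.filter (fun e => e ∉ K.image (fun v => s(v, k v))), cycProd A e
        = (A v₀ u * A u v₀) * ∏ v ∈ Nf A \ insert v₀ K, S A v := by
      intro u hu
      obtain ⟨huadj, hup⟩ := (mem_PNf A).1 hu
      set k' := Function.update k v₀ u with hk'
      set K' := insert v₀ K with hK'
      have hk'K : ∀ v ∈ K, k' v = k v := by
        intro v hv
        rw [hk', Function.update_of_ne (by rintro rfl; exact hv₀K hv)]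
      have hk'v₀ : k' v₀ = u := Function.update_self _ _ _
      have himg : K'.image (fun v => s(v, k' v)) =
          insert s(v₀, u) (K.image (fun v => s(v, k v))) := by
        rw [hK', image_insert, hk'v₀]
        congr 1
        exact image_congr (fun v hv => by rw [hk'K v hv])
      have hsetEq : T.filter (fun M => g M = u)
          = (maxMatchings A).filter (fun M => ∀ v ∈ K', s(v, k' v) ∈ M) := by
        ext M
        rw [mem_filter, hT, mem_filter, mem_maxMatchings, mem_filter, mem_maxMatchings]
        constructor
        · rintro ⟨⟨hM, hKM⟩, hgM⟩
          refine ⟨hM, ?_⟩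
          intro v hv
          rcases mem_insert.1 hv with rfl | hv'
          · rw [hk'v₀, ← hgM]
            exact (hgspec M hM).2.2
          · rw [hk'K v hv']
            exact hKM v hv'
        · rintro ⟨hM, hKM⟩
          have hv₀M : s(v₀, u) ∈ M := by
            have := hKM v₀ (mem_insert_self _ _)
            rwa [hk'v₀] at this
          refine ⟨⟨hM, fun v hv => ?_⟩, hgu M hM u hup hv₀M⟩
          have := hKM v (mem_insert_of_mem hv)
          rwa [hk'K v hv] at this
      have hprodEq : ∀ M, IsMaxMatching (DA A) M → s(v₀, u) ∈ M →
          ∏ e ∈ M.filter (fun e => e ∉ K.image (fun v => s(v, k v))), cycProd A e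
          = (A v₀ u * A u v₀) *
            ∏ e ∈ M.filter (fun e => e ∉ K'.image (fun v => s(v, k' v))), cycProd A e := by
        intro M hM hv₀M
        have hnotin : s(v₀, u) ∉ K.image (fun v => s(v, k v)) := by
          intro hmem
          obtain ⟨v, hv, hveq⟩ := mem_image.1 hmem
          rcases Sym2.eq_iff.1 hveq.symm with ⟨h1, _⟩ | ⟨h1, h2⟩
          · exact hv₀K (h1 ▸ hv)
          · exact hv₀np (h1 ▸ ((mem_PNf A).1 (hk v hv)).2)
        have hfilter : M.filter (fun e => e ∉ K.image (fun v => s(v, k v)))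
            = insert s(v₀, u) (M.filter (fun e => e ∉ K'.image (fun v => s(v, k' v)))) := by
          ext e
          constructor
          · intro he
            rw [mem_filter] at he
            by_cases hcase : e = s(v₀, u)
            · exact mem_insert.2 (Or.inl hcase)
            · refine mem_insert.2 (Or.inr ?_)
              rw [mem_filter, himg]
              exact ⟨he.1, fun hmem => (mem_insert.1 hmem).elim hcase he.2⟩
          · intro he
            rcases mem_insert.1 he with rfl | he'
            · exact mem_filter.2 ⟨hv₀M, hnotin⟩
            · rw [mem_filter, himg] at he'
              exact mem_filter.2 ⟨he'.1, fun hm => he'.2 (mem_insert_of_mem hm)⟩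
        have hnotin2 : s(v₀, u) ∉ M.filter (fun e => e ∉ K'.image (fun v => s(v, k' v))) := by
          rw [mem_filter, himg]
          rintro ⟨-, hcon⟩
          exact hcon (mem_insert_self _ _)
        rw [hfilter, prod_insert hnotin2, cycProd_mk]
      have hsum2 : ∑ M ∈ (maxMatchings A).filter (fun M => ∀ v ∈ K', s(v, k' v) ∈ M),
          ∏ e ∈ M.filter (fun e => e ∉ K.image (fun v => s(v, k v))), cycProd A e
        = ∑ M ∈ (maxMatchings A).filter (fun M => ∀ v ∈ K', s(v, k' v) ∈ M),
          (A v₀ u * A u v₀) *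
            ∏ e ∈ M.filter (fun e => e ∉ K'.image (fun v => s(v, k' v))), cycProd A e := by
        refine Finset.sum_congr rfl (fun M hM => ?_)
        rw [mem_filter, mem_maxMatchings] at hM
        refine hprodEq M hM.1 ?_
        have := hM.2 v₀ (mem_insert_self _ _)
        rwa [hk'v₀] at this
      rw [hsetEq, hsum2, ← Finset.mul_sum]
      congr 1
      apply ih K' k'
      · rw [hK', Finset.sdiff_insert, card_erase_of_mem hv₀, hcard]; omega
      · rw [hK']
        exact insert_subset hv₀N hKN
      · intro v hv
        rcases mem_insert.1 hv with rfl | hv'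
        · rw [hk'v₀]; exact hu
        · rw [hk'K v hv']; exact hk v hv'
    rw [Finset.sum_congr rfl hstep, ← Finset.sum_mul]
    have : ∑ u ∈ PNf A v₀, A v₀ u * A u v₀ = S A v₀ := rfl
    rw [this]
    rw [← Finset.mul_prod_erase (Nf A \ K) (S A) hv₀]
    congr 1
    rw [Finset.sdiff_insert]

end Sum

end GI

namespace GI

open Finset
open scoped Classical

section Chains

variable {n : ℕ} (A : Matrix (Fin n) (Fin n) ℝ)

theorem nonpendant_of_two_nbrs {G : Fin n → Fin n → Prop} {v x y : Fin n}
    (hx : Adjd G v x) (hy : Adjd G v y) (hxy : x ≠ y) : ¬ Pendant G v := by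
  rintro ⟨u, hu, huniq⟩
  exact hxy ((huniq x hx).trans (huniq y hy).symm)

theorem altChain_pair {M : Finset (Sym2 (Fin n))} {a b : Fin n} :
    IsAltChain M [a, b] ↔ s(a, b) ∈ M := by
  have h1 : chainEdges [a, b] = [s(a, b)] := rfl
  unfold IsAltChain
  rw [h1]
  constructor
  · intro h
    have := h.2 0 (by norm_num)
    simpa using this
  · intro h
    refine ⟨by norm_num, fun k hk => ?_⟩
    simp only [List.length_singleton] at hk
    interval_cases k
    simpa using h

theorem altChain_quad {M : Finset (Sym2 (Fin n))} {a b c d : Fin n} :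
    IsAltChain M [a, b, c, d] ↔ s(a, b) ∈ M ∧ s(b, c) ∉ M ∧ s(c, d) ∈ M := by
  have h1 : chainEdges [a, b, c, d] = [s(a, b), s(b, c), s(c, d)] := rfl
  unfold IsAltChain
  rw [h1]
  constructor
  · intro h
    refine ⟨?_, ?_, ?_⟩
    · simpa using h.2 0 (by norm_num)
    · have := h.2 1 (by norm_num)
      simp only [List.get] at this
      rw [this]
      simp
    · simpa using h.2 2 (by norm_num)
  · rintro ⟨h1, h2, h3⟩
    refine ⟨⟨1, by norm_num⟩, fun k hk => ?_⟩
    simp only [List.length_cons, List.length_nil] at hk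
    interval_cases k <;> simp [List.get, h1, h2, h3]

variable (hLL : ∀ i j : Fin n, Pendant (DA A) i → Pendant (DA A) j → ¬ Adjd (DA A) i j)
variable (hpn : ∀ v : Fin n, ¬ Pendant (DA A) v → (PNf A v).Nonempty)
include hLL hpn

/-- An edge of a maximum matching has a pendant endpoint (in the guise needed below). -/
theorem matched_pendant_endpoint {M : Finset (Sym2 (Fin n))} (hM : IsMaxMatching (DA A) M)
    {x y : Fin n} (hxy : s(x, y) ∈ M) : Pendant (DA A) x ∨ Pendant (DA A) y := by
  obtain ⟨v, u, he, hv, hu, _⟩ := maxmatching_edge A hLL hpn hM hxy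
  rcases Sym2.eq_iff.1 he with ⟨h1, h2⟩ | ⟨h1, h2⟩
  · exact Or.inr (by rw [h2]; exact hu)
  · exact Or.inl (by rw [h1]; exact hu)

/-- Structure of an alternating cycle chain with respect to a maximum matching. -/
theorem chain_shape {M : Finset (Sym2 (Fin n))} {c : List (Fin n)} {i j : Fin n}
    (hM : IsMaxMatching (DA A) M) (hc : IsCycleChainBtw (DA A) i j c)
    (halt : IsAltChain M c) :
    (c = [i, j] ∧ Adjd (DA A) i j ∧ s(i, j) ∈ M) ∨
    (∃ b b', c = [i, b, b', j] ∧ Adjd (DA A) i b ∧ Adjd (DA A) b b' ∧ Adjd (DA A) b' j ∧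
      s(i, b) ∈ M ∧ s(b', j) ∈ M ∧ s(b, b') ∉ M ∧
      Pendant (DA A) i ∧ Pendant (DA A) j ∧
      ¬ Pendant (DA A) b ∧ ¬ Pendant (DA A) b') := by
  obtain ⟨⟨hnd, hlen, hch⟩, hhead, hlast⟩ := hc
  rcases c with _ | ⟨v0, c⟩
  · simp at hlen
  rcases c with _ | ⟨v1, c⟩
  · simp at hlen
  have hv0 : v0 = i := by simpa using hhead
  subst hv0
  rename' v0 => i
  rcases c with _ | ⟨v2, c⟩
  · -- length 2
    have hj : v1 = j := by simpa using hlast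
    subst hj
    rename' v1 => j
    have hadj : Adjd (DA A) i j := by
      rw [List.Chain', List.isChain_cons_cons] at hch
      exact hch.1
    exact Or.inl ⟨rfl, hadj, altChain_pair.1 halt⟩
  rcases c with _ | ⟨v3, c⟩
  · -- length 3 : impossible, even number of edges
    exfalso
    have : ¬ Odd 2 := by decide
    exact this halt.1
  rcases c with _ | ⟨v4, c⟩
  · -- length 4
    have hj : v3 = j := by simpa using hlast
    subst hj
    rename' v3 => j
    simp only [List.Chain', List.isChain_cons_cons] at hch
    obtain ⟨h01, h12, h23, -⟩ := hch
    simp only [List.nodup_cons, List.mem_cons, List.not_mem_nil] at hnd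
    have h02 : i ≠ v2 := fun h => hnd.1 (Or.inr (Or.inl h))
    have h13 : v1 ≠ j := fun h => hnd.2.1 (Or.inr (Or.inl h))
    obtain ⟨hm1, hm2, hm3⟩ := altChain_quad.1 halt
    have hnp1 : ¬ Pendant (DA A) v1 :=
      nonpendant_of_two_nbrs (adjd_symm h01) h12 h02
    have hnp2 : ¬ Pendant (DA A) v2 :=
      nonpendant_of_two_nbrs (adjd_symm h12) h23 h13
    have hpi : Pendant (DA A) i :=
      (matched_pendant_endpoint A hLL hpn hM hm1).resolve_right hnp1
    have hpj : Pendant (DA A) j :=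
      (matched_pendant_endpoint A hLL hpn hM hm3).resolve_left hnp2
    exact Or.inr ⟨v1, v2, rfl, h01, h12, h23, hm1, hm3, hm2, hpi, hpj, hnp1, hnp2⟩
  · -- length ≥ 5 : impossible
    exfalso
    have hlt : 2 < (chainEdges (i :: v1 :: v2 :: v3 :: v4 :: c)).length := by
      simp [chainEdges, List.length_zipWith]
    have hget : (chainEdges (i :: v1 :: v2 :: v3 :: v4 :: c)).get ⟨2, hlt⟩ = s(v2, v3) := rfl
    have hm : s(v2, v3) ∈ M := by
      rw [← hget]
      exact (halt.2 2 hlt).2 (by decide)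
    simp only [List.Chain', List.isChain_cons_cons] at hch
    obtain ⟨h01, h12, h23, h34, -⟩ := hch
    simp only [List.nodup_cons, List.mem_cons] at hnd
    have h13 : v1 ≠ v3 := fun h => hnd.2.1 (Or.inr (Or.inl h))
    have h24 : v2 ≠ v4 := fun h => hnd.2.2.1 (Or.inr (Or.inl h))
    have hnp2 : ¬ Pendant (DA A) v2 := nonpendant_of_two_nbrs (adjd_symm h12) h23 h13
    have hnp3 : ¬ Pendant (DA A) v3 := nonpendant_of_two_nbrs (adjd_symm h23) h34 h24
    rcases matched_pendant_endpoint A hLL hpn hM hm with h | h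
    · exact hnp2 h
    · exact hnp3 h

end Chains

end GI

namespace GI

open Finset
open scoped Classical

section Mu

variable {n : ℕ} (A : Matrix (Fin n) (Fin n) ℝ)

theorem mem_MMfin {i j : Fin n} {M : Finset (Sym2 (Fin n))} :
    M ∈ (MMset A i j).toFinite.toFinset ↔ IsMaxMatching (DA A) M ∧
      ∃ c, IsCycleChainBtw (DA A) i j c ∧ IsAltChain M c := by
  rw [Set.Finite.mem_toFinset]; rfl

theorem btw_pair {i j : Fin n} (hadj : Adjd (DA A) i j) :
    IsCycleChainBtw (DA A) i j [i, j] := by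
  refine ⟨⟨?_, by norm_num, ?_⟩, rfl, rfl⟩
  · simp [hadj.1]
  · exact List.isChain_cons_cons.2 ⟨hadj, List.isChain_singleton _⟩

theorem btw_quad {i b b' j : Fin n} (h1 : Adjd (DA A) i b) (h2 : Adjd (DA A) b b')
    (h3 : Adjd (DA A) b' j) (hib' : i ≠ b') (hij : i ≠ j) (hbj : b ≠ j) :
    IsCycleChainBtw (DA A) i j [i, b, b', j] := by
  refine ⟨⟨?_, by norm_num, ?_⟩, rfl, rfl⟩
  · simp [h1.1, h2.1, h3.1, hib', hij, hbj]
  · exact List.isChain_cons_cons.2 ⟨h1, List.isChain_cons_cons.2 ⟨h2,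
      List.isChain_cons_cons.2 ⟨h3, List.isChain_singleton _⟩⟩⟩

variable (hLL : ∀ i j : Fin n, Pendant (DA A) i → Pendant (DA A) j → ¬ Adjd (DA A) i j)
variable (hpn : ∀ v : Fin n, ¬ Pendant (DA A) v → (PNf A v).Nonempty)
include hLL hpn

omit hpn in
theorem np_of_pendant_adj {i j : Fin n} (hpi : Pendant (DA A) i) (hadj : Adjd (DA A) i j) :
    ¬ Pendant (DA A) j := fun hpj => hLL i j hpi hpj hadj

theorem exists_max_forced (K : Finset (Fin n)) (k : Fin n → Fin n) (hK : K ⊆ Nf A)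
    (hk : ∀ v ∈ K, k v ∈ PNf A v) :
    ∃ M, IsMaxMatching (DA A) M ∧ ∀ v ∈ K, s(v, k v) ∈ M := by
  set kk := fun v => if v ∈ K then k v else k0 A v with hkk
  have hkk' : ∀ v ∈ Nf A, kk v ∈ PNf A v := by
    intro v hv
    show (if v ∈ K then k v else k0 A v) ∈ PNf A v
    by_cases h : v ∈ K
    · rw [if_pos h]; exact hk v h
    · rw [if_neg h]; exact k0_spec A hpn v hv
  obtain ⟨hm, hc⟩ := std_matching A hkk'
  refine ⟨(Nf A).image (fun v => s(v, kk v)), (maxmatching_iff A hLL hpn).2 ⟨hm, hc⟩, ?_⟩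
  intro v hv
  have h2 : s(v, kk v) ∈ (Nf A).image (fun v => s(v, kk v)) := mem_image_of_mem _ (hK hv)
  have h3 : kk v = k v := by show (if v ∈ K then k v else k0 A v) = k v; rw [if_pos hv]
  rwa [h3] at h2

/-! #### Case 1 : `i` pendant, `i ~ j` -/

theorem ex_case1 {i j : Fin n} (hpi : Pendant (DA A) i) (hadj : Adjd (DA A) i j) :
    ∃ M, IsMaxMatching (DA A) M ∧ s(j, i) ∈ M ∧ M ∈ MMset A i j := by
  have hnpj : ¬ Pendant (DA A) j := np_of_pendant_adj A hLL hpi hadj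
  obtain ⟨M, hM, hMf⟩ := exists_max_forced A hLL hpn {j} (fun _ => i)
    (by intro v hv; rw [mem_singleton] at hv; subst hv; exact (mem_Nf A).2 hnpj)
    (by intro v hv; rw [mem_singleton] at hv; subst hv
        exact (mem_PNf A).2 ⟨adjd_symm hadj, hpi⟩)
  have hji : s(j, i) ∈ M := hMf j (mem_singleton_self j)
  exact ⟨M, hM, hji, ⟨hM, [i, j], btw_pair A hadj,
    altChain_pair.2 (by rwa [Sym2.eq_swap])⟩⟩

theorem maxmatchable_case1 {i j : Fin n} (hpi : Pendant (DA A) i)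
    (hadj : Adjd (DA A) i j) : MaxMatchable A i j := by
  obtain ⟨M, _, _, hM⟩ := ex_case1 A hLL hpn hpi hadj
  exact ⟨M, hM⟩

theorem thechain_case1 {i j : Fin n} (hpi : Pendant (DA A) i) (hadj : Adjd (DA A) i j) :
    theChain A i j = [i, j] := by
  have hnpj : ¬ Pendant (DA A) j := np_of_pendant_adj A hLL hpi hadj
  obtain ⟨M, hM, hji, hMm⟩ := ex_case1 A hLL hpn hpi hadj
  rw [theChain]
  have hex : ∃ c, IsCycleChainBtw (DA A) i j c ∧ ∃ M ∈ MMset A i j, IsAltChain M c :=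
    ⟨[i, j], btw_pair A hadj, M, hMm, altChain_pair.2 (by rwa [Sym2.eq_swap])⟩
  rw [dif_pos hex]
  obtain ⟨hbtw, M', hM', halt⟩ := hex.choose_spec
  rcases chain_shape A hLL hpn hM'.1 hbtw halt with ⟨hc, -, -⟩ | ⟨b, b', hc, hr⟩
  · exact hc
  · exact absurd hr.2.2.2.2.2.2.2.1 hnpj

theorem thechain_case2 {i j : Fin n} (hpj : Pendant (DA A) j) (hadj : Adjd (DA A) i j) :
    theChain A i j = [i, j] := by
  have hnpi : ¬ Pendant (DA A) i := np_of_pendant_adj A hLL hpj (adjd_symm hadj)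
  obtain ⟨M, hM, hij', hMm⟩ := ex_case1 A hLL hpn hpj (adjd_symm hadj)
  have hMm' : M ∈ MMset A i j := by
    obtain ⟨hmax, -⟩ := hMm
    exact ⟨hmax, [i, j], btw_pair A hadj, altChain_pair.2 hij'⟩
  rw [theChain]
  have hex : ∃ c, IsCycleChainBtw (DA A) i j c ∧ ∃ M ∈ MMset A i j, IsAltChain M c :=
    ⟨[i, j], btw_pair A hadj, M, hMm', altChain_pair.2 hij'⟩
  rw [dif_pos hex]
  obtain ⟨hbtw, M', hM', halt⟩ := hex.choose_spec
  rcases chain_shape A hLL hpn hM'.1 hbtw halt with ⟨hc, -, -⟩ | ⟨b, b', hc, hr⟩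
  · exact hc
  · exact absurd hr.2.2.2.2.2.2.1 hnpi

theorem maxmatchable_case2 {i j : Fin n} (hpj : Pendant (DA A) j)
    (hadj : Adjd (DA A) i j) : MaxMatchable A i j := by
  obtain ⟨M, hM, hij', _⟩ := ex_case1 A hLL hpn hpj (adjd_symm hadj)
  exact ⟨M, hM, [i, j], btw_pair A hadj, altChain_pair.2 hij'⟩

theorem mmset_case1 {i j : Fin n} (hpi : Pendant (DA A) i) (hadj : Adjd (DA A) i j) :
    (MMset A i j).toFinite.toFinset
      = (maxMatchings A).filter (fun M => s(j, i) ∈ M) := by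
  have hnpj : ¬ Pendant (DA A) j := np_of_pendant_adj A hLL hpi hadj
  ext M
  rw [mem_MMfin, mem_filter, mem_maxMatchings]
  constructor
  · rintro ⟨hmax, c, hbtw, halt⟩
    rcases chain_shape A hLL hpn hmax hbtw halt with ⟨-, -, hmem⟩ | ⟨b, b', hc, hr⟩
    · exact ⟨hmax, by rwa [Sym2.eq_swap] at hmem⟩
    · exact absurd hr.2.2.2.2.2.2.2.1 hnpj
  · rintro ⟨hmax, hmem⟩
    exact ⟨hmax, [i, j], btw_pair A hadj, altChain_pair.2 (by rwa [Sym2.eq_swap])⟩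

theorem mmset_case2 {i j : Fin n} (hpj : Pendant (DA A) j) (hadj : Adjd (DA A) i j) :
    (MMset A i j).toFinite.toFinset
      = (maxMatchings A).filter (fun M => s(i, j) ∈ M) := by
  have hnpi : ¬ Pendant (DA A) i := np_of_pendant_adj A hLL hpj (adjd_symm hadj)
  ext M
  rw [mem_MMfin, mem_filter, mem_maxMatchings]
  constructor
  · rintro ⟨hmax, c, hbtw, halt⟩
    rcases chain_shape A hLL hpn hmax hbtw halt with ⟨-, -, hmem⟩ | ⟨b, b', hc, hr⟩
    · exact ⟨hmax, hmem⟩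
    · exact absurd hr.2.2.2.2.2.2.1 hnpi
  · rintro ⟨hmax, hmem⟩
    exact ⟨hmax, [i, j], btw_pair A hadj, altChain_pair.2 hmem⟩

/-! #### Case 3 : `i, j` pendant, `pw i ~ pw j` -/

section Case3

variable {i j : Fin n} (hpi : Pendant (DA A) i) (hpj : Pendant (DA A) j)
  (hww : Adjd (DA A) (pw A i) (pw A j))
include hpi hpj hww

omit hpn in
theorem case3_facts :
    ¬ Pendant (DA A) (pw A i) ∧ ¬ Pendant (DA A) (pw A j) ∧ i ≠ j ∧ i ≠ pw A j ∧
      pw A i ≠ j ∧ i ≠ pw A i ∧ pw A j ≠ j ∧ pw A i ≠ pw A j ∧ ¬ Adjd (DA A) i j := by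
  have h1 : ¬ Pendant (DA A) (pw A i) := np_of_pendant_adj A hLL hpi (pw_adjd A hpi)
  have h2 : ¬ Pendant (DA A) (pw A j) := np_of_pendant_adj A hLL hpj (pw_adjd A hpj)
  have hww' : pw A i ≠ pw A j := hww.1
  have hij : i ≠ j := by rintro rfl; exact hww' rfl
  refine ⟨h1, h2, hij, ?_, ?_, (pw_adjd A hpi).1, ((pw_adjd A hpj).1).symm, hww',
    hLL i j hpi hpj⟩
  · rintro h; exact h2 (h ▸ hpi)
  · rintro rfl; exact h1 hpj

/-- The choice function forcing the two end 2-cycles of the distance-3 chain. -/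
noncomputable def k3 : Fin n → Fin n := fun v => if v = pw A i then i else j

omit hLL hpn hpi hpj hww in
theorem k3_wi : k3 A (i := i) (j := j) (pw A i) = i := if_pos rfl

omit hpn in
theorem k3_wj : k3 A (i := i) (j := j) (pw A j) = j := by
  obtain ⟨-, -, -, -, -, -, -, hww', -⟩ := case3_facts A hLL hpi hpj hww
  exact if_neg (Ne.symm hww')

omit hpn in
theorem k3_K_sub : ({pw A i, pw A j} : Finset (Fin n)) ⊆ Nf A := by
  obtain ⟨h1, h2, -⟩ := case3_facts A hLL hpi hpj hww
  intro v hv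
  rcases mem_insert.1 hv with rfl | hv'
  · exact (mem_Nf A).2 h1
  · rw [mem_singleton] at hv'; subst hv'; exact (mem_Nf A).2 h2

omit hpn in
theorem k3_mem : ∀ v ∈ ({pw A i, pw A j} : Finset (Fin n)),
    k3 A (i := i) (j := j) v ∈ PNf A v := by
  intro v hv
  rcases mem_insert.1 hv with rfl | hv'
  · rw [k3_wi]
    exact (mem_PNf A).2 ⟨adjd_symm (pw_adjd A hpi), hpi⟩
  · rw [mem_singleton] at hv'; subst hv'
    rw [k3_wj A hLL hpi hpj hww]
    exact (mem_PNf A).2 ⟨adjd_symm (pw_adjd A hpj), hpj⟩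

theorem ex_case3 :
    ∃ M, IsMaxMatching (DA A) M ∧ s(pw A i, i) ∈ M ∧ s(pw A j, j) ∈ M ∧ M ∈ MMset A i j := by
  obtain ⟨h1, h2, hij, hiwj, hwij, hiwi, hwjj, hww', hnadj⟩ := case3_facts A hLL hpi hpj hww
  obtain ⟨M, hM, hMf⟩ := exists_max_forced A hLL hpn {pw A i, pw A j} (k3 A)
    (k3_K_sub A hLL hpi hpj hww) (k3_mem A hLL hpi hpj hww)
  have hf1 : s(pw A i, i) ∈ M := by
    have := hMf (pw A i) (mem_insert_self _ _)
    rwa [k3_wi] at this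
  have hf2 : s(pw A j, j) ∈ M := by
    have := hMf (pw A j) (mem_insert_of_mem (mem_singleton_self _))
    rwa [k3_wj A hLL hpi hpj hww] at this
  have hmid : s(pw A i, pw A j) ∉ M := by
    intro hmem
    rcases matched_pendant_endpoint A hLL hpn hM hmem with h | h
    · exact h1 h
    · exact h2 h
  refine ⟨M, hM, hf1, hf2, hM, [i, pw A i, pw A j, j], ?_, ?_⟩
  · exact btw_quad A (pw_adjd A hpi) hww (adjd_symm (pw_adjd A hpj)) hiwj hij hwij
  · exact altChain_quad.2 ⟨by rwa [Sym2.eq_swap], hmid, hf2⟩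

theorem maxmatchable_case3 : MaxMatchable A i j := by
  obtain ⟨M, -, -, -, hM⟩ := ex_case3 A hLL hpn hpi hpj hww
  exact ⟨M, hM⟩

theorem thechain_case3 : theChain A i j = [i, pw A i, pw A j, j] := by
  obtain ⟨h1, h2, hij, hiwj, hwij, hiwi, hwjj, hww', hnadj⟩ := case3_facts A hLL hpi hpj hww
  obtain ⟨M, hM, hf1, hf2, hMm⟩ := ex_case3 A hLL hpn hpi hpj hww
  have hmid : s(pw A i, pw A j) ∉ M := by
    intro hmem
    rcases matched_pendant_endpoint A hLL hpn hM hmem with h | h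
    · exact h1 h
    · exact h2 h
  rw [theChain]
  have hex : ∃ c, IsCycleChainBtw (DA A) i j c ∧ ∃ M ∈ MMset A i j, IsAltChain M c :=
    ⟨[i, pw A i, pw A j, j],
      btw_quad A (pw_adjd A hpi) hww (adjd_symm (pw_adjd A hpj)) hiwj hij hwij, M, hMm,
      altChain_quad.2 ⟨by rwa [Sym2.eq_swap], hmid, hf2⟩⟩
  rw [dif_pos hex]
  obtain ⟨hbtw, M', hM', halt⟩ := hex.choose_spec
  rcases chain_shape A hLL hpn hM'.1 hbtw halt with ⟨-, hadj, -⟩ | ⟨b, b', hc, hr⟩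
  · exact absurd hadj hnadj
  · obtain ⟨hib, hbb, hbj, -⟩ := hr
    rw [hc, ← pw_eq A hpi hib, ← pw_eq A hpj (adjd_symm hbj)]

theorem mmset_case3 :
    (MMset A i j).toFinite.toFinset = (maxMatchings A).filter
      (fun M => ∀ v ∈ ({pw A i, pw A j} : Finset (Fin n)),
        s(v, k3 A (i := i) (j := j) v) ∈ M) := by
  obtain ⟨h1, h2, hij, hiwj, hwij, hiwi, hwjj, hww', hnadj⟩ := case3_facts A hLL hpi hpj hww
  ext M
  rw [mem_MMfin, mem_filter, mem_maxMatchings]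
  constructor
  · rintro ⟨hmax, c, hbtw, halt⟩
    rcases chain_shape A hLL hpn hmax hbtw halt with ⟨-, hadj, -⟩ | ⟨b, b', hc, hr⟩
    · exact absurd hadj hnadj
    · obtain ⟨hib, hbb, hbj, hm1, hm2, -⟩ := hr
      have hb : b = pw A i := pw_eq A hpi hib
      have hb' : b' = pw A j := pw_eq A hpj (adjd_symm hbj)
      subst hb; subst hb'
      refine ⟨hmax, ?_⟩
      intro v hv
      rcases mem_insert.1 hv with rfl | hv'
      · rw [k3_wi, Sym2.eq_swap]; exact hm1
      · rw [mem_singleton] at hv'; subst hv'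
        rw [k3_wj A hLL hpi hpj hww]; exact hm2
  · rintro ⟨hmax, hmem⟩
    have hf1 : s(pw A i, i) ∈ M := by
      have := hmem (pw A i) (mem_insert_self _ _); rwa [k3_wi] at this
    have hf2 : s(pw A j, j) ∈ M := by
      have := hmem (pw A j) (mem_insert_of_mem (mem_singleton_self _))
      rwa [k3_wj A hLL hpi hpj hww] at this
    have hmid : s(pw A i, pw A j) ∉ M := by
      intro hmem'
      rcases matched_pendant_endpoint A hLL hpn hmax hmem' with h | h
      · exact h1 h
      · exact h2 h
    exact ⟨hmax, [i, pw A i, pw A j, j],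
      btw_quad A (pw_adjd A hpi) hww (adjd_symm (pw_adjd A hpj)) hiwj hij hwij,
      altChain_quad.2 ⟨by rwa [Sym2.eq_swap], hmid, hf2⟩⟩

end Case3

end Mu

end GI

namespace GI

open Finset
open scoped Classical

section MuVal

variable {n : ℕ} (A : Matrix (Fin n) (Fin n) ℝ)
variable (hLL : ∀ i j : Fin n, Pendant (DA A) i → Pendant (DA A) j → ¬ Adjd (DA A) i j)
variable (hpn : ∀ v : Fin n, ¬ Pendant (DA A) v → (PNf A v).Nonempty)
include hLL hpn

theorem Delta_eq : Delta A = ∏ v ∈ Nf A, S A v := by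
  have h := sum_forced A hLL hpn (Nf A \ ∅).card ∅ (k0 A) rfl (empty_subset _)
    (fun v hv => absurd hv (notMem_empty v))
  rw [sdiff_empty] at h
  rw [Delta, ← h]
  refine Finset.sum_congr ?_ (fun M hM => ?_)
  · exact (filter_true_of_mem (fun M _ => fun v hv => absurd hv (notMem_empty v))).symm
  · rw [matchProd]
    refine Finset.prod_congr ?_ (fun _ _ => rfl)
    exact (filter_true_of_mem (fun e he => by rw [image_empty]; exact notMem_empty e)).symm

theorem mu_case1 {i j : Fin n} (hpi : Pendant (DA A) i) (hadj : Adjd (DA A) i j) :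
    mu A i j = A i j * ∏ v ∈ Nf A \ {j}, S A v := by
  have hnpj := np_of_pendant_adj A hLL hpi hadj
  rw [mu, beta, if_pos (maxmatchable_case1 A hLL hpn hpi hadj),
    thechain_case1 A hLL hpn hpi hadj]
  have hpath : pathProd A [i, j] = A i j := by
    show (List.zipWith (fun a b => A a b) [i, j] [j]).prod = A i j
    simp
  have hlen : (([i, j] : List (Fin n)).length - 2) / 2 = 0 := by simp
  rw [hpath, hlen, pow_zero, one_mul]
  congr 1
  have hsf := sum_forced A hLL hpn (Nf A \ {j}).card {j} (fun _ => i) rfl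
    (singleton_subset_iff.2 ((mem_Nf A).2 hnpj))
    (fun v hv => by
      rw [mem_singleton] at hv; subst hv
      exact (mem_PNf A).2 ⟨adjd_symm hadj, hpi⟩)
  rw [← hsf, mmset_case1 A hLL hpn hpi hadj]
  refine Finset.sum_congr (filter_congr fun M _ => by simp) (fun M hM => ?_)
  rw [betaBar, thechain_case1 A hLL hpn hpi hadj]
  refine Finset.prod_congr (filter_congr fun e he => ?_) fun _ _ => rfl
  show e ∉ chainEdges [i, j] ↔ e ∉ ({j} : Finset (Fin n)).image (fun v => s(v, i))
  have h1 : chainEdges [i, j] = [s(j, i)] := by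
    show [s(i, j)] = [s(j, i)]
    rw [Sym2.eq_swap]
  rw [h1, image_singleton]
  simp

theorem mu_case2 {i j : Fin n} (hpj : Pendant (DA A) j) (hadj : Adjd (DA A) i j) :
    mu A i j = A i j * ∏ v ∈ Nf A \ {i}, S A v := by
  have hnpi := np_of_pendant_adj A hLL hpj (adjd_symm hadj)
  rw [mu, beta, if_pos (maxmatchable_case2 A hLL hpn hpj hadj),
    thechain_case2 A hLL hpn hpj hadj]
  have hpath : pathProd A [i, j] = A i j := by
    show (List.zipWith (fun a b => A a b) [i, j] [j]).prod = A i j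
    simp
  have hlen : (([i, j] : List (Fin n)).length - 2) / 2 = 0 := by simp
  rw [hpath, hlen, pow_zero, one_mul]
  congr 1
  have hsf := sum_forced A hLL hpn (Nf A \ {i}).card {i} (fun _ => j) rfl
    (singleton_subset_iff.2 ((mem_Nf A).2 hnpi))
    (fun v hv => by
      rw [mem_singleton] at hv; subst hv
      exact (mem_PNf A).2 ⟨hadj, hpj⟩)
  rw [← hsf, mmset_case2 A hLL hpn hpj hadj]
  refine Finset.sum_congr (filter_congr fun M _ => by simp) (fun M hM => ?_)
  rw [betaBar, thechain_case2 A hLL hpn hpj hadj]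
  refine Finset.prod_congr (filter_congr fun e he => ?_) fun _ _ => rfl
  show e ∉ chainEdges [i, j] ↔ e ∉ ({i} : Finset (Fin n)).image (fun v => s(v, j))
  have h1 : chainEdges [i, j] = [s(i, j)] := rfl
  rw [h1, image_singleton]
  simp

theorem mu_case3 {i j : Fin n} (hpi : Pendant (DA A) i) (hpj : Pendant (DA A) j)
    (hww : Adjd (DA A) (pw A i) (pw A j)) :
    mu A i j = -(A i (pw A i) * A (pw A i) (pw A j) * A (pw A j) j) *
      ∏ v ∈ Nf A \ {pw A i, pw A j}, S A v := by
  obtain ⟨h1, h2, hij, hiwj, hwij, hiwi, hwjj, hww', hnadj⟩ := case3_facts A hLL hpi hpj hww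
  rw [mu, beta, if_pos (maxmatchable_case3 A hLL hpn hpi hpj hww),
    thechain_case3 A hLL hpn hpi hpj hww]
  have hpath : pathProd A [i, pw A i, pw A j, j] = A i (pw A i) * (A (pw A i) (pw A j) *
      A (pw A j) j) := by
    show (List.zipWith (fun a b => A a b) [i, pw A i, pw A j, j] [pw A i, pw A j, j]).prod = _
    simp [mul_assoc]
  have hlen : (([i, pw A i, pw A j, j] : List (Fin n)).length - 2) / 2 = 1 := by simp
  rw [hpath, hlen, pow_one]
  have hsum : ∑ M ∈ (MMset A i j).toFinite.toFinset, betaBar A i j M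
      = ∏ v ∈ Nf A \ {pw A i, pw A j}, S A v := by
    have hsf := sum_forced A hLL hpn (Nf A \ {pw A i, pw A j}).card {pw A i, pw A j}
      (k3 A (i := i) (j := j)) rfl (k3_K_sub A hLL hpi hpj hww) (k3_mem A hLL hpi hpj hww)
    rw [← hsf, mmset_case3 A hLL hpn hpi hpj hww]
    refine Finset.sum_congr rfl (fun M hM => ?_)
    rw [mem_filter, mem_maxMatchings] at hM
    have hmid : s(pw A i, pw A j) ∉ M := fun hmem =>
      (matched_pendant_endpoint A hLL hpn hM.1 hmem).elim h1 h2
    rw [betaBar, thechain_case3 A hLL hpn hpi hpj hww]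
    refine Finset.prod_congr (filter_congr fun e he => ?_) fun _ _ => rfl
    have hemid : e ≠ s(pw A i, pw A j) := by rintro rfl; exact hmid he
    show e ∉ chainEdges [i, pw A i, pw A j, j] ↔ _
    have hch : chainEdges [i, pw A i, pw A j, j]
        = [s(i, pw A i), s(pw A i, pw A j), s(pw A j, j)] := rfl
    rw [hch, image_insert, image_singleton, k3_wi, k3_wj A hLL hpi hpj hww]
    simp only [List.mem_cons, List.not_mem_nil, or_false, mem_insert, mem_singleton]
    rw [show s(i, pw A i) = s(pw A i, i) from Sym2.eq_swap]
    constructor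
    · intro h
      push_neg at h ⊢
      exact ⟨h.1, h.2.2⟩
    · intro h
      push_neg at h ⊢
      exact ⟨h.1, hemid, h.2⟩
  rw [hsum]
  ring

theorem mu_zero {i j : Fin n}
    (h1 : ¬ (Adjd (DA A) i j ∧ (Pendant (DA A) i ∨ Pendant (DA A) j)))
    (h3 : ¬ (Pendant (DA A) i ∧ Pendant (DA A) j ∧ Adjd (DA A) (pw A i) (pw A j))) :
    mu A i j = 0 := by
  rw [mu, beta, if_neg, zero_mul]
  rintro ⟨M, hmax, c, hbtw, halt⟩
  rcases chain_shape A hLL hpn hmax hbtw halt with ⟨-, hadj, hmem⟩ | ⟨b, b', hc, hr⟩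
  · exact h1 ⟨hadj, matched_pendant_endpoint A hLL hpn hmax hmem⟩
  · obtain ⟨hib, hbb, hbj, -, -, -, hpi, hpj, -, -⟩ := hr
    refine h3 ⟨hpi, hpj, ?_⟩
    rw [← pw_eq A hpi hib, ← pw_eq A hpj (adjd_symm hbj)]
    exact hbb

end MuVal

end GI

namespace GI

open Finset
open scoped Classical

section Verify

variable {n : ℕ} (A : Matrix (Fin n) (Fin n) ℝ)

/-- The explicit candidate group inverse. -/
noncomputable def Xe (i j : Fin n) : ℝ :=
  if Pendant (DA A) i ∧ Adjd (DA A) i j then A i j / S A j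
  else if Pendant (DA A) j ∧ Adjd (DA A) i j then A i j / S A i
  else if Pendant (DA A) i ∧ Pendant (DA A) j ∧ Adjd (DA A) (pw A i) (pw A j) then
    -(A i (pw A i) * A (pw A i) (pw A j) * A (pw A j) j) / (S A (pw A i) * S A (pw A j))
  else 0

theorem Xe_1 {i j : Fin n} (h : Pendant (DA A) i ∧ Adjd (DA A) i j) :
    Xe A i j = A i j / S A j := if_pos h

theorem Xe_2 {i j : Fin n} (h1 : ¬ (Pendant (DA A) i ∧ Adjd (DA A) i j))
    (h2 : Pendant (DA A) j ∧ Adjd (DA A) i j) : Xe A i j = A i j / S A i := by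
  rw [Xe, if_neg h1, if_pos h2]

theorem Xe_3 {i j : Fin n} (h1 : ¬ (Pendant (DA A) i ∧ Adjd (DA A) i j))
    (h2 : ¬ (Pendant (DA A) j ∧ Adjd (DA A) i j))
    (h3 : Pendant (DA A) i ∧ Pendant (DA A) j ∧ Adjd (DA A) (pw A i) (pw A j)) :
    Xe A i j = -(A i (pw A i) * A (pw A i) (pw A j) * A (pw A j) j) /
      (S A (pw A i) * S A (pw A j)) := by
  rw [Xe, if_neg h1, if_neg h2, if_pos h3]

theorem Xe_0 {i j : Fin n} (h1 : ¬ (Pendant (DA A) i ∧ Adjd (DA A) i j))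
    (h2 : ¬ (Pendant (DA A) j ∧ Adjd (DA A) i j))
    (h3 : ¬ (Pendant (DA A) i ∧ Pendant (DA A) j ∧ Adjd (DA A) (pw A i) (pw A j))) :
    Xe A i j = 0 := by
  rw [Xe, if_neg h1, if_neg h2, if_neg h3]

variable (hssd : IsSSD (DA A))
variable (hLL : ∀ i j : Fin n, Pendant (DA A) i → Pendant (DA A) j → ¬ Adjd (DA A) i j)
include hssd hLL

omit hssd in
/-- For nonpendant `i` and `j`, `Xe i j = 0`. -/
theorem Xe_np_np {i j : Fin n} (hi : ¬ Pendant (DA A) i) (hj : ¬ Pendant (DA A) j) :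
    Xe A i j = 0 :=
  Xe_0 A (fun h => hi h.1) (fun h => hj h.1) (fun h => hi h.1)

omit hLL in
/-- Row sum for a pendant vertex `i`. -/
theorem row_pendant {i : Fin n} (hpi : Pendant (DA A) i) (f : Fin n → ℝ) :
    ∑ k, A i k * f k = A i (pw A i) * f (pw A i) := by
  refine Finset.sum_eq_single (pw A i) (fun k _ hk => ?_) (fun h => absurd (mem_univ _) h)
  have hik : A i k = 0 := by
    by_contra hik
    exact hk (pw_eq A hpi (adjd_of_ne_zero A hssd hik))
  rw [hik, zero_mul]

omit hLL in
/-- Column sum for a pendant vertex `j`. -/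
theorem col_pendant {j : Fin n} (hpj : Pendant (DA A) j) (f : Fin n → ℝ) :
    ∑ k, f k * A k j = f (pw A j) * A (pw A j) j := by
  refine Finset.sum_eq_single (pw A j) (fun k _ hk => ?_) (fun h => absurd (mem_univ _) h)
  have hkj : A k j = 0 := by
    by_contra hkj
    exact hk (pw_eq A hpj (adjd_symm (adjd_of_ne_zero A hssd hkj)))
  rw [hkj, mul_zero]

variable (hS : ∀ v : Fin n, ¬ Pendant (DA A) v → S A v ≠ 0)
include hS

/-- Nonpendant rows of `A · Xe` are the corresponding identity rows. -/
theorem row_np {i : Fin n} (hnpi : ¬ Pendant (DA A) i) (j : Fin n) :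
    ∑ k, A i k * Xe A k j = if i = j then 1 else 0 := by
  by_cases hpj : Pendant (DA A) j
  · -- j pendant
    have hij : i ≠ j := fun h => hnpi (by rw [h]; exact hpj)
    rw [if_neg hij]
    have hwadj : Adjd (DA A) j (pw A j) := pw_adjd A hpj
    have hnpw : ¬ Pendant (DA A) (pw A j) := np_of_pendant_adj A hLL hpj hwadj
    have key : ∀ k, A i k * Xe A k j =
        (if Adjd (DA A) i k ∧ Pendant (DA A) k then
          -(A i k * A k i * (A i (pw A j) * A (pw A j) j)) / (S A i * S A (pw A j)) else 0)
        + (if k = pw A j then A i (pw A j) * (A (pw A j) j / S A (pw A j)) else 0) := by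
      intro k
      by_cases hkw : k = pw A j
      · subst hkw
        rw [if_neg (fun h => hnpw h.2), if_pos rfl, zero_add]
        rw [Xe_2 A (fun h => hnpw h.1) ⟨hpj, adjd_symm hwadj⟩]
      · rw [if_neg hkw, add_zero]
        by_cases hik : A i k = 0
        · rw [hik, zero_mul, if_neg]
          rintro ⟨hadj, -⟩
          exact hadj.2.1 hik
        · have hadjik : Adjd (DA A) i k := adjd_of_ne_zero A hssd hik
          by_cases hpk : Pendant (DA A) k
          · have hpwk : i = pw A k := pw_eq A hpk (adjd_symm hadjik)
            have hnkj : ¬ Adjd (DA A) k j := fun h =>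
              hij (hpwk.trans (pw_eq A hpk h).symm)
            rw [if_pos ⟨hadjik, hpk⟩]
            by_cases hwad : Adjd (DA A) (pw A k) (pw A j)
            · rw [Xe_3 A (fun h => hnkj h.2) (fun h => hnkj h.2) ⟨hpk, hpj, hwad⟩, ← hpwk]
              ring
            · rw [Xe_0 A (fun h => hnkj h.2) (fun h => hnkj h.2) (fun h => hwad h.2.2),
                mul_zero]
              have hiw : A i (pw A j) = 0 := by
                by_contra h
                apply hwad
                rw [← hpwk]
                exact adjd_of_ne_zero A hssd h
              rw [hiw]
              ring
          · rw [if_neg (fun h => hpk h.2)]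
            have hnkj : ¬ Adjd (DA A) k j := fun h => hkw (pw_eq A hpj (adjd_symm h))
            rw [Xe_0 A (fun h => hpk h.1) (fun h => hnkj h.2) (fun h => hpk h.1), mul_zero]
    rw [Finset.sum_congr rfl (fun k _ => key k), Finset.sum_add_distrib,
      Finset.sum_ite_eq' univ (pw A j), if_pos (mem_univ _), ← Finset.sum_filter]
    have hPN : univ.filter (fun k => Adjd (DA A) i k ∧ Pendant (DA A) k) = PNf A i := rfl
    rw [hPN]
    have hfact : ∀ k ∈ PNf A i,
        -(A i k * A k i * (A i (pw A j) * A (pw A j) j)) / (S A i * S A (pw A j))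
        = (A i k * A k i) * (-(A i (pw A j) * A (pw A j) j) / (S A i * S A (pw A j))) := by
      intro k _
      ring
    rw [Finset.sum_congr rfl hfact, ← Finset.sum_mul]
    have hSi : ∑ k ∈ PNf A i, A i k * A k i = S A i := rfl
    rw [hSi]
    have h1 := hS i hnpi
    have h2 := hS (pw A j) hnpw
    field_simp
    ring
  · by_cases hij : i = j
    · subst hij
      rw [if_pos rfl]
      have key : ∀ k, A i k * Xe A k i =
          if Adjd (DA A) i k ∧ Pendant (DA A) k then A i k * A k i / S A i else 0 := by
        intro k
        by_cases h : Adjd (DA A) i k ∧ Pendant (DA A) k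
        · rw [if_pos h, Xe_1 A ⟨h.2, adjd_symm h.1⟩, mul_div_assoc]
        · rw [if_neg h]
          by_cases hik : A i k = 0
          · rw [hik, zero_mul]
          · have hadjik := adjd_of_ne_zero A hssd hik
            have hpk : ¬ Pendant (DA A) k := fun hp => h ⟨hadjik, hp⟩
            rw [Xe_0 A (fun hh => hpk hh.1) (fun hh => hpj hh.1) (fun hh => hpk hh.1),
              mul_zero]
      rw [Finset.sum_congr rfl fun k _ => key k, ← Finset.sum_filter]
      have hPN : univ.filter (fun k => Adjd (DA A) i k ∧ Pendant (DA A) k) = PNf A i := rfl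
      rw [hPN, ← Finset.sum_div]
      exact div_self (hS i hnpi)
    · rw [if_neg hij]
      refine Finset.sum_eq_zero (fun k _ => ?_)
      by_cases hik : A i k = 0
      · rw [hik, zero_mul]
      · have hadjik := adjd_of_ne_zero A hssd hik
        by_cases hpk : Pendant (DA A) k
        · have hnkj : ¬ Adjd (DA A) k j := fun h =>
            hij ((pw_eq A hpk (adjd_symm hadjik)).trans (pw_eq A hpk h).symm)
          rw [Xe_0 A (fun h => hnkj h.2) (fun h => hpj h.1) (fun h => hpj h.2.1), mul_zero]
        · rw [Xe_0 A (fun h => hpk h.1) (fun h => hpj h.1) (fun h => hpk h.1), mul_zero]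

/-- Nonpendant columns of `Xe · A` are the corresponding identity columns. -/
theorem col_np {j : Fin n} (hnpj : ¬ Pendant (DA A) j) (i : Fin n) :
    ∑ k, Xe A i k * A k j = if i = j then 1 else 0 := by
  by_cases hpi : Pendant (DA A) i
  · -- i pendant
    have hij : i ≠ j := fun h => hnpj (by rw [← h]; exact hpi)
    rw [if_neg hij]
    have hwadj : Adjd (DA A) i (pw A i) := pw_adjd A hpi
    have hnpw : ¬ Pendant (DA A) (pw A i) := np_of_pendant_adj A hLL hpi hwadj
    have key : ∀ k, Xe A i k * A k j =
        (if Adjd (DA A) j k ∧ Pendant (DA A) k then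
          -(A i (pw A i) * A (pw A i) j * (A j k * A k j)) / (S A (pw A i) * S A j) else 0)
        + (if k = pw A i then A i (pw A i) / S A (pw A i) * A (pw A i) j else 0) := by
      intro k
      by_cases hkw : k = pw A i
      · subst hkw
        rw [if_neg (fun h => hnpw h.2), if_pos rfl, zero_add]
        rw [Xe_1 A ⟨hpi, hwadj⟩]
      · rw [if_neg hkw, add_zero]
        by_cases hkj : A k j = 0
        · rw [hkj, mul_zero, if_neg]
          rintro ⟨hadj, -⟩
          exact hadj.2.2 hkj
        · have hadjkj : Adjd (DA A) k j := adjd_of_ne_zero A hssd hkj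
          by_cases hpk : Pendant (DA A) k
          · have hpwk : j = pw A k := pw_eq A hpk hadjkj
            have hnik : ¬ Adjd (DA A) i k := fun h => hkw (pw_eq A hpi h)
            rw [if_pos ⟨adjd_symm hadjkj, hpk⟩]
            by_cases hwad : Adjd (DA A) (pw A i) (pw A k)
            · rw [Xe_3 A (fun h => hnik h.2) (fun h => hnik h.2) ⟨hpi, hpk, hwad⟩, ← hpwk]
              ring
            · rw [Xe_0 A (fun h => hnik h.2) (fun h => hnik h.2) (fun h => hwad h.2.2),
                zero_mul]
              have hiw : A (pw A i) j = 0 := by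
                by_contra h
                apply hwad
                rw [← hpwk]
                exact adjd_of_ne_zero A hssd h
              rw [hiw]
              ring
          · rw [if_neg (fun h => hpk h.2)]
            have hnik : ¬ Adjd (DA A) i k := fun h => hkw (pw_eq A hpi h)
            rw [Xe_0 A (fun h => hnik h.2) (fun h => hpk h.1) (fun h => hpk h.2.1), zero_mul]
    rw [Finset.sum_congr rfl (fun k _ => key k), Finset.sum_add_distrib,
      Finset.sum_ite_eq' univ (pw A i), if_pos (mem_univ _), ← Finset.sum_filter]
    have hPN : univ.filter (fun k => Adjd (DA A) j k ∧ Pendant (DA A) k) = PNf A j := rfl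
    rw [hPN]
    have hfact : ∀ k ∈ PNf A j,
        -(A i (pw A i) * A (pw A i) j * (A j k * A k j)) / (S A (pw A i) * S A j)
        = (A j k * A k j) * (-(A i (pw A i) * A (pw A i) j) / (S A (pw A i) * S A j)) := by
      intro k _
      ring
    rw [Finset.sum_congr rfl hfact, ← Finset.sum_mul]
    have hSj : ∑ k ∈ PNf A j, A j k * A k j = S A j := rfl
    rw [hSj]
    have h1 := hS j hnpj
    have h2 := hS (pw A i) hnpw
    field_simp
    ring
  · by_cases hij : i = j
    · subst hij
      rw [if_pos rfl]
      have key : ∀ k, Xe A i k * A k i =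
          if Adjd (DA A) i k ∧ Pendant (DA A) k then A i k * A k i / S A i else 0 := by
        intro k
        by_cases h : Adjd (DA A) i k ∧ Pendant (DA A) k
        · rw [if_pos h, Xe_2 A (fun hh => hpi hh.1) ⟨h.2, h.1⟩]
          ring
        · rw [if_neg h]
          by_cases hki : A k i = 0
          · rw [hki, mul_zero]
          · have hadjki := adjd_of_ne_zero A hssd hki
            have hpk : ¬ Pendant (DA A) k := fun hp => h ⟨adjd_symm hadjki, hp⟩
            rw [Xe_0 A (fun hh => hpi hh.1) (fun hh => hpk hh.1) (fun hh => hpi hh.1),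
              zero_mul]
      rw [Finset.sum_congr rfl fun k _ => key k, ← Finset.sum_filter]
      have hPN : univ.filter (fun k => Adjd (DA A) i k ∧ Pendant (DA A) k) = PNf A i := rfl
      rw [hPN, ← Finset.sum_div]
      exact div_self (hS i hpi)
    · rw [if_neg hij]
      refine Finset.sum_eq_zero (fun k _ => ?_)
      by_cases hkj : A k j = 0
      · rw [hkj, mul_zero]
      · have hadjkj := adjd_of_ne_zero A hssd hkj
        by_cases hpk : Pendant (DA A) k
        · have hnik : ¬ Adjd (DA A) i k := fun h =>
            hij ((pw_eq A hpk (adjd_symm h)).trans (pw_eq A hpk hadjkj).symm)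
          rw [Xe_0 A (fun h => hpi h.1) (fun h => hnik h.2) (fun h => hpi h.1), zero_mul]
        · rw [Xe_0 A (fun h => hpi h.1) (fun h => hpk h.1) (fun h => hpi h.1), zero_mul]

end Verify

end GI

namespace GI

open Finset
open scoped Classical

section Verify2

variable {n : ℕ} (A : Matrix (Fin n) (Fin n) ℝ)
variable (hssd : IsSSD (DA A))
variable (hLL : ∀ i j : Fin n, Pendant (DA A) i → Pendant (DA A) j → ¬ Adjd (DA A) i j)
variable (hS : ∀ v : Fin n, ¬ Pendant (DA A) v → S A v ≠ 0)
include hssd hLL hS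

omit hssd hS in
theorem Xe_np_row {w k : Fin n} (hnpw : ¬ Pendant (DA A) w) :
    Xe A w k = if Adjd (DA A) w k ∧ Pendant (DA A) k then A w k / S A w else 0 := by
  by_cases h : Adjd (DA A) w k ∧ Pendant (DA A) k
  · rw [if_pos h]
    exact Xe_2 A (fun hh => hnpw hh.1) ⟨h.2, h.1⟩
  · rw [if_neg h]
    exact Xe_0 A (fun hh => hnpw hh.1) (fun hh => h ⟨hh.2, hh.1⟩) (fun hh => hnpw hh.1)

theorem commute_entry (i j : Fin n) :
    ∑ k, A i k * Xe A k j = ∑ k, Xe A i k * A k j := by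
  by_cases hpi : Pendant (DA A) i <;> by_cases hpj : Pendant (DA A) j
  · -- both pendant
    rw [row_pendant A hssd hpi, col_pendant A hssd hpj]
    have hnpwi : ¬ Pendant (DA A) (pw A i) := np_of_pendant_adj A hLL hpi (pw_adjd A hpi)
    have hnpwj : ¬ Pendant (DA A) (pw A j) := np_of_pendant_adj A hLL hpj (pw_adjd A hpj)
    by_cases hadj : Adjd (DA A) (pw A i) j
    · have hww : pw A i = pw A j := pw_eq A hpj (adjd_symm hadj)
      rw [Xe_2 A (fun hh => hnpwi hh.1) ⟨hpj, hadj⟩]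
      rw [Xe_1 A ⟨hpi, by rw [← hww]; exact pw_adjd A hpi⟩, ← hww]
      ring
    · rw [Xe_0 A (fun hh => hnpwi hh.1) (fun hh => hadj hh.2) (fun hh => hnpwi hh.1)]
      have hnadj' : ¬ Adjd (DA A) i (pw A j) := by
        intro h
        apply hadj
        rw [← pw_eq A hpi h]
        exact adjd_symm (pw_adjd A hpj)
      rw [Xe_0 A (fun hh => hnadj' hh.2) (fun hh => hnpwj hh.1) (fun hh => hnpwj hh.2.1)]
      ring
  · -- i pendant, j not
    rw [row_pendant A hssd hpi, col_np A hssd hLL hS hpj i]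
    have hnpwi : ¬ Pendant (DA A) (pw A i) := np_of_pendant_adj A hLL hpi (pw_adjd A hpi)
    rw [Xe_np_np A hLL hnpwi hpj, mul_zero, if_neg (fun h : i = j => hpj (h ▸ hpi))]
  · -- i not, j pendant
    rw [row_np A hssd hLL hS hpi j, col_pendant A hssd hpj]
    have hnpwj : ¬ Pendant (DA A) (pw A j) := np_of_pendant_adj A hLL hpj (pw_adjd A hpj)
    rw [Xe_np_np A hLL hpi hnpwj, zero_mul, if_neg (fun h : i = j => hpi (by rw [h]; exact hpj))]
  · rw [row_np A hssd hLL hS hpi j, col_np A hssd hLL hS hpj i]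

theorem axa_entry (i j : Fin n) :
    ∑ k, (∑ l, A i l * Xe A l k) * A k j = A i j := by
  by_cases hpi : Pendant (DA A) i
  · have hnpwi : ¬ Pendant (DA A) (pw A i) := np_of_pendant_adj A hLL hpi (pw_adjd A hpi)
    rw [Finset.sum_congr rfl (fun k (_ : k ∈ univ) => by
      rw [row_pendant A hssd hpi (fun l => Xe A l k), mul_assoc])]
    rw [← Finset.mul_sum]
    have h2 : ∑ k, Xe A (pw A i) k * A k j = if pw A i = j then 1 else 0 := by
      rw [← commute_entry A hssd hLL hS, row_np A hssd hLL hS hnpwi]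
    rw [h2, mul_ite, mul_one, mul_zero]
    by_cases hwj : pw A i = j
    · rw [if_pos hwj, hwj]
    · rw [if_neg hwj]
      by_contra h
      have hne : A i j ≠ 0 := fun hh => h hh.symm
      exact hwj (pw_eq A hpi (adjd_of_ne_zero A hssd hne)).symm
  · rw [Finset.sum_congr rfl (fun k (_ : k ∈ univ) => by
      rw [row_np A hssd hLL hS hpi k, ite_mul, one_mul, zero_mul])]
    rw [Finset.sum_ite_eq univ i (fun k => A k j), if_pos (mem_univ _)]

theorem xax_entry (i j : Fin n) :
    ∑ k, (∑ l, Xe A i l * A l k) * Xe A k j = Xe A i j := by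
  have hflip : ∀ k, ∑ l, Xe A i l * A l k = ∑ l, A i l * Xe A l k := by
    intro k
    rw [commute_entry A hssd hLL hS]
  by_cases hpi : Pendant (DA A) i
  · have hnpwi : ¬ Pendant (DA A) (pw A i) := np_of_pendant_adj A hLL hpi (pw_adjd A hpi)
    have hSw := hS (pw A i) hnpwi
    rw [Finset.sum_congr rfl (fun k (_ : k ∈ univ) => by
      rw [hflip k, row_pendant A hssd hpi (fun l => Xe A l k), mul_assoc])]
    rw [← Finset.mul_sum]
    -- Q := ∑ k, Xe (pw i) k * Xe k j
    have hQstep : ∀ k, Xe A (pw A i) k * Xe A k j =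
        if Adjd (DA A) (pw A i) k ∧ Pendant (DA A) k
        then A (pw A i) k / S A (pw A i) * Xe A k j else 0 := by
      intro k
      rw [Xe_np_row A hLL hnpwi, ite_mul, zero_mul]
    rw [Finset.sum_congr rfl (fun k (_ : k ∈ univ) => hQstep k), ← Finset.sum_filter]
    have hPN : univ.filter (fun k => Adjd (DA A) (pw A i) k ∧ Pendant (DA A) k)
        = PNf A (pw A i) := rfl
    rw [hPN]
    by_cases hjw : j = pw A i
    · -- j = pw i
      rw [hjw]
      have hterm : ∀ k ∈ PNf A (pw A i), A (pw A i) k / S A (pw A i) * Xe A k (pw A i)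
          = A (pw A i) k * A k (pw A i) * (1 / (S A (pw A i) * S A (pw A i))) := by
        intro k hk
        obtain ⟨hadj, hpk⟩ := (mem_PNf A).1 hk
        rw [Xe_1 A ⟨hpk, adjd_symm hadj⟩]
        ring
      rw [Finset.sum_congr rfl hterm, ← Finset.sum_mul]
      have hSS : ∑ k ∈ PNf A (pw A i), A (pw A i) k * A k (pw A i) = S A (pw A i) := rfl
      rw [hSS, Xe_1 A ⟨hpi, pw_adjd A hpi⟩]
      field_simp
    · by_cases hcase : Pendant (DA A) j ∧ Adjd (DA A) (pw A i) (pw A j)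
      · -- distance-3 case
        obtain ⟨hpj, hadjww⟩ := hcase
        have hterm : ∀ k ∈ PNf A (pw A i), A (pw A i) k / S A (pw A i) * Xe A k j
            = A (pw A i) k * A k (pw A i) *
              (-(A (pw A i) (pw A j) * A (pw A j) j) /
                (S A (pw A i) * S A (pw A i) * S A (pw A j))) := by
          intro k hk
          obtain ⟨hadj, hpk⟩ := (mem_PNf A).1 hk
          have hwk : pw A i = pw A k := pw_eq A hpk (adjd_symm hadj)
          have hnkj : ¬ Adjd (DA A) k j := by
            intro h
            exact hjw ((pw_eq A hpk h).trans hwk.symm)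
          rw [Xe_3 A (fun hh => hnkj hh.2) (fun hh => hnkj hh.2)
            ⟨hpk, hpj, by rw [← hwk]; exact hadjww⟩, ← hwk]
          ring
        rw [Finset.sum_congr rfl hterm, ← Finset.sum_mul]
        have hSS : ∑ k ∈ PNf A (pw A i), A (pw A i) k * A k (pw A i) = S A (pw A i) := rfl
        rw [hSS]
        have hnij : ¬ Adjd (DA A) i j := by
          intro h
          exact hjw (pw_eq A hpi h)
        rw [Xe_3 A (fun hh => hnij hh.2) (fun hh => hnij hh.2) ⟨hpi, hpj, hadjww⟩]
        have hSwj := hS (pw A j) (np_of_pendant_adj A hLL hpj (pw_adjd A hpj))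
        field_simp
      · -- zero case
        have hterm : ∀ k ∈ PNf A (pw A i), A (pw A i) k / S A (pw A i) * Xe A k j = 0 := by
          intro k hk
          obtain ⟨hadj, hpk⟩ := (mem_PNf A).1 hk
          have hwk : pw A i = pw A k := pw_eq A hpk (adjd_symm hadj)
          have hnkj : ¬ Adjd (DA A) k j := by
            intro h
            exact hjw ((pw_eq A hpk h).trans hwk.symm)
          rw [Xe_0 A (fun hh => hnkj hh.2) (fun hh => hnkj hh.2)
            (fun hh => hcase ⟨hh.2.1, by rw [hwk]; exact hh.2.2⟩), mul_zero]
        rw [Finset.sum_eq_zero hterm, mul_zero]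
        have hnij : ¬ Adjd (DA A) i j := by
          intro h
          exact hjw (pw_eq A hpi h)
        rw [Xe_0 A (fun hh => hnij hh.2) (fun hh => hnij hh.2)
          (fun hh => hcase ⟨hh.2.1, hh.2.2⟩)]
  · rw [Finset.sum_congr rfl (fun k (_ : k ∈ univ) => by
      rw [hflip k, row_np A hssd hLL hS hpi k, ite_mul, one_mul, zero_mul])]
    rw [Finset.sum_ite_eq univ i (fun k => Xe A k j), if_pos (mem_univ _)]

end Verify2

end GI

namespace GI

open Finset
open scoped Classical

section MuDiv

variable {n : ℕ} (A : Matrix (Fin n) (Fin n) ℝ)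
variable (hLL : ∀ i j : Fin n, Pendant (DA A) i → Pendant (DA A) j → ¬ Adjd (DA A) i j)
variable (hpn : ∀ v : Fin n, ¬ Pendant (DA A) v → (PNf A v).Nonempty)
variable (hΔ : Delta A ≠ 0)
include hLL hpn hΔ

theorem S_ne_zero : ∀ v : Fin n, ¬ Pendant (DA A) v → S A v ≠ 0 := by
  intro v hv
  have h := hΔ
  rw [Delta_eq A hLL hpn] at h
  exact Finset.prod_ne_zero_iff.1 h v ((mem_Nf A).2 hv)

theorem mu_div (i j : Fin n) : mu A i j / Delta A = Xe A i j := by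
  have hS := S_ne_zero A hLL hpn hΔ
  have hprod : ∏ v ∈ Nf A, S A v ≠ 0 := by rwa [Delta_eq A hLL hpn] at hΔ
  by_cases h1 : Pendant (DA A) i ∧ Adjd (DA A) i j
  · rw [Xe_1 A h1, mu_case1 A hLL hpn h1.1 h1.2, Delta_eq A hLL hpn]
    have hjN : j ∈ Nf A := (mem_Nf A).2 (np_of_pendant_adj A hLL h1.1 h1.2)
    rw [Finset.prod_eq_prod_diff_singleton_mul hjN (S A)]
    have hP : ∏ v ∈ Nf A \ {j}, S A v ≠ 0 :=
      Finset.prod_ne_zero_iff.2 (fun v hv => hS v ((mem_Nf A).1 ((mem_sdiff.1 hv).1)))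
    rw [mul_comm (∏ v ∈ Nf A \ {j}, S A v) (S A j), mul_comm (A i j) (∏ v ∈ Nf A \ {j}, S A v),
      mul_comm (S A j) (∏ v ∈ Nf A \ {j}, S A v)]
    rw [mul_div_mul_left _ _ hP]
  · by_cases h2 : Pendant (DA A) j ∧ Adjd (DA A) i j
    · rw [Xe_2 A h1 h2, mu_case2 A hLL hpn h2.1 h2.2, Delta_eq A hLL hpn]
      have hiN : i ∈ Nf A := (mem_Nf A).2 (np_of_pendant_adj A hLL h2.1 (adjd_symm h2.2))
      rw [Finset.prod_eq_prod_diff_singleton_mul hiN (S A)]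
      have hP : ∏ v ∈ Nf A \ {i}, S A v ≠ 0 :=
        Finset.prod_ne_zero_iff.2 (fun v hv => hS v ((mem_Nf A).1 ((mem_sdiff.1 hv).1)))
      rw [mul_comm (A i j) (∏ v ∈ Nf A \ {i}, S A v)]
      rw [mul_div_mul_left _ _ hP]
    · by_cases h3 : Pendant (DA A) i ∧ Pendant (DA A) j ∧ Adjd (DA A) (pw A i) (pw A j)
      · rw [Xe_3 A h1 h2 h3, mu_case3 A hLL hpn h3.1 h3.2.1 h3.2.2, Delta_eq A hLL hpn]
        obtain ⟨hn1, hn2, -, -, -, -, -, hww', -⟩ := case3_facts A hLL h3.1 h3.2.1 h3.2.2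
        have hsub : ({pw A i, pw A j} : Finset (Fin n)) ⊆ Nf A :=
          k3_K_sub A hLL h3.1 h3.2.1 h3.2.2
        rw [← Finset.prod_sdiff hsub]
        have hpair : ∏ v ∈ ({pw A i, pw A j} : Finset (Fin n)), S A v
            = S A (pw A i) * S A (pw A j) := by
          rw [Finset.prod_insert (by rw [mem_singleton]; exact hww'), prod_singleton]
        rw [hpair]
        have hP : ∏ v ∈ Nf A \ ({pw A i, pw A j} : Finset (Fin n)), S A v ≠ 0 :=
          Finset.prod_ne_zero_iff.2 (fun v hv => hS v ((mem_Nf A).1 ((mem_sdiff.1 hv).1)))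
        rw [mul_comm (-(A i (pw A i) * A (pw A i) (pw A j) * A (pw A j) j))
          (∏ v ∈ Nf A \ ({pw A i, pw A j} : Finset (Fin n)), S A v)]
        rw [mul_div_mul_left _ _ hP]
      · rw [Xe_0 A h1 h2 h3]
        have hz : mu A i j = 0 := by
          refine mu_zero A hLL hpn ?_ h3
          rintro ⟨hadj, hp | hp⟩
          · exact h1 ⟨hp, hadj⟩
          · exact h2 ⟨hp, hadj⟩
        rw [hz, zero_div]

end MuDiv

/-- Uniqueness of the group inverse. -/
theorem gi_unique {n : ℕ} {A X Y : Matrix (Fin n) (Fin n) ℝ}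
    (hX : IsGroupInverse A X) (hY : IsGroupInverse A Y) : X = Y := by
  obtain ⟨hX1, hX2, hX3⟩ := hX
  obtain ⟨hY1, hY2, hY3⟩ := hY
  have hXY : X * A = Y * A := by
    calc X * A = X * A * (Y * A) := by
          rw [mul_assoc X A (Y * A), ← mul_assoc A Y A, hY1]
        _ = A * X * (A * Y) := by rw [hX3, hY3]
        _ = A * X * A * Y := by rw [mul_assoc (A * X) A Y]
        _ = A * Y := by rw [hX1]
        _ = Y * A := hY3
  calc X = X * A * X := hX2.symm
    _ = Y * A * X := by rw [hXY]
    _ = Y * (A * X) := by rw [mul_assoc]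
    _ = Y * (X * A) := by rw [hX3]
    _ = Y * (Y * A) := by rw [hXY.symm]  -- X*A = Y*A
    _ = Y * (A * Y) := by rw [hY3]
    _ = Y * A * Y := by rw [mul_assoc]
    _ = Y := hY2

end GI

namespace GI

open Finset
open scoped Classical

section Except

variable {n : ℕ} (A : Matrix (Fin n) (Fin n) ℝ)
variable (hssd : IsSSD (DA A)) (hsc : StronglyConnected (DA A))
variable {i j : Fin n} (hpi : Pendant (DA A) i) (hpj : Pendant (DA A) j)
  (hadj : Adjd (DA A) i j)
include hssd hsc hpi hpj hadj

theorem except_univ : ∀ x : Fin n, x = i ∨ x = j := by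
  intro x
  have hji : j = pw A i := pw_eq A hpi hadj
  have hij' : i = pw A j := pw_eq A hpj (adjd_symm hadj)
  have h := hsc i x
  induction h with
  | refl => exact Or.inl rfl
  | tail hab hbc ih =>
    rename_i b
    rcases ih with rfl | rfl
    · exact Or.inr ((pw_eq A hpi (adjd_of_ne_zero A hssd hbc)).trans hji.symm)
    · exact Or.inl ((pw_eq A hpj (adjd_of_ne_zero A hssd hbc)).trans hij'.symm)

theorem except_edge : ∀ e, IsEdge (DA A) e → e = s(i, j) := by
  rintro e ⟨a, b, rfl, hab⟩
  rcases except_univ A hssd hsc hpi hpj hadj a with rfl | rfl <;>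
    rcases except_univ A hssd hsc hpi hpj hadj b with rfl | rfl
  · exact absurd rfl hab.1
  · rfl
  · exact Sym2.eq_swap
  · exact absurd rfl hab.1

theorem except_maxmatching_iff {M : Finset (Sym2 (Fin n))} :
    IsMaxMatching (DA A) M ↔ M = {s(i, j)} := by
  have hsm : IsMatching (DA A) {s(i, j)} := by
    constructor
    · intro e he
      rw [mem_singleton] at he
      exact ⟨i, j, he, hadj⟩
    · intro e he f hf hne
      rw [mem_singleton] at he hf
      exact absurd (he.trans hf.symm) hne
  have hsub : ∀ M', IsMatching (DA A) M' → M' ⊆ {s(i, j)} := by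
    intro M' hM' e he
    rw [mem_singleton]
    exact except_edge A hssd hsc hpi hpj hadj e (hM'.1 e he)
  constructor
  · rintro ⟨hM, hmx⟩
    refine Finset.eq_of_subset_of_card_le (hsub M hM) ?_
    rw [card_singleton]
    exact hmx _ hsm
  · rintro rfl
    refine ⟨hsm, fun M' hM' => ?_⟩
    rw [card_singleton]
    calc M'.card ≤ ({s(i, j)} : Finset (Sym2 (Fin n))).card := card_le_card (hsub M' hM')
      _ = 1 := card_singleton _

theorem except_Delta : Delta A = A i j * A j i := by
  have hmm : maxMatchings A = {({s(i, j)} : Finset (Sym2 (Fin n)))} := by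
    ext M
    rw [mem_maxMatchings, mem_singleton, except_maxmatching_iff A hssd hsc hpi hpj hadj]
  rw [Delta, hmm, sum_singleton, matchProd, prod_singleton, cycProd_mk]

theorem except_chain : ∀ a b (c : List (Fin n)), IsCycleChainBtw (DA A) a b c →
    c = [a, b] := by
  have hij : i ≠ j := hadj.1
  have hcard : Fintype.card (Fin n) = 2 := by
    rw [← Finset.card_univ]
    have huniv : (univ : Finset (Fin n)) = {i, j} := by
      ext x
      simp only [mem_univ, true_iff, mem_insert, mem_singleton]
      exact except_univ A hssd hsc hpi hpj hadj x
    rw [huniv, card_insert_of_notMem (by rw [mem_singleton]; exact hij), card_singleton]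
  rintro a b c ⟨⟨hnd, hlen, hch⟩, hh, hl⟩
  have hle : c.length ≤ 2 := hcard ▸ hnd.length_le_card
  have h2 : c.length = 2 := le_antisymm hle hlen
  rcases c with _ | ⟨x, _ | ⟨y, _ | ⟨z, t⟩⟩⟩
  · simp at h2
  · simp at h2
  · have hx : x = a := by simpa using hh
    have hy : y = b := by simpa using hl
    rw [hx, hy]
  · simp at h2

theorem except_mu_adj : ∀ a b, Adjd (DA A) a b → mu A a b = A a b := by
  intro a b hab
  have hedge : s(a, b) = s(i, j) :=
    except_edge A hssd hsc hpi hpj hadj s(a, b) ⟨a, b, rfl, hab⟩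
  have hMmax : IsMaxMatching (DA A) ({s(i, j)} : Finset (Sym2 (Fin n))) :=
    (except_maxmatching_iff A hssd hsc hpi hpj hadj).2 rfl
  have hmem : s(a, b) ∈ ({s(i, j)} : Finset (Sym2 (Fin n))) := by
    rw [mem_singleton]; exact hedge
  have halt : IsAltChain ({s(i, j)} : Finset (Sym2 (Fin n))) [a, b] := altChain_pair.2 hmem
  have hMMm : ({s(i, j)} : Finset (Sym2 (Fin n))) ∈ MMset A a b :=
    ⟨hMmax, [a, b], btw_pair A hab, halt⟩
  have hmaxm : MaxMatchable A a b := ⟨_, hMMm⟩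
  have hthechain : theChain A a b = [a, b] := by
    rw [theChain]
    have hex : ∃ c, IsCycleChainBtw (DA A) a b c ∧ ∃ M ∈ MMset A a b, IsAltChain M c :=
      ⟨[a, b], btw_pair A hab, _, hMMm, halt⟩
    rw [dif_pos hex]
    exact except_chain A hssd hsc hpi hpj hadj a b _ hex.choose_spec.1
  have hmmset : (MMset A a b).toFinite.toFinset
      = {({s(i, j)} : Finset (Sym2 (Fin n)))} := by
    ext M
    rw [mem_MMfin, mem_singleton]
    constructor
    · rintro ⟨hmax, -⟩
      exact (except_maxmatching_iff A hssd hsc hpi hpj hadj).1 hmax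
    · rintro rfl
      exact ⟨hMmax, [a, b], btw_pair A hab, halt⟩
  rw [mu, beta, if_pos hmaxm, hthechain, hmmset, sum_singleton, betaBar, hthechain]
  have hfilter : ({s(i, j)} : Finset (Sym2 (Fin n))).filter
      (fun e => e ∉ chainEdges [a, b]) = ∅ := by
    refine filter_false_of_mem ?_
    intro e he
    rw [mem_singleton] at he
    subst he
    simp only [not_not]
    show s(i, j) ∈ [s(a, b)]
    rw [hedge]
    exact List.mem_singleton_self _
  rw [hfilter, prod_empty, mul_one]
  have hpath : pathProd A [a, b] = A a b := by
    show (List.zipWith (fun x y => A x y) [a, b] [b]).prod = A a b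
    simp
  have hlen : (([a, b] : List (Fin n)).length - 2) / 2 = 0 := by simp
  rw [hpath, hlen, pow_zero, one_mul]

omit hssd hsc hpi hpj hadj in
theorem mu_diag (a : Fin n) : mu A a a = 0 := by
  rw [mu, beta, if_neg, zero_mul]
  rintro ⟨M, -, c, ⟨⟨hnd, hlen, -⟩, hh, hl⟩, -⟩
  rcases c with _ | ⟨x, c⟩
  · simp at hlen
  have hx : x = a := by simpa using hh
  subst hx
  rcases c with _ | ⟨y, c⟩
  · simp at hlen
  have hlast : (y :: c).getLast (List.cons_ne_nil y c) = x := by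
    have := hl
    rw [List.getLast?_eq_getLast (List.cons_ne_nil x (y :: c))] at this
    have h2 := Option.some_injective _ this
    rw [← h2, List.getLast_cons (List.cons_ne_nil y c)]
  have hmem : x ∈ y :: c := hlast ▸ List.getLast_mem (List.cons_ne_nil y c)
  simp only [List.nodup_cons] at hnd
  exact hnd.1 hmem

theorem except_main (hΔ : Delta A ≠ 0) :
    (∃ X, IsGroupInverse A X) ∧
      ∀ X, IsGroupInverse A X → ∀ a b, X a b = mu A a b / Delta A := by
  have hij : i ≠ j := hadj.1
  have huniv : (univ : Finset (Fin n)) = {i, j} := by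
    ext x
    simp only [mem_univ, true_iff, mem_insert, mem_singleton]
    exact except_univ A hssd hsc hpi hpj hadj x
  have hD : Delta A = A i j * A j i := except_Delta A hssd hsc hpi hpj hadj
  have haij : A i j ≠ 0 := hadj.2.1
  have haji : A j i ≠ 0 := hadj.2.2
  have hAii : A i i = 0 := diag_zero A hssd i
  have hAjj : A j j = 0 := diag_zero A hssd j
  have hmuij : mu A i j = A i j := except_mu_adj A hssd hsc hpi hpj hadj i j hadj
  have hmuji : mu A j i = A j i := except_mu_adj A hssd hsc hpi hpj hadj j i (adjd_symm hadj)
  set X2 : Matrix (Fin n) (Fin n) ℝ := Matrix.of (fun a b => mu A a b / Delta A) with hX2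
  have hX2e : ∀ a b, X2 a b = mu A a b / Delta A := fun a b => rfl
  have hsum : ∀ (f : Fin n → ℝ), ∑ k, f k = f i + f j := by
    intro f
    rw [huniv, Finset.sum_pair hij]
  have hent : ∀ a b, (A * X2) a b = if a = b then 1 else 0 := by
    intro a b
    rw [Matrix.mul_apply, hsum (fun k => A a k * X2 k b)]
    rcases except_univ A hssd hsc hpi hpj hadj a with rfl | rfl <;>
      rcases except_univ A hssd hsc hpi hpj hadj b with rfl | rfl
    · rw [if_pos rfl, hX2e, hX2e, mu_diag, hmuji, hAii, hD]
      field_simp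
      ring
    · rw [if_neg hij, hX2e, hX2e, mu_diag, hAii]
      simp
    · rw [if_neg (Ne.symm hij), hX2e, hX2e, mu_diag, hAjj]
      simp
    · rw [if_pos rfl, hX2e, hX2e, mu_diag, hmuij, hAjj, hD]
      field_simp
      ring
  have hent2 : ∀ a b, (X2 * A) a b = if a = b then 1 else 0 := by
    intro a b
    rw [Matrix.mul_apply, hsum (fun k => X2 a k * A k b)]
    rcases except_univ A hssd hsc hpi hpj hadj a with rfl | rfl <;>
      rcases except_univ A hssd hsc hpi hpj hadj b with rfl | rfl
    · rw [if_pos rfl, hX2e, hX2e, mu_diag, hmuij, hAii, hD]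
      field_simp
      ring
    · rw [if_neg hij, hX2e, hX2e, mu_diag, hAjj]
      simp
    · rw [if_neg (Ne.symm hij), hX2e, hX2e, mu_diag, hAii]
      simp
    · rw [if_pos rfl, hX2e, hX2e, mu_diag, hmuji, hAjj, hD]
      field_simp
      ring
  have hAX : A * X2 = 1 := by
    ext a b
    rw [hent a b, Matrix.one_apply]
  have hXA : X2 * A = 1 := by
    ext a b
    rw [hent2 a b, Matrix.one_apply]
  have hGI : IsGroupInverse A X2 := ⟨by rw [hAX, one_mul], by rw [hXA, one_mul], by
    rw [hAX, hXA]⟩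
  refine ⟨⟨X2, hGI⟩, fun X hX a b => ?_⟩
  rw [gi_unique hX hGI]
  rfl

end Except

end GI

namespace GI

open Finset
open scoped Classical

theorem main_general {n : ℕ} (A : Matrix (Fin n) (Fin n) ℝ) (hssd : IsSSD (DA A))
    (hLL : ∀ i j : Fin n, Pendant (DA A) i → Pendant (DA A) j → ¬ Adjd (DA A) i j)
    (hpn : ∀ v : Fin n, ¬ Pendant (DA A) v → (PNf A v).Nonempty) (hΔ : Delta A ≠ 0) :
    (∃ X, IsGroupInverse A X) ∧
      ∀ X, IsGroupInverse A X → ∀ i j, X i j = mu A i j / Delta A := by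
  have hS := S_ne_zero A hLL hpn hΔ
  have hGI : IsGroupInverse A (Matrix.of (Xe A)) := by
    refine ⟨?_, ?_, ?_⟩
    · ext i j
      simp only [Matrix.mul_apply, Matrix.of_apply]
      exact axa_entry A hssd hLL hS i j
    · ext i j
      simp only [Matrix.mul_apply, Matrix.of_apply]
      exact xax_entry A hssd hLL hS i j
    · ext i j
      simp only [Matrix.mul_apply, Matrix.of_apply]
      exact commute_entry A hssd hLL hS i j
  refine ⟨⟨_, hGI⟩, fun X hX i j => ?_⟩
  rw [gi_unique hX hGI]
  show Xe A i j = mu A i j / Delta A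
  rw [mu_div A hLL hpn hΔ i j]

end GI

/-- Theorem (Nandi, Thm 1.2): if `D(A)` is a tree digraph in `𝒟` and `Δ_A ≠ 0`, then the
group inverse `A^#` exists and its entries are `α_{ij} = μ_{ij}/Δ_A`. -/
theorem group_inverse_entries_of_tree_classD {n : ℕ} (A : Matrix (Fin n) (Fin n) ℝ)
    (hT : IsTreeDigraph (DA A)) (hD : InClassD (DA A)) (hΔ : Delta A ≠ 0) :
    (∃ X, IsGroupInverse A X) ∧
      ∀ X, IsGroupInverse A X → ∀ i j, X i j = mu A i j / Delta A := by
  classical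
  obtain ⟨hsc, -⟩ := hT
  obtain ⟨hssd, hcd⟩ := hD
  have hpn : ∀ v : Fin n, ¬ Pendant (DA A) v → (GI.PNf A v).Nonempty := by
    intro v hv
    obtain ⟨u, hu1, hu2⟩ := hcd v hv
    exact ⟨u, (GI.mem_PNf A).2 ⟨hu1, hu2⟩⟩
  by_cases hLL : ∀ i j : Fin n, Pendant (DA A) i → Pendant (DA A) j → ¬ Adjd (DA A) i j
  · exact GI.main_general A hssd hLL hpn hΔ
  · push_neg at hLL
    obtain ⟨i, j, hpi, hpj, hadj⟩ := hLL
    exact GI.except_main A hssd hsc hpi hpj hadj hΔ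
end
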